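/- arXiv:2209.02286 — 7 statements merged into one kernel-verified Lean document; each statement's English description precedes it below -/
import Mathlib

section
/- Let d ≥ 2 and n ≥ 1 be integers and r > 0. Let φ be a smooth radially symmetric function on the closed ball closure(B^d_r) with radial profile f ∈ C^∞_ev([0,r]), so that φ(x) = f(|x|). Then for every multi-index α ∈ ℕ₀^d with |α| = n and every x ∈ closure(B^d_r): ∂^α φ(x) = Σ_{j = ⌈n/2⌉}^{n} (1 / (2^{n−j} (n−j)!)) · (Δ^{n−j} x^α) · (D^j f)(|x|), where Δ denotes the Laplace operator applied to the monomial function x ↦ x^α and D^j is the j-fold iterate of D. -/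
open MeasureTheory Metric Set

noncomputable section

/-- `f ∈ C^∞_ev([0,r])`: smooth on `[0,r]` (one-sided derivatives at the endpoints)
with all odd-order derivatives vanishing at `0`. -/
def SmoothEvenOn (r : ℝ) (f : ℝ → ℂ) : Prop :=
  ContDiffOn ℝ (⊤ : ℕ∞) f (Icc 0 r) ∧
    ∀ n : ℕ, iteratedDerivWithin (2 * n + 1) f (Icc 0 r) 0 = 0

/-- `f ∈ C^∞_ev([0,∞))`. -/
def SmoothEvenIci (f : ℝ → ℂ) : Prop :=
  ContDiffOn ℝ (⊤ : ℕ∞) f (Ici 0) ∧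
    ∀ n : ℕ, iteratedDerivWithin (2 * n + 1) f (Ici 0) 0 = 0

/-- `g j = D^j f` on `[0,r]`: each `g (j+1)` is the smooth even extension of
`ρ ↦ ρ⁻¹ (g j)'(ρ)`. -/
def DIter (r : ℝ) (f : ℝ → ℂ) (g : ℕ → ℝ → ℂ) : Prop :=
  g 0 = f ∧ ∀ j : ℕ, SmoothEvenOn r (g (j + 1)) ∧
    ∀ ρ ∈ Ioc (0 : ℝ) r, g (j + 1) ρ = ρ⁻¹ * derivWithin (g j) (Icc 0 r) ρ

/-- `g j = D^j f` on `[0,∞)`. -/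
def DIterIci (f : ℝ → ℂ) (g : ℕ → ℝ → ℂ) : Prop :=
  g 0 = f ∧ ∀ j : ℕ, SmoothEvenIci (g (j + 1)) ∧
    ∀ ρ ∈ Ioi (0 : ℝ), g (j + 1) ρ = ρ⁻¹ * derivWithin (g j) (Ici 0) ρ

/-- Partial derivative `∂ᵢ` within the closed ball of radius `r`. -/
def pderivB (d : ℕ) (r : ℝ) (i : Fin d) (φ : EuclideanSpace ℝ (Fin d) → ℂ) :
    EuclideanSpace ℝ (Fin d) → ℂ :=
  fun x => fderivWithin ℝ φ (closedBall 0 r) x (EuclideanSpace.single i 1)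

/-- `∂_{i₁} ⋯ ∂_{i_n}` within the closed ball, for a list of indices `[i₁,…,i_n]`. -/
def pderivList (d : ℕ) (r : ℝ) (I : List (Fin d)) (φ : EuclideanSpace ℝ (Fin d) → ℂ) :
    EuclideanSpace ℝ (Fin d) → ℂ :=
  I.foldr (pderivB d r) φ

/-- `∂^α` within the closed ball, for a multi-index `α`. -/
def pderivMulti (d : ℕ) (r : ℝ) (α : Fin d → ℕ) (φ : EuclideanSpace ℝ (Fin d) → ℂ) :
    EuclideanSpace ℝ (Fin d) → ℂ :=
  pderivList d r ((List.finRange d).flatMap fun i => List.replicate (α i) i) φ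

/-- Global partial derivative `∂ᵢ` on `ℝ^d`. -/
def pderivG (d : ℕ) (i : Fin d) (φ : EuclideanSpace ℝ (Fin d) → ℂ) :
    EuclideanSpace ℝ (Fin d) → ℂ :=
  fun x => fderiv ℝ φ x (EuclideanSpace.single i 1)

def pderivListG (d : ℕ) (I : List (Fin d)) (φ : EuclideanSpace ℝ (Fin d) → ℂ) :
    EuclideanSpace ℝ (Fin d) → ℂ :=
  I.foldr (pderivG d) φ

/-- Global `∂^α` on `ℝ^d`, for a multi-index `α`. -/
def pderivMultiG (d : ℕ) (α : Fin d → ℕ) (φ : EuclideanSpace ℝ (Fin d) → ℂ) :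
    EuclideanSpace ℝ (Fin d) → ℂ :=
  pderivListG d ((List.finRange d).flatMap fun i => List.replicate (α i) i) φ

/-- The Laplace operator on real-valued functions on `ℝ^d` (used on polynomials). -/
def lap (d : ℕ) (ψ : EuclideanSpace ℝ (Fin d) → ℝ) : EuclideanSpace ℝ (Fin d) → ℝ :=
  fun x => ∑ i : Fin d,
    fderiv ℝ (fun y => fderiv ℝ ψ y (EuclideanSpace.single i 1)) x (EuclideanSpace.single i 1)

/-- The monomial `x ↦ x^α`. -/
def mono (d : ℕ) (α : Fin d → ℕ) : EuclideanSpace ℝ (Fin d) → ℝ :=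
  fun x => ∏ i : Fin d, (x i) ^ (α i)

/-- `p^j_I(x) = (1/(2^j j!)) Δ^j (x_{i₁}⋯x_{i_n})` for a `d`-index `I` of length `n`. -/
def pP (d n : ℕ) (j : ℕ) (I : Fin n → Fin d) : EuclideanSpace ℝ (Fin d) → ℝ :=
  fun x => (1 / (2 ^ j * (Nat.factorial j)) : ℝ) *
    (lap d)^[j] (fun y => ∏ k : Fin n, y (I k)) x

/-- Multi-indices `α ∈ ℕ₀^d` of length exactly `n`. -/
def multiIndices (d n : ℕ) : Finset (Fin d → ℕ) :=
  (Fintype.piFinset fun _ : Fin d => Finset.range (n + 1)).filter fun α => ∑ i, α i = n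

/-- Multi-indices `α ∈ ℕ₀^d` of length at most `k`. -/
def multiIndicesLe (d k : ℕ) : Finset (Fin d → ℕ) :=
  (Fintype.piFinset fun _ : Fin d => Finset.range (k + 1)).filter fun α => ∑ i, α i ≤ k

namespace RadialAux

open MvPolynomial Metric Set

set_option maxHeartbeats 1000000
set_option synthInstance.maxHeartbeats 400000


variable {d : ℕ}

/-- Polynomial Laplacian. -/
noncomputable def Lp (d : ℕ) (p : MvPolynomial (Fin d) ℝ) : MvPolynomial (Fin d) ℝ :=
  ∑ i : Fin d, pderiv i (pderiv i p)

lemma Lp_add (p q : MvPolynomial (Fin d) ℝ) : Lp d (p + q) = Lp d p + Lp d q := by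
  simp [Lp, map_add, Finset.sum_add_distrib]

lemma Lp_zero : Lp d 0 = 0 := by simp [Lp]

lemma pderiv_comm (i j : Fin d) (p : MvPolynomial (Fin d) ℝ) :
    pderiv i (pderiv j p) = pderiv j (pderiv i p) := by
  induction p using MvPolynomial.induction_on with
  | C a => simp
  | add p q hp hq => simp [map_add, hp, hq]
  | mul_X p k h =>
    simp only [pderiv_mul, pderiv_X, map_add, h, Pi.single_apply]
    split_ifs <;> simp_all <;> ring

lemma Lp_pderiv (i : Fin d) (p : MvPolynomial (Fin d) ℝ) :
    Lp d (pderiv i p) = pderiv i (Lp d p) := by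
  rw [Lp, Lp, map_sum]
  exact Finset.sum_congr rfl fun j _ => by rw [← pderiv_comm i j p]; exact pderiv_comm j i _

lemma Lp_X_mul (i : Fin d) (q : MvPolynomial (Fin d) ℝ) :
    Lp d (X i * q) = X i * Lp d q + 2 * pderiv i q := by
  rw [Lp, Lp]
  have : ∀ j : Fin d, pderiv j (pderiv j (X i * q)) =
      X i * pderiv j (pderiv j q) + (if j = i then 1 else 0) * (2 * pderiv j q) := by
    intro j
    by_cases h : j = i
    · subst h; simp [pderiv_mul]; ring
    · simp [pderiv_mul, pderiv_X_of_ne fun hij => h hij.symm, h]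
  simp only [this, Finset.sum_add_distrib, ite_mul, one_mul, zero_mul, ← Finset.mul_sum,
    Finset.sum_ite_eq', Finset.mem_univ, if_true]


lemma Lp_nsmul (c : ℕ) (p : MvPolynomial (Fin d) ℝ) : Lp d (c • p) = c • Lp d p := by
  simp [Lp, map_nsmul, Finset.smul_sum]

lemma Lp_iter_X_mul (i : Fin d) (q : MvPolynomial (Fin d) ℝ) (k : ℕ) :
    (Lp d)^[k + 1] (X i * q) =
      X i * (Lp d)^[k + 1] q + (2 * (k + 1)) • pderiv i ((Lp d)^[k] q) := by
  induction k with
  | zero => simpa [nsmul_eq_mul] using Lp_X_mul i q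
  | succ k ih =>
    rw [Function.iterate_succ_apply' (Lp d) (k + 1), ih, Lp_add, Lp_X_mul, Lp_nsmul,
      Lp_pderiv, ← Function.iterate_succ_apply' (Lp d) k,
      ← Function.iterate_succ_apply' (Lp d) (k + 1)]
    have h2 : (2 : MvPolynomial (Fin d) ℝ) * pderiv i ((Lp d)^[k + 1] q)
        = (2 : ℕ) • pderiv i ((Lp d)^[k + 1] q) := by
      simp [nsmul_eq_mul]
    rw [add_assoc, h2, ← add_nsmul]
    congr 2
    ring

lemma totalDegree_pderiv_le (i : Fin d) (p : MvPolynomial (Fin d) ℝ) (k : ℕ)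
    (h : p.totalDegree ≤ k + 1) : (pderiv i p).totalDegree ≤ k := by
  have hp : pderiv i p = ∑ v ∈ p.support,
      monomial (v - Finsupp.single i 1) (p.coeff v * v i) := by
    conv_lhs => rw [p.as_sum]
    rw [map_sum]
    simp [pderiv_monomial]
  rw [hp]
  refine le_trans (totalDegree_finset_sum _ _) (Finset.sup_le fun v hv => ?_)
  by_cases hvi : v i = 0
  · simp [hvi]
  · refine le_trans (totalDegree_monomial_le _ _) ?_
    have hv' : (v.sum fun _ n => n) ≤ k + 1 := le_trans (le_totalDegree hv) h
    have hsplit : v = (v - Finsupp.single i 1) + Finsupp.single i 1 := by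
      ext a
      by_cases ha : a = i
      · subst ha
        simp only [Finsupp.coe_add, Finsupp.coe_tsub, Pi.add_apply, Pi.sub_apply,
          Finsupp.single_eq_same]
        omega
      · simp [Finsupp.single_eq_of_ne (Ne.symm ha), ha]
    rw [hsplit, Finsupp.sum_add_index' (fun _ => rfl) (fun _ _ _ => rfl),
      Finsupp.sum_single_index rfl] at hv'
    exact Nat.le_of_add_le_add_right hv'

lemma totalDegree_Lp_le (p : MvPolynomial (Fin d) ℝ) (k : ℕ)
    (h : p.totalDegree ≤ k + 2) : (Lp d p).totalDegree ≤ k := by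
  refine le_trans (totalDegree_finset_sum _ _) (Finset.sup_le fun i _ => ?_)
  exact totalDegree_pderiv_le _ _ _ (totalDegree_pderiv_le _ _ _ h)

lemma pderiv_eq_zero_of_totalDegree_eq_zero (i : Fin d) (p : MvPolynomial (Fin d) ℝ)
    (h : p.totalDegree = 0) : pderiv i p = 0 := by
  have h0 := (totalDegree_eq_zero_iff (Fin d) p).mp h
  conv_lhs => rw [p.as_sum]
  rw [map_sum]
  refine Finset.sum_eq_zero fun v hv => ?_
  rw [pderiv_monomial, h0 v hv i]; simp

lemma Lp_iter_eq_zero (k : ℕ) : ∀ (m : ℕ) (p : MvPolynomial (Fin d) ℝ),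
    p.totalDegree ≤ m → m < 2 * k → (Lp d)^[k] p = 0 := by
  induction k with
  | zero => intro m p _ hm; omega
  | succ k ih =>
    intro m p hdeg hm
    rw [Function.iterate_succ_apply]
    by_cases h2 : 2 ≤ m
    · exact ih (m - 2) (Lp d p) (totalDegree_Lp_le p (m - 2) (hdeg.trans (by omega))) (by omega)
    · have hLp : Lp d p = 0 := by
        have h1 : p.totalDegree ≤ 1 := by omega
        have : ∀ i : Fin d, pderiv i (pderiv i p) = 0 := fun i =>
          pderiv_eq_zero_of_totalDegree_eq_zero i _
            (Nat.le_zero.mp (totalDegree_pderiv_le i p 0 h1))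
        simp [Lp, this]
      rw [hLp]
      clear hdeg hm ih
      induction k with
      | zero => simp
      | succ k ih => rw [Function.iterate_succ_apply, Lp_zero, ih]



variable {d : ℕ}

abbrev Ed (d : ℕ) := EuclideanSpace ℝ (Fin d)

noncomputable def evalD (d : ℕ) (p : MvPolynomial (Fin d) ℝ) (x : Ed d) : Ed d →L[ℝ] ℝ :=
  ∑ i : Fin d, eval (fun j => x j) (pderiv i p) • (EuclideanSpace.proj i : Ed d →L[ℝ] ℝ)

lemma evalD_apply (p : MvPolynomial (Fin d) ℝ) (x v : Ed d) :
    evalD d p x v = ∑ i : Fin d, eval (fun j => x j) (pderiv i p) * v i := by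
  simp [evalD]

lemma hasFDerivAt_eval (p : MvPolynomial (Fin d) ℝ) (x : Ed d) :
    HasFDerivAt (fun y : Ed d => eval (fun j => y j) p) (evalD d p x) x := by
  induction p using MvPolynomial.induction_on with
  | C a =>
    have h0 : evalD d (C a) x = 0 := by ext v; simp [evalD_apply]
    have hfun : (fun y : Ed d => eval (fun j => y j) (C a : MvPolynomial (Fin d) ℝ))
        = fun _ => a := by funext y; simp
    rw [h0, hfun]
    exact hasFDerivAt_const a x
  | add p q hp hq =>
    have h0 : evalD d (p + q) x = evalD d p x + evalD d q x := by
      ext v; simp [evalD_apply, add_mul, Finset.sum_add_distrib]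
    have hfun : (fun y : Ed d => eval (fun j => y j) (p + q))
        = fun y => eval (fun j => y j) p + eval (fun j => y j) q := by funext y; simp
    rw [h0, hfun]
    exact hp.add hq
  | mul_X p k hp =>
    have hXk : HasFDerivAt (fun y : Ed d => y k) (EuclideanSpace.proj k : Ed d →L[ℝ] ℝ) x :=
      (EuclideanSpace.proj k : Ed d →L[ℝ] ℝ).hasFDerivAt
    have h := hp.mul hXk
    have heq : evalD d (p * X k) x =
        eval (fun j => x j) p • (EuclideanSpace.proj k : Ed d →L[ℝ] ℝ) + x k • evalD d p x := by
      ext v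
      have key : ∀ i : Fin d,
          (eval (fun j => x j) (pderiv i p) * x k
            + eval (fun j => x j) p * eval (fun j => x j)
                ((if k = i then 1 else 0 : MvPolynomial (Fin d) ℝ))) * v i
          = x k * (eval (fun j => x j) (pderiv i p) * v i)
            + (if i = k then eval (fun j => x j) p * v k else 0) := by
        intro i
        by_cases hik : i = k
        · subst hik; simp; ring
        · have hki : ¬ k = i := fun h => hik h.symm
          simp [hik, hki]; ring
      simp only [evalD_apply, pderiv_mul, pderiv_X, Pi.single_apply, map_add, eval_mul,
        eval_X, ContinuousLinearMap.add_apply, ContinuousLinearMap.coe_smul',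
        Pi.smul_apply, smul_eq_mul]
      rw [Finset.sum_congr rfl fun i _ => key i, Finset.sum_add_distrib, ← Finset.mul_sum,
        Finset.sum_ite_eq' Finset.univ k (fun _ => eval (fun j => x j) p * v k)]
      simp [PiLp.proj_apply, add_comm]
    have hfun : (fun y : Ed d => eval (fun j => y j) (p * X k))
        = fun y => (eval (fun j => y j) p) * y k := by funext y; simp
    rw [hfun, heq]
    exact h


lemma fderiv_eval_single (p : MvPolynomial (Fin d) ℝ) (x : Ed d) (i : Fin d) :
    fderiv ℝ (fun y : Ed d => eval (fun j => y j) p) x (EuclideanSpace.single i 1)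
      = eval (fun j => x j) (pderiv i p) := by
  rw [(hasFDerivAt_eval p x).fderiv, evalD_apply]
  simp [EuclideanSpace.single_apply, mul_ite, Finset.sum_ite_eq']

lemma lap_eval (p : MvPolynomial (Fin d) ℝ) :
    lap d (fun y : Ed d => eval (fun j => y j) p)
      = fun x : Ed d => eval (fun j => x j) (Lp d p) := by
  funext x
  have h1 : ∀ i : Fin d,
      (fun y : Ed d => fderiv ℝ (fun z : Ed d => eval (fun j => z j) p) y
        (EuclideanSpace.single i 1)) = fun y : Ed d => eval (fun j => y j) (pderiv i p) :=
    fun i => funext fun y => fderiv_eval_single p y i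
  simp only [lap]
  calc ∑ i : Fin d, fderiv ℝ (fun y : Ed d => fderiv ℝ
          (fun z : Ed d => eval (fun j => z j) p) y (EuclideanSpace.single i 1)) x
          (EuclideanSpace.single i 1)
      = ∑ i : Fin d, eval (fun j => x j) (pderiv i (pderiv i p)) := by
        refine Finset.sum_congr rfl fun i _ => ?_
        rw [h1 i]
        exact fderiv_eval_single (pderiv i p) x i
    _ = eval (fun j => x j) (Lp d p) := by rw [Lp, map_sum]

lemma lap_iter_eval (k : ℕ) (p : MvPolynomial (Fin d) ℝ) :
    (lap d)^[k] (fun y : Ed d => eval (fun j => y j) p)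
      = fun x : Ed d => eval (fun j => x j) ((Lp d)^[k] p) := by
  induction k generalizing p with
  | zero => rfl
  | succ k ih =>
    rw [Function.iterate_succ_apply, Function.iterate_succ_apply, lap_eval, ih]

lemma mono_eval (α : Fin d → ℕ) :
    mono d α = fun x : Ed d => eval (fun j => x j) (∏ i : Fin d, X i ^ α i) := by
  funext x
  simp [mono, map_prod]

/-- The polynomial attached to a list of indices. -/
noncomputable def PIl (d : ℕ) (I : List (Fin d)) : MvPolynomial (Fin d) ℝ := (I.map X).prod

lemma PIl_cons (i : Fin d) (I : List (Fin d)) : PIl d (i :: I) = X i * PIl d I := by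
  simp [PIl]

lemma totalDegree_PIl_le (I : List (Fin d)) : (PIl d I).totalDegree ≤ I.length := by
  induction I with
  | nil => simp [PIl]
  | cons i I ih =>
    rw [PIl_cons]
    refine le_trans (totalDegree_mul _ _) ?_
    rw [totalDegree_X]
    simp only [List.length_cons]
    omega

lemma coeff_id (k : ℕ) :
    (1 / (2 ^ (k + 1) * (Nat.factorial (k + 1)) : ℂ)) * ((2 * (k + 1) : ℕ) : ℂ)
      = 1 / (2 ^ k * (Nat.factorial k) : ℂ) := by
  have h1 : ((Nat.factorial k : ℂ)) ≠ 0 := Nat.cast_ne_zero.mpr (Nat.factorial_pos k).ne'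
  have h2 : ((2 : ℂ)) ^ k ≠ 0 := pow_ne_zero _ two_ne_zero
  have h3 : ((k : ℂ) + 1) ≠ 0 := Nat.cast_add_one_ne_zero k
  rw [Nat.factorial_succ]
  push_cast
  field_simp
  ring

section Analytic

variable {r : ℝ} {f : ℝ → ℂ} {g : ℕ → ℝ → ℂ}

lemma gsm (hf : SmoothEvenOn r f) (hg : DIter r f g) (j : ℕ) : SmoothEvenOn r (g j) := by
  cases j with
  | zero => rw [hg.1]; exact hf
  | succ j => exact (hg.2 j).1

lemma hasFDerivWithinAt_gnorm (hr : 0 < r) (hf : SmoothEvenOn r f) (hg : DIter r f g)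
    (j : ℕ) (x : Ed d) (hx : x ∈ closedBall (0 : Ed d) r) :
    HasFDerivWithinAt (fun y : Ed d => g j ‖y‖)
      (g (j + 1) ‖x‖ • (Complex.ofRealCLM.comp (innerSL ℝ x))) (closedBall 0 r) x := by
  have hmap : MapsTo (fun y : Ed d => ‖y‖) (closedBall (0 : Ed d) r) (Icc (0 : ℝ) r) :=
    fun y hy => ⟨norm_nonneg y, mem_closedBall_zero_iff.mp hy⟩
  have hsmooth := (gsm hf hg j).1
  rcases eq_or_ne x 0 with rfl | hx0
  · -- the case x = 0
    have h0T : (0 : ℝ) ∈ Icc (0 : ℝ) r := ⟨le_refl 0, hr.le⟩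
    have hder0 : derivWithin (g j) (Icc (0 : ℝ) r) 0 = 0 := by
      have h := (gsm hf hg j).2 0
      rwa [show 2 * 0 + 1 = 1 by norm_num,
        iteratedDerivWithin_one] at h
    have hdiff : DifferentiableWithinAt ℝ (g j) (Icc (0 : ℝ) r) 0 :=
      (hsmooth.differentiableOn (by simp)) 0 h0T
    have hdw : HasDerivWithinAt (g j) 0 (Icc (0 : ℝ) r) 0 :=
      hder0 ▸ hdiff.hasDerivWithinAt
    have h1 : (fun t : ℝ => g j t - g j 0) =o[nhdsWithin 0 (Icc (0 : ℝ) r)] (fun t : ℝ => t) := by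
      have h := hdw.hasFDerivWithinAt.isLittleO
      simpa using h
    have h2 : Filter.Tendsto (fun y : Ed d => ‖y‖)
        (nhdsWithin 0 (closedBall (0 : Ed d) r)) (nhdsWithin 0 (Icc (0 : ℝ) r)) := by
      apply tendsto_nhdsWithin_of_tendsto_nhds_of_eventually_within
      · have h := continuous_norm.tendsto (0 : Ed d)
        simpa using h.mono_left nhdsWithin_le_nhds
      · exact eventually_mem_nhdsWithin.mono fun y hy => hmap hy
    have h3 := h1.comp_tendsto h2
    have h4 : (fun y : Ed d => ‖y‖) =O[nhdsWithin (0 : Ed d) (closedBall 0 r)]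
        fun y : Ed d => y - 0 := by
      simpa using (Asymptotics.isBigO_refl (fun y : Ed d => y)
        (nhdsWithin (0 : Ed d) (closedBall 0 r))).norm_left
    refine HasFDerivAtFilter.of_isLittleO ?_
    have h5 := h3.trans_isBigO h4
    simp only [map_zero, ContinuousLinearMap.comp_zero, smul_zero,
      ContinuousLinearMap.zero_apply, sub_zero, norm_zero]
    simpa [Function.comp_def] using h5
  · -- the case x ≠ 0
    have hxpos : 0 < ‖x‖ := norm_pos_iff.mpr hx0
    have hxT : ‖x‖ ∈ Icc (0 : ℝ) r := hmap hx
    set c := derivWithin (g j) (Icc (0 : ℝ) r) ‖x‖ with hc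
    have hdw : HasDerivWithinAt (g j) c (Icc (0 : ℝ) r) ‖x‖ :=
      ((hsmooth.differentiableOn (by simp)) _ hxT).hasDerivWithinAt
    have hns : HasFDerivAt (fun y : Ed d => ‖y‖ ^ 2) (2 • (innerSL ℝ x)) x :=
      (hasStrictFDerivAt_norm_sq x).hasFDerivAt
    have hsq : HasDerivAt Real.sqrt (1 / (2 * Real.sqrt (‖x‖ ^ 2))) (‖x‖ ^ 2) :=
      Real.hasDerivAt_sqrt (by positivity)
    have hnorm : HasFDerivAt (fun y : Ed d => ‖y‖) (‖x‖⁻¹ • innerSL ℝ x) x := by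
      have h := hsq.comp_hasFDerivAt x hns
      have hfun : (Real.sqrt ∘ fun y : Ed d => ‖y‖ ^ 2) = fun y : Ed d => ‖y‖ :=
        funext fun y => by simp [Real.sqrt_sq (norm_nonneg y)]
      rw [hfun] at h
      refine h.congr_fderiv ?_
      symm
      rw [Real.sqrt_sq (norm_nonneg x)]
      ext v
      simp only [ContinuousLinearMap.coe_smul', Pi.smul_apply, smul_eq_mul,
        ContinuousLinearMap.smul_apply, nsmul_eq_mul, Nat.cast_ofNat]
      have : Real.sqrt (‖x‖ ^ 2) = ‖x‖ := Real.sqrt_sq (norm_nonneg x)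
      field_simp
    have hgF : HasFDerivWithinAt (g j)
        ((1 : ℝ →L[ℝ] ℝ).smulRight c) (Icc (0 : ℝ) r) ‖x‖ :=
      hdw.hasFDerivWithinAt
    have hcomp := hgF.comp x (hnorm.hasFDerivWithinAt) hmap
    have heq : ((1 : ℝ →L[ℝ] ℝ).smulRight c).comp (‖x‖⁻¹ • innerSL ℝ x)
        = g (j + 1) ‖x‖ • (Complex.ofRealCLM.comp (innerSL ℝ x)) := by
      have hrel : g (j + 1) ‖x‖ = (‖x‖⁻¹ : ℝ) * c :=
        (hg.2 j).2 ‖x‖ ⟨hxpos, hxT.2⟩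
      ext v
      simp only [ContinuousLinearMap.coe_comp', Function.comp_apply,
        ContinuousLinearMap.coe_smul', Pi.smul_apply, ContinuousLinearMap.smulRight_apply,
        ContinuousLinearMap.one_apply, smul_eq_mul, Complex.ofRealCLM_apply, hrel]
      rw [Complex.real_smul]
      push_cast
      ring
    rw [← heq]
    exact hcomp

lemma hterm (hr : 0 < r) (hf : SmoothEvenOn r f) (hg : DIter r f g)
    (p : MvPolynomial (Fin d) ℝ) (j : ℕ) (x : Ed d) (hx : x ∈ closedBall (0 : Ed d) r) :
    HasFDerivWithinAt (fun y : Ed d => ((eval (fun k => y k) p : ℝ) : ℂ) * g j ‖y‖)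
      (((eval (fun k => x k) p : ℝ) : ℂ) •
          (g (j + 1) ‖x‖ • (Complex.ofRealCLM.comp (innerSL ℝ x)))
        + (g j ‖x‖) • (Complex.ofRealCLM.comp (evalD d p x)))
      (closedBall 0 r) x := by
  have h1 : HasFDerivWithinAt (fun y : Ed d => ((eval (fun k => y k) p : ℝ) : ℂ))
      (Complex.ofRealCLM.comp (evalD d p x)) (closedBall 0 r) x :=
    (Complex.ofRealCLM.hasFDerivAt.comp x (hasFDerivAt_eval p x)).hasFDerivWithinAt
  exact h1.mul (hasFDerivWithinAt_gnorm hr hf hg j x hx)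

end Analytic

lemma evalD_single (p : MvPolynomial (Fin d) ℝ) (x : Ed d) (i : Fin d) :
    evalD d p x (EuclideanSpace.single i 1) = eval (fun j => x j) (pderiv i p) := by
  rw [evalD_apply]
  simp [EuclideanSpace.single_apply, mul_ite, Finset.sum_ite_eq']

theorem key {d : ℕ} {r : ℝ} (hr : 0 < r) (φ : Ed d → ℂ) {f : ℝ → ℂ} {g : ℕ → ℝ → ℂ}
    (hf : SmoothEvenOn r f) (hg : DIter r f g)
    (hprof : ∀ x ∈ closedBall (0 : Ed d) r, φ x = f ‖x‖) :
    ∀ (I : List (Fin d)) (x : Ed d), x ∈ closedBall (0 : Ed d) r →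
      pderivList d r I φ x = ∑ j ∈ Finset.range (I.length + 1),
        (1 / (2 ^ (I.length - j) * (Nat.factorial (I.length - j)) : ℂ)) *
          ((eval (fun k => x k) ((Lp d)^[I.length - j] (PIl d I)) : ℝ) : ℂ) * g j ‖x‖ := by
  intro I
  induction I with
  | nil =>
    intro x hx
    simp only [pderivList, List.foldr_nil, List.length_nil]
    rw [hprof x hx, ← hg.1]
    simp [PIl]
  | cons i I ih =>
    intro x hx
    have hUS : UniqueDiffOn ℝ (closedBall (0 : Ed d) r) :=
      uniqueDiffOn_convex (convex_closedBall _ _)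
        (by rw [interior_closedBall _ hr.ne']; exact nonempty_ball.mpr hr)
    set m := I.length with hm
    have hinner : (innerSL ℝ x) (EuclideanSpace.single i (1 : ℝ)) = x i := by
      rw [innerSL_apply_apply, EuclideanSpace.inner_single_right]
      simp
    -- Step 1: rewrite the derivative via the inductive hypothesis
    have hstep : pderivList d r (i :: I) φ x
        = fderivWithin ℝ (fun y : Ed d => ∑ j ∈ Finset.range (m + 1),
            (1 / (2 ^ (m - j) * (Nat.factorial (m - j)) : ℂ)) *
              (((eval (fun k => y k) ((Lp d)^[m - j] (PIl d I)) : ℝ) : ℂ) * g j ‖y‖))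
            (closedBall 0 r) x (EuclideanSpace.single i 1) := by
      show fderivWithin ℝ (pderivList d r I φ) (closedBall 0 r) x (EuclideanSpace.single i 1) = _
      have hfc : fderivWithin ℝ (pderivList d r I φ) (closedBall 0 r) x
          = fderivWithin ℝ (fun y : Ed d => ∑ j ∈ Finset.range (m + 1),
              (1 / (2 ^ (m - j) * (Nat.factorial (m - j)) : ℂ)) *
                (((eval (fun k => y k) ((Lp d)^[m - j] (PIl d I)) : ℝ) : ℂ) * g j ‖y‖))
              (closedBall 0 r) x := by
        apply fderivWithin_congr
        · intro y hy
          rw [ih y hy]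
          exact Finset.sum_congr rfl fun j _ => mul_assoc _ _ _
        · rw [ih x hx]
          exact Finset.sum_congr rfl fun j _ => mul_assoc _ _ _
      rw [hfc]
    -- Step 2: differentiate the sum
    have hHas : HasFDerivWithinAt (fun y : Ed d => ∑ j ∈ Finset.range (m + 1),
          (1 / (2 ^ (m - j) * (Nat.factorial (m - j)) : ℂ)) *
            (((eval (fun k => y k) ((Lp d)^[m - j] (PIl d I)) : ℝ) : ℂ) * g j ‖y‖))
        (∑ j ∈ Finset.range (m + 1),
          (1 / (2 ^ (m - j) * (Nat.factorial (m - j)) : ℂ)) •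
            ((((eval (fun k => x k) ((Lp d)^[m - j] (PIl d I)) : ℝ) : ℂ)) •
                (g (j + 1) ‖x‖ • (Complex.ofRealCLM.comp (innerSL ℝ x)))
              + (g j ‖x‖) • (Complex.ofRealCLM.comp (evalD d ((Lp d)^[m - j] (PIl d I)) x))))
        (closedBall 0 r) x :=
      HasFDerivWithinAt.fun_sum fun j _ =>
        (hterm hr hf hg ((Lp d)^[m - j] (PIl d I)) j x hx).const_mul _
    -- Step 3: the value of the derivative
    have hval : pderivList d r (i :: I) φ x
        = ∑ j ∈ Finset.range (m + 1),
            (1 / (2 ^ (m - j) * (Nat.factorial (m - j)) : ℂ)) *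
              (((eval (fun k => x k) ((Lp d)^[m - j] (PIl d I)) : ℝ) : ℂ) *
                  (g (j + 1) ‖x‖ * ((x i : ℝ) : ℂ))
                + g j ‖x‖ * ((eval (fun k => x k) (pderiv i ((Lp d)^[m - j] (PIl d I))) : ℝ) : ℂ)) := by
      rw [hstep, hHas.fderivWithin (hUS x hx), ContinuousLinearMap.sum_apply]
      refine Finset.sum_congr rfl fun j _ => ?_
      rw [ContinuousLinearMap.smul_apply, ContinuousLinearMap.add_apply,
        ContinuousLinearMap.smul_apply, ContinuousLinearMap.smul_apply,
        ContinuousLinearMap.smul_apply, ContinuousLinearMap.coe_comp',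
        ContinuousLinearMap.coe_comp', Function.comp_apply, Function.comp_apply,
        hinner, evalD_single]
      simp only [Complex.ofRealCLM_apply, smul_eq_mul]
      all_goals ring
    rw [hval]
    simp only [List.length_cons, PIl_cons]
    set A : ℕ → ℂ := fun j => (1 / (2 ^ (m + 1 - j) * (Nat.factorial (m + 1 - j)) : ℂ)) *
      ((x i : ℝ) : ℂ) * ((eval (fun k => x k) ((Lp d)^[m + 1 - j] (PIl d I)) : ℝ) : ℂ) with hA
    set B : ℕ → ℂ := fun j => (1 / (2 ^ (m - j) * (Nat.factorial (m - j)) : ℂ)) *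
      ((eval (fun k => x k) (pderiv i ((Lp d)^[m - j] (PIl d I))) : ℝ) : ℂ) with hB
    have hA0 : A 0 = 0 := by
      have h0 : (Lp d)^[m + 1 - 0] (PIl d I) = 0 :=
        Lp_iter_eq_zero (m + 1) m (PIl d I) (totalDegree_PIl_le I) (by omega)
      rw [hA]
      simp only [h0]
      simp
    have claim1 : ∀ j ∈ Finset.range (m + 1),
        (1 / (2 ^ (m + 1 - j) * (Nat.factorial (m + 1 - j)) : ℂ)) *
            ((eval (fun k => x k) ((Lp d)^[m + 1 - j] (X i * PIl d I)) : ℝ) : ℂ) * g j ‖x‖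
          = A j * g j ‖x‖ + B j * g j ‖x‖ := by
      intro j hj
      have hj' : j < m + 1 := Finset.mem_range.mp hj
      have hk : m + 1 - j = (m - j) + 1 := by omega
      simp only [hA, hB]
      rw [hk, Lp_iter_X_mul i (PIl d I) (m - j)]
      have hev : ((eval (fun k => x k) (X i * (Lp d)^[m - j + 1] (PIl d I)
            + (2 * (m - j + 1)) • pderiv i ((Lp d)^[m - j] (PIl d I))) : ℝ) : ℂ)
          = ((x i : ℝ) : ℂ) * ((eval (fun k => x k) ((Lp d)^[m - j + 1] (PIl d I)) : ℝ) : ℂ)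
            + ((2 * (m - j + 1) : ℕ) : ℂ) *
              ((eval (fun k => x k) (pderiv i ((Lp d)^[m - j] (PIl d I))) : ℝ) : ℂ) := by
        rw [map_add, map_nsmul, eval_mul, eval_X]
        push_cast
        ring
      rw [hev]
      have hco := coeff_id (m - j)
      set u := ((eval (fun k => x k) ((Lp d)^[m - j + 1] (PIl d I)) : ℝ) : ℂ)
      set v := ((eval (fun k => x k) (pderiv i ((Lp d)^[m - j] (PIl d I))) : ℝ) : ℂ)
      linear_combination (v * g j ‖x‖) * hco
    have hlast : (1 / (2 ^ (m + 1 - (m + 1)) * (Nat.factorial (m + 1 - (m + 1))) : ℂ)) *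
          ((eval (fun k => x k) ((Lp d)^[m + 1 - (m + 1)] (X i * PIl d I)) : ℝ) : ℂ) *
            g (m + 1) ‖x‖
        = A (m + 1) * g (m + 1) ‖x‖ := by
      rw [hA]
      simp only [Nat.sub_self, pow_zero, Nat.factorial_zero, Nat.cast_one, mul_one,
        Function.iterate_zero, id_eq, one_div, inv_one, one_mul, eval_mul, eval_X]
      push_cast
      ring
    have h2 : ∑ j ∈ Finset.range (m + 1 + 1),
          (1 / (2 ^ (m + 1 - j) * (Nat.factorial (m + 1 - j)) : ℂ)) *
            ((eval (fun k => x k) ((Lp d)^[m + 1 - j] (X i * PIl d I)) : ℝ) : ℂ) * g j ‖x‖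
        = ∑ j ∈ Finset.range (m + 1 + 1), A j * g j ‖x‖
          + ∑ j ∈ Finset.range (m + 1), B j * g j ‖x‖ := by
      rw [Finset.sum_range_succ, Finset.sum_congr rfl claim1, hlast, Finset.sum_add_distrib,
        Finset.sum_range_succ (fun j => A j * g j ‖x‖) (m + 1)]
      ring
    have h3 : ∑ j ∈ Finset.range (m + 1 + 1), A j * g j ‖x‖
        = ∑ j ∈ Finset.range (m + 1), A (j + 1) * g (j + 1) ‖x‖ := by
      rw [Finset.sum_range_succ' (fun j => A j * g j ‖x‖), hA0]
      simp
    rw [h2, h3, ← Finset.sum_add_distrib]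
    refine Finset.sum_congr rfl fun j hj => ?_
    have hj' : j < m + 1 := Finset.mem_range.mp hj
    have hk2 : m + 1 - (j + 1) = m - j := by omega
    simp only [hA, hB, hk2]
    ring

end RadialAux

open RadialAux MvPolynomial in
/-- for smooth radial `φ(x) = f(|x|)` and a multi-index `α`, `|α| = n ≥ 1`,
`∂^α φ(x) = ∑_{j=⌈n/2⌉}^n (1/(2^{n-j}(n-j)!)) (Δ^{n-j} x^α) (D^j f)(|x|)`. -/
theorem pderiv_radial_formula (d n : ℕ) (hd : 2 ≤ d) (hn : 1 ≤ n) (r : ℝ) (hr : 0 < r)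
    (φ : EuclideanSpace ℝ (Fin d) → ℂ) (f : ℝ → ℂ) (g : ℕ → ℝ → ℂ)
    (hφ : ContDiffOn ℝ (⊤ : ℕ∞) φ (closedBall 0 r))
    (hf : SmoothEvenOn r f)
    (hprof : ∀ x ∈ closedBall (0 : EuclideanSpace ℝ (Fin d)) r, φ x = f ‖x‖)
    (hg : DIter r f g)
    (α : Fin d → ℕ) (hα : ∑ i, α i = n)
    (x : EuclideanSpace ℝ (Fin d)) (hx : x ∈ closedBall (0 : EuclideanSpace ℝ (Fin d)) r) :
    pderivMulti d r α φ x =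
      ∑ j ∈ Finset.Icc ((n + 1) / 2) n,
        (1 / (2 ^ (n - j) * (Nat.factorial (n - j)) : ℂ)) *
          (((lap d)^[n - j] (mono d α) x : ℝ) : ℂ) * g j ‖x‖ := by
  classical
  set I : List (Fin d) := (List.finRange d).flatMap (fun i => List.replicate (α i) i) with hI
  have hlen : I.length = n := by
    rw [hI, List.length_flatMap, ← hα, Fin.sum_univ_def]
    congr 1
    exact List.map_congr_left fun i _ => by simp
  have hPIl : PIl d I = ∏ i : Fin d, X i ^ α i := by
    have hgen : ∀ l : List (Fin d),
        (((l.flatMap fun i => List.replicate (α i) i).map X).prod : MvPolynomial (Fin d) ℝ)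
          = (l.map fun i => (X i : MvPolynomial (Fin d) ℝ) ^ α i).prod := by
      intro l
      induction l with
      | nil => simp
      | cons a l ih =>
        simp [List.flatMap_cons, List.map_append, List.prod_append, ih,
          List.map_replicate, List.prod_replicate]
    rw [hI, PIl, hgen, ← Fin.prod_univ_def]
  have hbridge : ∀ k : ℕ, ((lap d)^[k] (mono d α)) x
      = eval (fun j => x j) ((Lp d)^[k] (PIl d I)) := by
    intro k
    rw [mono_eval α, lap_iter_eval, hPIl]
  have hkey := key hr φ hf hg hprof I x hx
  rw [hlen] at hkey
  have hsub : Finset.Icc ((n + 1) / 2) n ⊆ Finset.range (n + 1) := by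
    intro j hj
    rw [Finset.mem_Icc] at hj
    rw [Finset.mem_range]
    omega
  have hzero : ∀ j ∈ Finset.range (n + 1), j ∉ Finset.Icc ((n + 1) / 2) n →
      (1 / (2 ^ (n - j) * (Nat.factorial (n - j)) : ℂ)) *
        (((lap d)^[n - j] (mono d α) x : ℝ) : ℂ) * g j ‖x‖ = 0 := by
    intro j hjr hjn
    rw [Finset.mem_range] at hjr
    rw [Finset.mem_Icc] at hjn
    have h0 : (Lp d)^[n - j] (PIl d I) = 0 :=
      Lp_iter_eq_zero (n - j) n (PIl d I) (hlen ▸ totalDegree_PIl_le I) (by omega)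
    rw [hbridge (n - j), h0]
    simp
  have hfin : pderivMulti d r α φ x = pderivList d r I φ x := rfl
  rw [hfin, hkey]
  calc ∑ j ∈ Finset.range (n + 1),
        (1 / (2 ^ (n - j) * (Nat.factorial (n - j)) : ℂ)) *
          ((eval (fun k => x k) ((Lp d)^[n - j] (PIl d I)) : ℝ) : ℂ) * g j ‖x‖
      = ∑ j ∈ Finset.range (n + 1),
          (1 / (2 ^ (n - j) * (Nat.factorial (n - j)) : ℂ)) *
            (((lap d)^[n - j] (mono d α) x : ℝ) : ℂ) * g j ‖x‖ :=
        Finset.sum_congr rfl fun j _ => by rw [hbridge (n - j)]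
    _ = ∑ j ∈ Finset.Icc ((n + 1) / 2) n,
          (1 / (2 ^ (n - j) * (Nat.factorial (n - j)) : ℂ)) *
            (((lap d)^[n - j] (mono d α) x : ℝ) : ℂ) * g j ‖x‖ :=
        (Finset.sum_subset hsub hzero).symm
end
end

section
/- Let d ≥ 2 and n ≥ 1 be integers and r > 0. Let φ be a smooth radially symmetric function on closure(B^d_r) with radial profile f ∈ C^∞_ev([0,r]) (φ(x) = f(|x|)). Then for every d-index I = (i₁,…,i_n) ∈ {1,…,d}^n and every x ∈ closure(B^d_r): ∂_{i₁}⋯∂_{i_n} φ(x) = Σ_{j=0}^{⌊n/2⌋} p^j_I(x) (D^{n−j} f)(|x|), where p^j_I(x) = (1/(2^j j!)) Δ^j (x_{i₁}⋯x_{i_n}) and Δ is the Laplace operator acting on the polynomial x ↦ x_{i₁}⋯x_{i_n}. -/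
open MeasureTheory Metric Set

noncomputable section

/-! ### Auxiliary material for the proof -/

namespace RadAux

open MvPolynomial Asymptotics

variable {d : ℕ} {r : ℝ}

def LapP (p : MvPolynomial (Fin d) ℝ) : MvPolynomial (Fin d) ℝ :=
  ∑ i : Fin d, pderiv i (pderiv i p)

lemma LapP_add (p q : MvPolynomial (Fin d) ℝ) : LapP (p + q) = LapP p + LapP q := by
  simp [LapP, Finset.sum_add_distrib]

lemma LapP_zero : LapP (0 : MvPolynomial (Fin d) ℝ) = 0 := by simp [LapP]

lemma LapP_nsmul (n : ℕ) (p : MvPolynomial (Fin d) ℝ) : LapP (n • p) = n • LapP p := by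
  simp [LapP, Finset.smul_sum]

lemma pderiv_comm' (i j : Fin d) (p : MvPolynomial (Fin d) ℝ) :
    pderiv i (pderiv j p) = pderiv j (pderiv i p) := by
  induction p using MvPolynomial.induction_on' with
  | monomial s a =>
    rcases eq_or_ne i j with rfl | hij
    · rfl
    · have h1 : (s - Finsupp.single j (1:ℕ)) i = s i := by
        rw [Finsupp.tsub_apply, Finsupp.single_apply, if_neg (Ne.symm hij), tsub_zero]
      have h2 : (s - Finsupp.single i (1:ℕ)) j = s j := by
        rw [Finsupp.tsub_apply, Finsupp.single_apply, if_neg hij, tsub_zero]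
      rw [pderiv_monomial, pderiv_monomial, pderiv_monomial, pderiv_monomial, h1, h2]
      congr 1
      · rw [tsub_right_comm]
      · push_cast; ring
  | add p q hp hq => simp [hp, hq]

lemma LapP_pderiv (i : Fin d) (p : MvPolynomial (Fin d) ℝ) :
    LapP (pderiv i p) = pderiv i (LapP p) := by
  unfold LapP
  rw [map_sum]
  refine Finset.sum_congr rfl fun j _ => ?_
  rw [pderiv_comm' j i p, pderiv_comm' j i ((pderiv j) p)]

lemma LapP_X_mul (i : Fin d) (q : MvPolynomial (Fin d) ℝ) :
    LapP (X i * q) = X i * LapP q + 2 • pderiv i q := by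
  classical
  have key : ∀ j : Fin d, pderiv j (pderiv j (X i * q)) =
      X i * pderiv j (pderiv j q) +
        (if j = i then pderiv j q + pderiv j q else 0) := by
    intro j
    rcases eq_or_ne j i with rfl | h
    · rw [if_pos rfl]
      simp [pderiv_mul]
      try ring
    · rw [if_neg h]
      simp [pderiv_mul, pderiv_X_of_ne (Ne.symm h)]
      try ring
  unfold LapP
  simp only [key, Finset.sum_add_distrib, ← Finset.mul_sum, Finset.sum_ite_eq',
    Finset.mem_univ, if_pos, two_smul]

lemma LapP_iter_zero (j : ℕ) : (LapP (d := d))^[j] 0 = 0 := by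
  induction j with
  | zero => rfl
  | succ k ih => rw [Function.iterate_succ_apply, LapP_zero, ih]

lemma LapP_iter_add (m : ℕ) (a b : MvPolynomial (Fin d) ℝ) :
    LapP^[m] (a + b) = LapP^[m] a + LapP^[m] b := by
  induction m generalizing a b with
  | zero => rfl
  | succ k ih => rw [Function.iterate_succ_apply, Function.iterate_succ_apply,
      Function.iterate_succ_apply, LapP_add, ih]

lemma LapP_iter_nsmul (m n : ℕ) (a : MvPolynomial (Fin d) ℝ) :
    LapP^[m] (n • a) = n • LapP^[m] a := by
  induction m generalizing a with
  | zero => rfl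
  | succ k ih => rw [Function.iterate_succ_apply, Function.iterate_succ_apply,
      LapP_nsmul, ih]

lemma LapP_iter_pderiv (m : ℕ) (i : Fin d) (p : MvPolynomial (Fin d) ℝ) :
    LapP^[m] (pderiv i p) = pderiv i (LapP^[m] p) := by
  induction m generalizing p with
  | zero => rfl
  | succ k ih => rw [Function.iterate_succ_apply, Function.iterate_succ_apply,
      LapP_pderiv, ih]

lemma LapP_iter_X_mul (j : ℕ) (i : Fin d) (q : MvPolynomial (Fin d) ℝ) :
    LapP^[j+1] (X i * q) =
      X i * LapP^[j+1] q + (2*(j+1)) • pderiv i (LapP^[j] q) := by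
  induction j generalizing q with
  | zero => simpa using LapP_X_mul i q
  | succ k ih =>
    rw [Function.iterate_succ_apply, LapP_X_mul, LapP_iter_add, LapP_iter_nsmul,
      ih (LapP q), LapP_iter_pderiv, ← Function.iterate_succ_apply,
      ← Function.iterate_succ_apply, add_assoc]
    simp only [Nat.succ_eq_add_one, ← add_nsmul]
    have h2 : 2*(k+1)+2 = 2*(k+1+1) := by ring
    rw [h2]

lemma totalDegree_pderiv_le' (i : Fin d) (p : MvPolynomial (Fin d) ℝ) (m : ℕ)
    (h : p.totalDegree ≤ m + 1) : (pderiv i p).totalDegree ≤ m := by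
  classical
  conv_lhs => rw [p.as_sum]
  rw [map_sum]
  refine (totalDegree_finset_sum _ _).trans (Finset.sup_le fun s hs => ?_)
  rw [pderiv_monomial]
  rcases eq_or_ne (s i) 0 with h0 | h0
  · rw [h0]
    simp
  · refine (totalDegree_monomial_le _ _).trans ?_
    have hs' : (s.sum fun _ => (id : ℕ → ℕ)) ≤ m + 1 := le_trans (le_totalDegree hs) h
    have hle : Finsupp.single i 1 ≤ s := by
      intro k
      rcases eq_or_ne k i with rfl | hk
      · simpa [Finsupp.single_apply] using Nat.one_le_iff_ne_zero.2 h0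
      · simp [Finsupp.single_apply, Ne.symm hk]
    have heq : s = (s - Finsupp.single i 1) + Finsupp.single i 1 :=
      (tsub_add_cancel_of_le hle).symm
    have hsum : (s.sum fun _ => (id : ℕ → ℕ))
        = ((s - Finsupp.single i 1).sum fun _ => (id : ℕ → ℕ)) + 1 := by
      conv_lhs => rw [heq]
      rw [Finsupp.sum_add_index' (fun _ => rfl) (fun _ _ _ => rfl), Finsupp.sum_single_index rfl]
      rfl
    omega

lemma pderiv_eq_zero_of_totalDegree_eq_zero (i : Fin d) (p : MvPolynomial (Fin d) ℝ)
    (h : p.totalDegree = 0) : pderiv i p = 0 := by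
  classical
  conv_lhs => rw [p.as_sum]
  rw [map_sum]
  refine Finset.sum_eq_zero fun s hs => ?_
  have h0 : s i = 0 := by
    have := le_trans (le_totalDegree hs) h.le
    have hsi : s i ≤ s.sum fun _ n => n := by
      rcases eq_or_ne (s i) 0 with h' | h'
      · omega
      · exact Finset.single_le_sum (f := fun k => s k) (fun _ _ => Nat.zero_le _)
          (Finsupp.mem_support_iff.2 h')
    omega
  rw [pderiv_monomial, h0]
  simp

lemma LapP_totalDegree_le (p : MvPolynomial (Fin d) ℝ) (m : ℕ)
    (h : p.totalDegree ≤ m + 2) : (LapP p).totalDegree ≤ m := by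
  refine (totalDegree_finset_sum _ _).trans (Finset.sup_le fun i _ => ?_)
  exact totalDegree_pderiv_le' i _ m (totalDegree_pderiv_le' i p (m+1) h)

lemma LapP_eq_zero_of_le_one (p : MvPolynomial (Fin d) ℝ) (h : p.totalDegree ≤ 1) :
    LapP p = 0 := by
  refine Finset.sum_eq_zero fun i _ => ?_
  have h1 : (pderiv i p).totalDegree ≤ 0 := totalDegree_pderiv_le' i p 0 h
  exact pderiv_eq_zero_of_totalDegree_eq_zero i _ (Nat.le_zero.1 h1)

lemma LapP_iter_eq_zero_of_deg (j n : ℕ) (hnj : n < 2 * j) (p : MvPolynomial (Fin d) ℝ)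
    (hp : p.totalDegree ≤ n) : LapP^[j] p = 0 := by
  induction j generalizing n p with
  | zero => omega
  | succ k ih =>
    rw [Function.iterate_succ_apply]
    rcases Nat.lt_or_ge n 2 with h2 | h2
    · rw [LapP_eq_zero_of_le_one p (by omega)]
      exact LapP_iter_zero k
    · obtain ⟨m, rfl⟩ : ∃ m, n = m + 2 := ⟨n - 2, by omega⟩
      exact ih m (by omega) _ (LapP_totalDegree_le p m hp)

def evalFn (p : MvPolynomial (Fin d) ℝ) : EuclideanSpace ℝ (Fin d) → ℝ :=
  fun x => MvPolynomial.eval (fun i => x i) p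

lemma hasFDerivAt_evalFn (p : MvPolynomial (Fin d) ℝ) (x : EuclideanSpace ℝ (Fin d)) :
    HasFDerivAt (evalFn p)
      (∑ i : Fin d, evalFn (pderiv i p) x • (EuclideanSpace.proj i :
        EuclideanSpace ℝ (Fin d) →L[ℝ] ℝ)) x := by
  classical
  induction p using MvPolynomial.induction_on with
  | C a =>
    have he : evalFn (d := d) (C a) = fun _ => a := by funext y; simp [evalFn]
    rw [he]
    have h0 : (∑ i : Fin d, evalFn (pderiv i (C a : MvPolynomial (Fin d) ℝ)) x •
        (EuclideanSpace.proj i : EuclideanSpace ℝ (Fin d) →L[ℝ] ℝ)) = 0 := by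
      simp [evalFn]
    rw [h0]
    exact hasFDerivAt_const a x
  | add p q hp hq =>
    have he : evalFn (d := d) (p + q) = fun y => evalFn p y + evalFn q y := by
      funext y; simp [evalFn]
    rw [he]
    have hsum := hp.add hq
    refine hsum.congr_fderiv (Eq.symm ?_)
    rw [← Finset.sum_add_distrib]
    refine Finset.sum_congr rfl fun i _ => ?_
    rw [map_add]
    have h3 : evalFn (d := d) (pderiv i p + pderiv i q) x
        = evalFn (pderiv i p) x + evalFn (pderiv i q) x := by
      simp [evalFn]
    rw [h3, add_smul]
  | mul_X p i hp =>
    have hXi : HasFDerivAt (fun y : EuclideanSpace ℝ (Fin d) => y i)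
        (EuclideanSpace.proj i : EuclideanSpace ℝ (Fin d) →L[ℝ] ℝ) x :=
      (EuclideanSpace.proj (𝕜 := ℝ) i).hasFDerivAt (x := x)
    have he : evalFn (d := d) (p * X i) = fun y => evalFn p y * y i := by
      funext y; simp [evalFn]
    rw [he]
    have hmul := hp.mul hXi
    refine hmul.congr_fderiv (Eq.symm ?_)
    ext v
    simp only [ContinuousLinearMap.coe_sum', Finset.sum_apply, ContinuousLinearMap.coe_smul',
      Pi.smul_apply, ContinuousLinearMap.add_apply, ContinuousLinearMap.coe_smul,
      smul_eq_mul]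
    have hterm : ∀ j : Fin d, evalFn (pderiv j (p * X i)) x * (EuclideanSpace.proj j) v
        = evalFn (pderiv j p) x * (x i) * (EuclideanSpace.proj j) v
          + (if j = i then evalFn p x * (EuclideanSpace.proj j) v else 0) := by
      intro j
      have hpd : pderiv j (p * X i) = pderiv j p * X i + p * (if j = i then 1 else 0) := by
        rw [pderiv_mul]
        congr 1
        rcases eq_or_ne j i with rfl | h
        · simp
        · simp [pderiv_X_of_ne (Ne.symm h), h]
      rw [hpd]
      rcases eq_or_ne j i with rfl | h
      · simp [evalFn]; ring
      · simp [evalFn, if_neg h]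
    rw [Finset.sum_congr rfl fun j _ => hterm j, Finset.sum_add_distrib]
    simp only [Finset.sum_ite_eq', Finset.mem_univ, if_pos]
    have hmulsum : ∑ j : Fin d, evalFn (pderiv j p) x * x i * (EuclideanSpace.proj j) v
        = x i * ∑ j : Fin d, evalFn (pderiv j p) x * (EuclideanSpace.proj j) v := by
      rw [Finset.mul_sum]; exact Finset.sum_congr rfl fun j _ => by ring
    rw [hmulsum]
    simp only [ContinuousLinearMap.add_apply, ContinuousLinearMap.coe_smul', Pi.smul_apply,
      ContinuousLinearMap.coe_sum', Finset.sum_apply, smul_eq_mul]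
    ring_nf

lemma fderiv_evalFn_apply (p : MvPolynomial (Fin d) ℝ) (x : EuclideanSpace ℝ (Fin d)) (i : Fin d) :
    fderiv ℝ (evalFn p) x (EuclideanSpace.single i 1) = evalFn (pderiv i p) x := by
  classical
  rw [(hasFDerivAt_evalFn p x).fderiv]
  simp only [ContinuousLinearMap.coe_sum', Finset.sum_apply, ContinuousLinearMap.coe_smul',
    Pi.smul_apply, smul_eq_mul]
  have h : ∀ j : Fin d, (EuclideanSpace.proj j) (EuclideanSpace.single i (1:ℝ))
      = if j = i then 1 else 0 := by
    intro j
    simp [EuclideanSpace.single_apply]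
  simp only [h, mul_ite, mul_one, mul_zero, Finset.sum_ite_eq', Finset.mem_univ, if_pos]

lemma sum_proj_apply (a : Fin d → ℝ) (i : Fin d) :
    (∑ k : Fin d, a k • (EuclideanSpace.proj k : EuclideanSpace ℝ (Fin d) →L[ℝ] ℝ))
      (EuclideanSpace.single i 1) = a i := by
  classical
  simp only [ContinuousLinearMap.coe_sum', Finset.sum_apply, ContinuousLinearMap.coe_smul',
    Pi.smul_apply, smul_eq_mul]
  have h : ∀ j : Fin d, (EuclideanSpace.proj j) (EuclideanSpace.single i (1:ℝ))
      = if j = i then 1 else 0 := by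
    intro j
    simp [EuclideanSpace.single_apply]
  simp only [h, mul_ite, mul_one, mul_zero, Finset.sum_ite_eq', Finset.mem_univ, if_pos]

lemma lap_evalFn (p : MvPolynomial (Fin d) ℝ) : lap d (evalFn p) = evalFn (LapP p) := by
  funext x
  unfold lap
  have hinner : ∀ i : Fin d, (fun y => fderiv ℝ (evalFn p) y (EuclideanSpace.single i 1))
      = evalFn (pderiv i p) := by
    intro i; funext y; exact fderiv_evalFn_apply p y i
  have h2 : ∀ i : Fin d, fderiv ℝ (fun y => fderiv ℝ (evalFn p) y (EuclideanSpace.single i 1)) x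
      (EuclideanSpace.single i 1) = evalFn (pderiv i (pderiv i p)) x := by
    intro i
    rw [hinner i]
    exact fderiv_evalFn_apply _ x i
  rw [Finset.sum_congr rfl fun i _ => h2 i]
  simp [LapP, evalFn]

lemma lap_iter_evalFn (j : ℕ) (p : MvPolynomial (Fin d) ℝ) :
    (lap d)^[j] (evalFn p) = evalFn (LapP^[j] p) := by
  induction j generalizing p with
  | zero => rfl
  | succ k ih => rw [Function.iterate_succ_apply, Function.iterate_succ_apply, lap_evalFn, ih]

lemma radial_hasFDerivWithinAt (hr : 0 < r) (G G₁ : ℝ → ℂ)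
    (hG : ContDiffOn ℝ (⊤ : ℕ∞) G (Icc 0 r))
    (hG0 : derivWithin G (Icc 0 r) 0 = 0)
    (hG₁ : ∀ ρ ∈ Ioc (0:ℝ) r, G₁ ρ = ρ⁻¹ * derivWithin G (Icc 0 r) ρ)
    (x : EuclideanSpace ℝ (Fin d)) (hx : x ∈ closedBall (0 : EuclideanSpace ℝ (Fin d)) r) :
    HasFDerivWithinAt (fun y => G ‖y‖)
      ((innerSL ℝ x : EuclideanSpace ℝ (Fin d) →L[ℝ] ℝ).smulRight (G₁ ‖x‖))
      (closedBall (0 : EuclideanSpace ℝ (Fin d)) r) x := by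
  have hxr : ‖x‖ ≤ r := mem_closedBall_zero_iff.1 hx
  have hmaps : MapsTo (fun y : EuclideanSpace ℝ (Fin d) => ‖y‖)
      (closedBall (0 : EuclideanSpace ℝ (Fin d)) r) (Icc 0 r) :=
    fun y hy => ⟨norm_nonneg y, mem_closedBall_zero_iff.1 hy⟩
  rcases eq_or_ne x 0 with rfl | hxne
  · have hCLM : ((innerSL ℝ (0 : EuclideanSpace ℝ (Fin d))).smulRight
        (G₁ ‖(0 : EuclideanSpace ℝ (Fin d))‖)) = 0 := by
      ext v; simp
    rw [hCLM]
    have hGd0 : HasDerivWithinAt G 0 (Icc 0 r) 0 := by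
      have h := ((hG.differentiableOn (by simp)) 0 ⟨le_refl 0, hr.le⟩).hasDerivWithinAt
      rwa [hG0] at h
    have hlo : (fun ρ => G ρ - G 0) =o[nhdsWithin 0 (Icc 0 r)] fun ρ => ρ := by
      have h := hasDerivWithinAt_iff_isLittleO.1 hGd0
      simpa using h
    have htend : Filter.Tendsto (fun y : EuclideanSpace ℝ (Fin d) => ‖y‖)
        (nhdsWithin 0 (closedBall (0 : EuclideanSpace ℝ (Fin d)) r))
        (nhdsWithin 0 (Icc 0 r)) := by
      have hc : ContinuousWithinAt (fun y : EuclideanSpace ℝ (Fin d) => ‖y‖)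
          (closedBall (0 : EuclideanSpace ℝ (Fin d)) r) 0 :=
        continuous_norm.continuousWithinAt
      have h2 := hc.tendsto_nhdsWithin hmaps
      simpa using h2
    have hcomp : (fun y : EuclideanSpace ℝ (Fin d) => G ‖y‖ - G 0)
        =o[nhdsWithin 0 (closedBall (0 : EuclideanSpace ℝ (Fin d)) r)]
        fun y : EuclideanSpace ℝ (Fin d) => ‖y‖ := hlo.comp_tendsto htend
    have hO : (fun y : EuclideanSpace ℝ (Fin d) => ‖y‖)
        =O[nhdsWithin 0 (closedBall (0 : EuclideanSpace ℝ (Fin d)) r)]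
        fun y : EuclideanSpace ℝ (Fin d) => y :=
      (isBigO_refl (fun y : EuclideanSpace ℝ (Fin d) => y) _).norm_left
    have hfinal := hcomp.trans_isBigO hO
    exact HasFDerivAtFilter.of_isLittleO (by simpa [Function.comp_def] using hfinal)
  · have hx0 : 0 < ‖x‖ := norm_pos_iff.2 hxne
    have h1 : HasFDerivAt (fun y : EuclideanSpace ℝ (Fin d) => ‖y‖^2) (2 • (innerSL ℝ x)) x :=
      (hasStrictFDerivAt_norm_sq x).hasFDerivAt
    have h2 : HasFDerivAt (fun y : EuclideanSpace ℝ (Fin d) => Real.sqrt (‖y‖^2))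
        ((1/(2*Real.sqrt (‖x‖^2))) • (2 • (innerSL ℝ x))) x :=
      (Real.hasDerivAt_sqrt (by positivity)).comp_hasFDerivAt x h1
    have hnorm : HasFDerivAt (fun y : EuclideanSpace ℝ (Fin d) => ‖y‖)
        (‖x‖⁻¹ • (innerSL ℝ x)) x := by
      have hfun : (fun y : EuclideanSpace ℝ (Fin d) => Real.sqrt (‖y‖^2))
          = fun y : EuclideanSpace ℝ (Fin d) => ‖y‖ :=
        funext fun y => by rw [Real.sqrt_sq (norm_nonneg y)]
      have hCLM : ((1/(2*Real.sqrt (‖x‖^2))) • (2 • (innerSL ℝ x)) :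
          EuclideanSpace ℝ (Fin d) →L[ℝ] ℝ) = ‖x‖⁻¹ • (innerSL ℝ x) := by
        rw [Real.sqrt_sq (norm_nonneg x)]
        ext v
        simp only [ContinuousLinearMap.smul_apply, smul_eq_mul, nsmul_eq_mul, Nat.cast_ofNat,
          Pi.smul_apply, ContinuousLinearMap.coe_smul']
        field_simp
      rw [hfun, hCLM] at h2
      exact h2
    have hmem : ‖x‖ ∈ Icc (0:ℝ) r := ⟨norm_nonneg x, hxr⟩
    have hGd : HasDerivWithinAt G (derivWithin G (Icc 0 r) ‖x‖) (Icc 0 r) ‖x‖ :=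
      ((hG.differentiableOn (by simp)) _ hmem).hasDerivWithinAt
    have hGf : HasFDerivWithinAt G
        ((1 : ℝ →L[ℝ] ℝ).smulRight (derivWithin G (Icc 0 r) ‖x‖)) (Icc 0 r) ‖x‖ :=
      hGd.hasFDerivWithinAt
    have hcomp := hGf.comp x (hnorm.hasFDerivWithinAt) hmaps
    have hCLM2 : (((1 : ℝ →L[ℝ] ℝ).smulRight (derivWithin G (Icc 0 r) ‖x‖)).comp
        (‖x‖⁻¹ • (innerSL ℝ x)))
        = (innerSL ℝ x : EuclideanSpace ℝ (Fin d) →L[ℝ] ℝ).smulRight (G₁ ‖x‖) := by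
      ext v
      rw [hG₁ ‖x‖ ⟨hx0, hxr⟩]
      simp only [ContinuousLinearMap.coe_comp', Function.comp_apply,
        ContinuousLinearMap.coe_smul', Pi.smul_apply, ContinuousLinearMap.smulRight_apply,
        ContinuousLinearMap.one_apply, smul_eq_mul, one_smul, Complex.real_smul]
      push_cast
      ring
    rw [hCLM2] at hcomp
    exact hcomp

def cR (j : ℕ) : ℝ := ((2:ℝ) ^ j * (Nat.factorial j))⁻¹

lemma cR_succ (j : ℕ) : cR (j+1) * (2*((j:ℝ)+1)) = cR j := by
  unfold cR
  rw [pow_succ, Nat.factorial_succ]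
  push_cast
  have h1 : (2:ℝ)^j ≠ 0 := by positivity
  have h2 : (Nat.factorial j : ℝ) ≠ 0 := by
    exact_mod_cast (Nat.factorial_pos j).ne'
  field_simp

def monP (L : List (Fin d)) : MvPolynomial (Fin d) ℝ := (L.map X).prod

lemma monP_cons (i : Fin d) (t : List (Fin d)) : monP (i :: t) = X i * monP t := by
  simp [monP]

lemma monP_degree (L : List (Fin d)) : (monP L).totalDegree ≤ L.length := by
  induction L with
  | nil => simp [monP]
  | cons i t ih =>
    rw [monP_cons]
    refine (totalDegree_mul _ _).trans ?_
    simp only [totalDegree_X, List.length_cons]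
    omega

lemma evalFn_add (a b : MvPolynomial (Fin d) ℝ) (x : EuclideanSpace ℝ (Fin d)) :
    evalFn (a + b) x = evalFn a x + evalFn b x := by simp [evalFn]

lemma evalFn_nsmul (nn : ℕ) (a : MvPolynomial (Fin d) ℝ) (x : EuclideanSpace ℝ (Fin d)) :
    evalFn (nn • a) x = nn * evalFn a x := by
  simp [evalFn, nsmul_eq_mul]

lemma evalFn_X_mul (i : Fin d) (a : MvPolynomial (Fin d) ℝ) (x : EuclideanSpace ℝ (Fin d)) :
    evalFn (X i * a) x = x i * evalFn a x := by simp [evalFn]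

lemma evalFn_zero (x : EuclideanSpace ℝ (Fin d)) :
    evalFn (0 : MvPolynomial (Fin d) ℝ) x = 0 := by simp [evalFn]

end RadAux

open RadAux MvPolynomial in
lemma radial_key {d : ℕ} {r : ℝ} (hr : 0 < r) (φ : EuclideanSpace ℝ (Fin d) → ℂ)
    (f : ℝ → ℂ) (g : ℕ → ℝ → ℂ) (hf : SmoothEvenOn r f)
    (hprof : ∀ x ∈ closedBall (0 : EuclideanSpace ℝ (Fin d)) r, φ x = f ‖x‖)
    (hg : DIter r f g) :
    ∀ (L : List (Fin d)) (x : EuclideanSpace ℝ (Fin d)),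
      x ∈ closedBall (0 : EuclideanSpace ℝ (Fin d)) r →
      pderivList d r L φ x = ∑ j ∈ Finset.range (L.length + 1),
        ((cR j : ℝ) : ℂ) * ((evalFn (RadAux.LapP^[j] (monP L)) x : ℝ) : ℂ)
          * g (L.length - j) ‖x‖ := by
  have gsm : ∀ k, SmoothEvenOn r (g k) := by
    intro k
    cases k with
    | zero => rw [hg.1]; exact hf
    | succ k => exact (hg.2 k).1
  have usc : UniqueDiffOn ℝ (closedBall (0 : EuclideanSpace ℝ (Fin d)) r) :=
    uniqueDiffOn_convex (convex_closedBall _ _)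
      (by rw [interior_closedBall _ hr.ne']; exact ⟨0, Metric.mem_ball_self hr⟩)
  have hg0 : ∀ k, derivWithin (g k) (Icc 0 r) 0 = 0 := by
    intro k
    have h := (gsm k).2 0
    rwa [show 2*0+1 = 1 by norm_num, iteratedDerivWithin_one] at h
  intro L
  induction L with
  | nil =>
    intro x hx
    have h0 : pderivList d r [] φ x = φ x := rfl
    rw [h0, hprof x hx]
    simp [Finset.sum_range_one, cR, monP, RadAux.evalFn, hg.1]
  | cons i t IH =>
    intro x hx
    have hstep : ∀ j : ℕ, HasFDerivWithinAt
        (fun y => ((cR j : ℝ) : ℂ) * ((evalFn (RadAux.LapP^[j] (monP t)) y : ℝ) : ℂ)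
          * g (t.length - j) ‖y‖)
        ((((cR j : ℝ) : ℂ) * ((evalFn (RadAux.LapP^[j] (monP t)) x : ℝ) : ℂ)) •
            ((innerSL ℝ x : EuclideanSpace ℝ (Fin d) →L[ℝ] ℝ).smulRight
              (g (t.length - j + 1) ‖x‖))
          + (g (t.length - j) ‖x‖) • (((cR j : ℝ) : ℂ) •
            (Complex.ofRealCLM.comp
              (∑ k : Fin d, evalFn (pderiv k (RadAux.LapP^[j] (monP t))) x •
                (EuclideanSpace.proj k : EuclideanSpace ℝ (Fin d) →L[ℝ] ℝ)))))
        (closedBall (0 : EuclideanSpace ℝ (Fin d)) r) x := by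
      intro j
      have hA : HasFDerivWithinAt
          (fun y : EuclideanSpace ℝ (Fin d) => ((evalFn (RadAux.LapP^[j] (monP t)) y : ℝ) : ℂ))
          (Complex.ofRealCLM.comp (∑ k : Fin d, evalFn (pderiv k (RadAux.LapP^[j] (monP t))) x •
            (EuclideanSpace.proj k : EuclideanSpace ℝ (Fin d) →L[ℝ] ℝ)))
          (closedBall (0 : EuclideanSpace ℝ (Fin d)) r) x :=
        (Complex.ofRealCLM.hasFDerivAt.comp x (hasFDerivAt_evalFn _ x)).hasFDerivWithinAt
      have hB := radial_hasFDerivWithinAt hr (g (t.length - j)) (g (t.length - j + 1))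
        (gsm (t.length - j)).1 (hg0 (t.length - j)) ((hg.2 (t.length - j)).2) x hx
      exact (hA.const_mul _).mul hB
    have hF := HasFDerivWithinAt.fun_sum (u := Finset.range (t.length + 1))
      (fun (j : ℕ) (_ : j ∈ Finset.range (t.length + 1)) => hstep j)
    have e1 : pderivList d r (i :: t) φ x
        = fderivWithin ℝ (pderivList d r t φ) (closedBall (0 : EuclideanSpace ℝ (Fin d)) r) x
            (EuclideanSpace.single i 1) := rfl
    rw [e1, fderivWithin_congr (fun y hy => IH y hy) (IH x hx), hF.fderivWithin (usc x hx),
      ContinuousLinearMap.sum_apply]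
    have hid : ((innerSL ℝ) x) (EuclideanSpace.single i (1:ℝ)) = x i := by
      simp [EuclideanSpace.inner_single_right]
    simp only [List.length_cons, monP_cons, ContinuousLinearMap.add_apply,
      ContinuousLinearMap.smul_apply, ContinuousLinearMap.smulRight_apply,
      ContinuousLinearMap.coe_comp', Function.comp_apply, Complex.ofRealCLM_apply,
      sum_proj_apply, hid, smul_eq_mul, Complex.real_smul]
    have hvan : RadAux.LapP^[t.length + 1] (monP t) = 0 :=
      LapP_iter_eq_zero_of_deg (t.length + 1) t.length (by omega) _ (monP_degree t)
    have hmain :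
        ∑ j ∈ Finset.range (t.length + 1 + 1),
            ((cR j : ℝ):ℂ) * ((evalFn (RadAux.LapP^[j] (X i * monP t)) x : ℝ):ℂ)
              * g (t.length + 1 - j) ‖x‖
          = ∑ j ∈ Finset.range (t.length + 1),
              ((cR j : ℝ):ℂ) * ((evalFn (RadAux.LapP^[j] (monP t)) x : ℝ):ℂ)
                * (((x i : ℝ):ℂ) * g (t.length - j + 1) ‖x‖)
            + ∑ j ∈ Finset.range (t.length + 1),
              g (t.length - j) ‖x‖ * (((cR j : ℝ):ℂ)
                * ((evalFn (pderiv i (RadAux.LapP^[j] (monP t))) x : ℝ):ℂ)) := by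
      have hstep2 : ∀ j ∈ Finset.range (t.length + 1),
          ((cR (j+1) : ℝ):ℂ) * ((evalFn (RadAux.LapP^[j+1] (X i * monP t)) x : ℝ):ℂ)
            * g (t.length + 1 - (j+1)) ‖x‖
          = ((cR (j+1) : ℝ):ℂ) * ((evalFn (RadAux.LapP^[j+1] (monP t)) x : ℝ):ℂ)
              * (((x i : ℝ):ℂ) * g (t.length + 1 - (j+1)) ‖x‖)
            + g (t.length - j) ‖x‖ * (((cR j : ℝ):ℂ)
              * ((evalFn (pderiv i (RadAux.LapP^[j] (monP t))) x : ℝ):ℂ)) := by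
        intro j hj
        have h1 : t.length + 1 - (j+1) = t.length - j := by omega
        rw [h1, LapP_iter_X_mul j i (monP t), evalFn_add, evalFn_X_mul, evalFn_nsmul]
        have hc : ((cR (j+1) : ℝ):ℂ) * (2*((j:ℂ)+1)) = ((cR j : ℝ):ℂ) := by
          exact_mod_cast cR_succ j
        push_cast
        linear_combination (((evalFn (pderiv i (RadAux.LapP^[j] (monP t))) x : ℝ):ℂ)
          * g (t.length - j) ‖x‖) * hc
      rw [Finset.sum_range_succ' _ (t.length + 1), Finset.sum_congr rfl hstep2,
        Finset.sum_add_distrib]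
      have hU0 : ((cR 0 : ℝ):ℂ) * ((evalFn (RadAux.LapP^[0] (X i * monP t)) x : ℝ):ℂ)
          * g (t.length + 1 - 0) ‖x‖
          = ((cR 0 : ℝ):ℂ) * ((evalFn (RadAux.LapP^[0] (monP t)) x : ℝ):ℂ)
            * (((x i : ℝ):ℂ) * g (t.length + 1 - 0) ‖x‖) := by
        simp only [Function.iterate_zero_apply, evalFn_X_mul]
        push_cast
        ring
      rw [add_right_comm, hU0]
      have hUext : ∑ j ∈ Finset.range (t.length + 1),
            ((cR (j+1) : ℝ):ℂ) * ((evalFn (RadAux.LapP^[j+1] (monP t)) x : ℝ):ℂ)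
              * (((x i : ℝ):ℂ) * g (t.length + 1 - (j+1)) ‖x‖)
          + ((cR 0 : ℝ):ℂ) * ((evalFn (RadAux.LapP^[0] (monP t)) x : ℝ):ℂ)
            * (((x i : ℝ):ℂ) * g (t.length + 1 - 0) ‖x‖)
          = ∑ j ∈ Finset.range (t.length + 1 + 1),
            ((cR j : ℝ):ℂ) * ((evalFn (RadAux.LapP^[j] (monP t)) x : ℝ):ℂ)
              * (((x i : ℝ):ℂ) * g (t.length + 1 - j) ‖x‖) :=
        (Finset.sum_range_succ' (fun j => ((cR j : ℝ):ℂ)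
          * ((evalFn (RadAux.LapP^[j] (monP t)) x : ℝ):ℂ)
          * (((x i : ℝ):ℂ) * g (t.length + 1 - j) ‖x‖)) (t.length + 1)).symm
      rw [hUext, Finset.sum_range_succ, hvan]
      simp only [evalFn_zero, Complex.ofReal_zero, mul_zero, zero_mul, add_zero]
      congr 1
      refine Finset.sum_congr rfl fun j hj => ?_
      rw [Finset.mem_range] at hj
      have h3 : t.length + 1 - j = t.length - j + 1 := by omega
      rw [h3]
    rw [hmain, ← Finset.sum_add_distrib]


/-- for smooth radial `φ(x) = f(|x|)` and any `d`-index `I` of length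
`n ≥ 1`, `∂_{i₁}⋯∂_{i_n} φ(x) = ∑_{j=0}^{⌊n/2⌋} p^j_I(x) (D^{n-j} f)(|x|)` with
`p^j_I(x) = (1/(2^j j!)) Δ^j (x_{i₁}⋯x_{i_n})`. -/
theorem pderiv_dIndex_radial_formula (d n : ℕ) (hd : 2 ≤ d) (hn : 1 ≤ n) (r : ℝ) (hr : 0 < r)
    (φ : EuclideanSpace ℝ (Fin d) → ℂ) (f : ℝ → ℂ) (g : ℕ → ℝ → ℂ)
    (hφ : ContDiffOn ℝ (⊤ : ℕ∞) φ (closedBall 0 r))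
    (hf : SmoothEvenOn r f)
    (hprof : ∀ x ∈ closedBall (0 : EuclideanSpace ℝ (Fin d)) r, φ x = f ‖x‖)
    (hg : DIter r f g)
    (I : Fin n → Fin d)
    (x : EuclideanSpace ℝ (Fin d)) (hx : x ∈ closedBall (0 : EuclideanSpace ℝ (Fin d)) r) :
    pderivList d r (List.ofFn I) φ x =
      ∑ j ∈ Finset.range (n / 2 + 1), ((pP d n j I x : ℝ) : ℂ) * g (n - j) ‖x‖ := by
  classical
  have hkey := radial_key hr φ f g hf hprof hg (List.ofFn I) x hx
  have hmon : RadAux.monP (List.ofFn I) = ∏ k : Fin n, MvPolynomial.X (I k) := by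
    simp [RadAux.monP, List.map_ofFn, List.prod_ofFn, Function.comp]
  have hfn : (fun z : EuclideanSpace ℝ (Fin d) => ∏ k : Fin n, z (I k))
      = RadAux.evalFn (∏ k : Fin n, MvPolynomial.X (I k)) := by
    funext z
    simp [RadAux.evalFn]
  have hpP : ∀ j : ℕ, pP d n j I x
      = RadAux.cR j * RadAux.evalFn (RadAux.LapP^[j] (RadAux.monP (List.ofFn I))) x := by
    intro j
    show (1 / (2 ^ j * (Nat.factorial j)) : ℝ)
        * (lap d)^[j] (fun y => ∏ k : Fin n, y (I k)) x = _
    rw [hfn, RadAux.lap_iter_evalFn, hmon, RadAux.cR, one_div]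
  rw [hkey]
  simp only [List.length_ofFn]
  have hzero : ∀ j ∈ Finset.range (n + 1), j ∉ Finset.range (n / 2 + 1) →
      ((RadAux.cR j : ℝ):ℂ)
        * ((RadAux.evalFn (RadAux.LapP^[j] (RadAux.monP (List.ofFn I))) x : ℝ):ℂ)
        * g (n - j) ‖x‖ = 0 := by
    intro j hj1 hj2
    rw [Finset.mem_range] at hj1 hj2
    have hvan : RadAux.LapP^[j] (RadAux.monP (List.ofFn I)) = 0 := by
      refine RadAux.LapP_iter_eq_zero_of_deg j n (by omega) _ ?_
      have := RadAux.monP_degree (List.ofFn I)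
      simpa [List.length_ofFn] using this
    rw [hvan, RadAux.evalFn_zero]
    simp
  have h1 : ∑ j ∈ Finset.range (n / 2 + 1), ((pP d n j I x : ℝ) : ℂ) * g (n - j) ‖x‖
      = ∑ j ∈ Finset.range (n / 2 + 1),
          ((RadAux.cR j : ℝ):ℂ)
            * ((RadAux.evalFn (RadAux.LapP^[j] (RadAux.monP (List.ofFn I))) x : ℝ):ℂ)
            * g (n - j) ‖x‖ := by
    refine Finset.sum_congr rfl fun j _ => ?_
    rw [hpP j]
    push_cast
    ring
  have h2 : ∑ j ∈ Finset.range (n / 2 + 1),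
        ((RadAux.cR j : ℝ):ℂ)
          * ((RadAux.evalFn (RadAux.LapP^[j] (RadAux.monP (List.ofFn I))) x : ℝ):ℂ)
          * g (n - j) ‖x‖
      = ∑ j ∈ Finset.range (n + 1),
          ((RadAux.cR j : ℝ):ℂ)
            * ((RadAux.evalFn (RadAux.LapP^[j] (RadAux.monP (List.ofFn I))) x : ℝ):ℂ)
            * g (n - j) ‖x‖ :=
    Finset.sum_subset (Finset.range_subset_range.2 (by omega)) hzero
  rw [h1, h2]
end
end

section
/- Let d ≥ 2 and n ≥ 1 be integers. For a d-index I = (i₁,…,i_n) ∈ {1,…,d}^n and 0 ≤ j ≤ ⌊n/2⌋, set p^j_I(x) = (1/(2^j j!)) Δ^j (x_{i₁}⋯x_{i_n}). Then the vectors v_i = (p^i_I(e_d))_{I ∈ {1,…,d}^n} ∈ ℝ^{d^n}, for i = 0,…,⌊n/2⌋, are linearly independent; equivalently, the Gram matrix with entries γ_{ij}(d,n) = Σ_{I ∈ {1,…,d}^n} p^i_I(e_d) p^j_I(e_d) is invertible. -/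
open MeasureTheory Metric Set

noncomputable section

namespace GramAux
open Finset

def Mn {d : ℕ} (i j : Fin d) (p q : ℕ) : EuclideanSpace ℝ (Fin d) → ℝ := fun y => (y i)^p * (y j)^q

lemma hasFDeriv_coord {d : ℕ} (i : Fin d) (x : EuclideanSpace ℝ (Fin d)) :
    HasFDerivAt (fun y : EuclideanSpace ℝ (Fin d) => y i) (EuclideanSpace.proj i : EuclideanSpace ℝ (Fin d) →L[ℝ] ℝ) x :=
  (EuclideanSpace.proj (𝕜 := ℝ) i).hasFDerivAt

lemma hasFDeriv_pow {d : ℕ} (i : Fin d) (p : ℕ) (x : EuclideanSpace ℝ (Fin d)) :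
    HasFDerivAt (fun y : EuclideanSpace ℝ (Fin d) => (y i)^p)
      (((p:ℝ) * (x i)^(p-1)) • (EuclideanSpace.proj i : EuclideanSpace ℝ (Fin d) →L[ℝ] ℝ)) x :=
  (hasDerivAt_pow p (x i)).comp_hasFDerivAt x (hasFDeriv_coord i x)

lemma hasFDeriv_Mn {d : ℕ} (i j : Fin d) (p q : ℕ) (x : EuclideanSpace ℝ (Fin d)) :
    HasFDerivAt (Mn i j p q)
      ((x i)^p • (((q:ℝ) * (x j)^(q-1)) • (EuclideanSpace.proj j : EuclideanSpace ℝ (Fin d) →L[ℝ] ℝ))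
        + (x j)^q • (((p:ℝ) * (x i)^(p-1)) • (EuclideanSpace.proj i : EuclideanSpace ℝ (Fin d) →L[ℝ] ℝ))) x :=
  (hasFDeriv_pow i p x).mul (hasFDeriv_pow j q x)

lemma fderiv_Mn_apply {d : ℕ} (i j : Fin d) (hij : i ≠ j) (p q : ℕ) (x : EuclideanSpace ℝ (Fin d)) (i' : Fin d) :
    fderiv ℝ (Mn i j p q) x (EuclideanSpace.single i' 1) =
      (if i' = i then (p:ℝ) * Mn i j (p-1) q x else 0)
      + (if i' = j then (q:ℝ) * Mn i j p (q-1) x else 0) := by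
  rw [(hasFDeriv_Mn i j p q x).fderiv]
  simp only [ContinuousLinearMap.add_apply, ContinuousLinearMap.smul_apply,
    PiLp.proj_apply, EuclideanSpace.single_apply, smul_eq_mul, Mn]
  by_cases h1 : i' = i
  · subst h1; simp [hij, Ne.symm hij]; ring
  · by_cases h2 : i' = j
    · subst h2; simp [h1, Ne.symm h1]; ring
    · simp [h1, h2, Ne.symm h1, Ne.symm h2]

lemma fderiv_sum_Mn {d : ℕ} (i j : Fin d) (hij : i ≠ j) (m : ℕ) (c : ℕ → ℝ) (p q : ℕ → ℕ)
    (x : EuclideanSpace ℝ (Fin d)) (i' : Fin d) :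
    fderiv ℝ (fun y => ∑ s ∈ range m, c s * Mn i j (p s) (q s) y) x (EuclideanSpace.single i' 1)
    = ∑ s ∈ range m, c s * ((if i' = i then (p s:ℝ) * Mn i j (p s - 1) (q s) x else 0)
        + (if i' = j then (q s:ℝ) * Mn i j (p s) (q s - 1) x else 0)) := by
  rw [fderiv_fun_sum (fun s _ => ((hasFDeriv_Mn i j (p s) (q s) x).differentiableAt.const_mul (c s)))]
  rw [ContinuousLinearMap.sum_apply]
  refine Finset.sum_congr rfl fun s _ => ?_
  rw [fderiv_const_mul (hasFDeriv_Mn i j (p s) (q s) x).differentiableAt]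
  rw [ContinuousLinearMap.smul_apply, fderiv_Mn_apply i j hij, smul_eq_mul]

lemma lap_sum_Mn {d : ℕ} (i j : Fin d) (hij : i ≠ j) (m : ℕ) (c : ℕ → ℝ) (p q : ℕ → ℕ) :
    lap d (fun y => ∑ s ∈ range m, c s * Mn i j (p s) (q s) y)
    = fun y => ∑ s ∈ range m, c s *
        ((((p s) * (p s - 1) : ℕ) : ℝ) * Mn i j (p s - 2) (q s) y
          + (((q s) * (q s - 1) : ℕ) : ℝ) * Mn i j (p s) (q s - 2) y) := by
  funext x
  unfold lap
  have key : ∀ i' : Fin d,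
      fderiv ℝ (fun y => fderiv ℝ (fun z => ∑ s ∈ range m, c s * Mn i j (p s) (q s) z) y
          (EuclideanSpace.single i' 1)) x (EuclideanSpace.single i' 1)
      = (if i' = i then ∑ s ∈ range m, c s * ((((p s) * (p s - 1) : ℕ) : ℝ) * Mn i j (p s - 2) (q s) x) else 0)
        + (if i' = j then ∑ s ∈ range m, c s * ((((q s) * (q s - 1) : ℕ) : ℝ) * Mn i j (p s) (q s - 2) x) else 0) := by
    intro i'
    by_cases h1 : i' = i
    · rw [h1]
      have hfun : (fun y => fderiv ℝ (fun z => ∑ s ∈ range m, c s * Mn i j (p s) (q s) z) y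
            (EuclideanSpace.single i 1))
          = fun y => ∑ s ∈ range m, (c s * (p s : ℝ)) * Mn i j (p s - 1) (q s) y := by
        funext y
        rw [fderiv_sum_Mn i j hij]
        refine Finset.sum_congr rfl fun s _ => ?_
        simp only [eq_self_iff_true, if_true, if_neg hij, add_zero]
        ring
      rw [hfun, fderiv_sum_Mn i j hij]
      simp only [eq_self_iff_true, if_true, if_neg hij, if_neg (Ne.symm hij), add_zero, zero_add]
      refine Finset.sum_congr rfl fun s _ => ?_
      have h2 : p s - 1 - 1 = p s - 2 := by omega
      rw [h2]
      push_cast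
      ring
    · by_cases h2 : i' = j
      · rw [h2]
        have hfun : (fun y => fderiv ℝ (fun z => ∑ s ∈ range m, c s * Mn i j (p s) (q s) z) y
              (EuclideanSpace.single j 1))
            = fun y => ∑ s ∈ range m, (c s * (q s : ℝ)) * Mn i j (p s) (q s - 1) y := by
          funext y
          rw [fderiv_sum_Mn i j hij]
          refine Finset.sum_congr rfl fun s _ => ?_
          simp only [eq_self_iff_true, if_true, if_neg (Ne.symm hij), zero_add]
          ring
        rw [hfun, fderiv_sum_Mn i j hij]
        simp only [eq_self_iff_true, if_true, if_neg hij, if_neg (Ne.symm hij), add_zero, zero_add]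
        refine Finset.sum_congr rfl fun s _ => ?_
        have h3 : q s - 1 - 1 = q s - 2 := by omega
        rw [h3]
        push_cast
        ring
      · have hfun : (fun y => fderiv ℝ (fun z => ∑ s ∈ range m, c s * Mn i j (p s) (q s) z) y
              (EuclideanSpace.single i' 1))
            = fun _ => (0:ℝ) := by
          funext y
          rw [fderiv_sum_Mn i j hij]
          simp [h1, h2]
        rw [hfun, if_neg h1, if_neg h2]
        simp [fderiv_const]
  calc (∑ i' : Fin d, fderiv ℝ (fun y => fderiv ℝ (fun z => ∑ s ∈ range m, c s * Mn i j (p s) (q s) z) y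
          (EuclideanSpace.single i' 1)) x (EuclideanSpace.single i' 1))
      = ∑ i' : Fin d, ((if i' = i then ∑ s ∈ range m, c s * ((((p s) * (p s - 1) : ℕ) : ℝ) * Mn i j (p s - 2) (q s) x) else 0)
        + (if i' = j then ∑ s ∈ range m, c s * ((((q s) * (q s - 1) : ℕ) : ℝ) * Mn i j (p s) (q s - 2) x) else 0)) :=
        Finset.sum_congr rfl fun i' _ => key i'
    _ = (∑ s ∈ range m, c s * ((((p s) * (p s - 1) : ℕ) : ℝ) * Mn i j (p s - 2) (q s) x))
        + ∑ s ∈ range m, c s * ((((q s) * (q s - 1) : ℕ) : ℝ) * Mn i j (p s) (q s - 2) x) := by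
        rw [Finset.sum_add_distrib, Finset.sum_ite_eq' univ i, Finset.sum_ite_eq' univ j]
        simp
    _ = _ := by rw [← Finset.sum_add_distrib]; exact Finset.sum_congr rfl fun s _ => by ring

def coef (p q t s : ℕ) : ℕ :=
  Nat.choose t s * Nat.descFactorial p (2*s) * Nat.descFactorial q (2*(t-s))

def Aterm {d : ℕ} (i j : Fin d) (p q t : ℕ) (y : EuclideanSpace ℝ (Fin d)) (s : ℕ) : ℝ :=
  ((Nat.choose t s * Nat.descFactorial p (2*(s+1)) * Nat.descFactorial q (2*(t-s)) : ℕ) : ℝ)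
    * Mn i j (p - 2*(s+1)) (q - 2*(t-s)) y

def Bterm {d : ℕ} (i j : Fin d) (p q t : ℕ) (y : EuclideanSpace ℝ (Fin d)) (s : ℕ) : ℝ :=
  ((Nat.choose t s * Nat.descFactorial p (2*s) * Nat.descFactorial q (2*((t+1)-s)) : ℕ) : ℝ)
    * Mn i j (p - 2*s) (q - 2*((t+1)-s)) y

lemma lap_iter_Mn {d : ℕ} (i j : Fin d) (hij : i ≠ j) (p q : ℕ) (t : ℕ) :
    (lap d)^[t] (Mn i j p q)
    = fun y => ∑ s ∈ range (t+1), (coef p q t s : ℝ) * Mn i j (p - 2*s) (q - 2*(t-s)) y := by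
  induction t with
  | zero => funext y; simp [coef, Mn]
  | succ t ih =>
    rw [Function.iterate_succ_apply', ih,
      lap_sum_Mn i j hij (t+1) (fun s => (coef p q t s : ℝ)) (fun s => p - 2*s) (fun s => q - 2*(t-s))]
    funext y
    have hL : ∑ s ∈ range (t+1), (coef p q t s : ℝ) *
        ((((p - 2*s) * ((p - 2*s) - 1) : ℕ) : ℝ) * Mn i j ((p - 2*s) - 2) (q - 2*(t-s)) y
          + (((q - 2*(t-s)) * ((q - 2*(t-s)) - 1) : ℕ) : ℝ) * Mn i j (p - 2*s) ((q - 2*(t-s)) - 2) y)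
        = ∑ s ∈ range (t+1), (Aterm i j p q t y s + Bterm i j p q t y s) := by
      refine Finset.sum_congr rfl fun s hs => ?_
      have hs' : s ≤ t := by simpa [Nat.lt_succ_iff] using hs
      have e1 : p - 2*s - 2 = p - 2*(s+1) := by omega
      have e2 : q - 2*(t-s) - 2 = q - 2*((t+1)-s) := by omega
      have e3 : 2*((t+1)-s) = 2*(t-s) + 2 := by omega
      have hd1 : Nat.descFactorial p (2*(s+1)) = (p - 2*s) * ((p - 2*s) - 1) * Nat.descFactorial p (2*s) := by
        have h : 2*(s+1) = (2*s+1)+1 := by ring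
        rw [h, Nat.descFactorial_succ, Nat.descFactorial_succ]
        have h2 : p - (2*s+1) = p - 2*s - 1 := by omega
        rw [h2]; ring
      have hd2 : Nat.descFactorial q (2*((t+1)-s)) = (q - 2*(t-s)) * ((q - 2*(t-s)) - 1) * Nat.descFactorial q (2*(t-s)) := by
        rw [e3]
        have h : 2*(t-s)+2 = (2*(t-s)+1)+1 := by ring
        rw [h, Nat.descFactorial_succ, Nat.descFactorial_succ]
        have h2 : q - (2*(t-s)+1) = q - 2*(t-s) - 1 := by omega
        rw [h2]; ring
      simp only [Aterm, Bterm, coef]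
      rw [e1, e2, hd1, hd2]
      push_cast
      ring
    rw [hL, Finset.sum_add_distrib]
    have hR : ∑ s ∈ range (t+1+1), (coef p q (t+1) s : ℝ) * Mn i j (p - 2*s) (q - 2*((t+1)-s)) y
        = (∑ s ∈ range (t+1), Aterm i j p q t y s) + ∑ s ∈ range (t+1), Bterm i j p q t y s := by
      rw [Finset.sum_range_succ' (fun s => (coef p q (t+1) s : ℝ) * Mn i j (p - 2*s) (q - 2*((t+1)-s)) y) (t+1)]
      have hterm : ∀ s, (coef p q (t+1) (s+1) : ℝ) * Mn i j (p - 2*(s+1)) (q - 2*((t+1)-(s+1))) y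
          = Aterm i j p q t y s + Bterm i j p q t y (s+1) := by
        intro s
        have e4 : (t+1) - (s+1) = t - s := by omega
        simp only [coef, Aterm, Bterm, e4, Nat.choose_succ_succ]
        push_cast
        ring
      calc (∑ s ∈ range (t+1), (coef p q (t+1) (s+1) : ℝ) * Mn i j (p - 2*(s+1)) (q - 2*((t+1)-(s+1))) y)
            + (coef p q (t+1) 0 : ℝ) * Mn i j (p - 2*0) (q - 2*((t+1)-0)) y
          = (∑ s ∈ range (t+1), (Aterm i j p q t y s + Bterm i j p q t y (s+1))) + Bterm i j p q t y 0 := by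
            rw [Finset.sum_congr rfl fun s _ => hterm s]
            congr 1
            simp only [coef, Bterm]
            norm_num
        _ = (∑ s ∈ range (t+1), Aterm i j p q t y s)
            + ((∑ s ∈ range (t+1), Bterm i j p q t y (s+1)) + Bterm i j p q t y 0) := by
            rw [Finset.sum_add_distrib]; ring
        _ = (∑ s ∈ range (t+1), Aterm i j p q t y s) + ∑ s ∈ range (t+2), Bterm i j p q t y s := by
            rw [Finset.sum_range_succ' (Bterm i j p q t y) (t+1)]
        _ = (∑ s ∈ range (t+1), Aterm i j p q t y s) + ∑ s ∈ range (t+1), Bterm i j p q t y s := by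
            rw [Finset.sum_range_succ (Bterm i j p q t y) (t+1)]
            have hz : Bterm i j p q t y (t+1) = 0 := by
              simp [Bterm, Nat.choose_succ_self]
            rw [hz, add_zero]
    rw [hR]

lemma card_filt (n c : ℕ) (h : c ≤ n) : (Finset.univ.filter fun k : Fin n => (k:ℕ) < c).card = c := by
  rw [Finset.card_filter, Fin.sum_univ_eq_sum_range (fun k => if k < c then (1:ℕ) else 0) n,
    ← Finset.card_filter]
  have : (Finset.range n).filter (fun k => k < c) = Finset.range c := by
    ext k; simp; omega
  rw [this, Finset.card_range]

lemma prod_Im (d n : ℕ) (i j : Fin d) (m : ℕ) (h2m : 2*m ≤ n) :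
    (fun y : EuclideanSpace ℝ (Fin d) => ∏ k : Fin n, y (if (k:ℕ) < 2*m then i else j))
    = Mn i j (2*m) (n - 2*m) := by
  funext y
  have : ∀ k : Fin n, y (if (k:ℕ) < 2*m then i else j) = if (k:ℕ) < 2*m then y i else y j :=
    fun k => apply_ite y _ _ _
  simp only [this]
  rw [Finset.prod_ite]
  rw [Finset.prod_const, Finset.prod_const]
  congr 1
  · rw [card_filt n (2*m) h2m]
  · congr 1
    have := Finset.card_filter_add_card_filter_not
      (s := (Finset.univ : Finset (Fin n))) (p := fun k : Fin n => (k:ℕ) < 2*m)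
    rw [card_filt n (2*m) h2m] at this
    simp only [Finset.card_univ, Fintype.card_fin] at this
    omega

lemma Mn_eval (d : ℕ) (i j : Fin d) (hij : i ≠ j) (p q : ℕ) :
    Mn i j p q (EuclideanSpace.single j 1) = if p = 0 then 1 else 0 := by
  have h1 : (EuclideanSpace.single j (1:ℝ)) i = 0 := by
    simp [EuclideanSpace.single_apply, hij]
  have h2 : (EuclideanSpace.single j (1:ℝ)) j = 1 := by
    simp [EuclideanSpace.single_apply]
  simp [Mn, h1, h2, zero_pow_eq, hij]

lemma pP_eval (d n m t : ℕ) (i0 j0 : Fin d) (hij : i0 ≠ j0) (h2m : 2*m ≤ n) :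
    pP d n t (fun k : Fin n => if (k:ℕ) < 2*m then i0 else j0) (EuclideanSpace.single j0 1)
    = (1 / (2 ^ t * (Nat.factorial t)) : ℝ) *
      (if m ≤ t then ((Nat.choose t m * Nat.factorial (2*m)
        * Nat.descFactorial (n-2*m) (2*(t-m)) : ℕ) : ℝ) else 0) := by
  have hprod : (fun y : EuclideanSpace ℝ (Fin d) => ∏ k : Fin n,
      y ((fun k : Fin n => if (k:ℕ) < 2*m then i0 else j0) k)) = Mn i0 j0 (2*m) (n - 2*m) := by
    simpa using prod_Im d n i0 j0 m h2m
  simp only [pP, hprod, lap_iter_Mn i0 j0 hij (2*m) (n-2*m) t]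
  congr 1
  by_cases hmt : m ≤ t
  · rw [if_pos hmt]
    rw [Finset.sum_eq_single m]
    · rw [Mn_eval d i0 j0 hij, if_pos (by omega : 2*m - 2*m = 0), mul_one, coef]
      rw [Nat.descFactorial_self]
    · intro s hs hsm
      rw [Mn_eval d i0 j0 hij]
      rcases Nat.lt_or_ge s m with h | h
      · rw [if_neg (by omega : ¬(2*m - 2*s = 0)), mul_zero]
      · have hgt : m < s := lt_of_le_of_ne h (Ne.symm hsm)
        have hz : Nat.descFactorial (2*m) (2*s) = 0 :=
          Nat.descFactorial_eq_zero_iff_lt.mpr (by omega)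
        simp [coef, hz]
    · intro hm
      exact absurd (Finset.mem_range.mpr (by omega)) hm
  · rw [if_neg hmt]
    refine Finset.sum_eq_zero fun s hs => ?_
    have hs' : s ≤ t := by simpa [Nat.lt_succ_iff] using hs
    rw [Mn_eval d i0 j0 hij, if_neg (by omega : ¬(2*m - 2*s = 0)), mul_zero]

end GramAux

/-- the vectors `v_i = (p^i_I(e_d))_I ∈ ℝ^{d^n}`, `i = 0,…,⌊n/2⌋`, are
linearly independent; equivalently, the Gram matrix
`γ_{ij}(d,n) = ∑_I p^i_I(e_d) p^j_I(e_d)` is invertible. -/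
theorem gram_matrix_invertible (d n : ℕ) (hd : 2 ≤ d) (hn : 1 ≤ n) :
    LinearIndependent ℝ (fun i : Fin (n / 2 + 1) => fun I : Fin n → Fin d =>
      pP d n (i : ℕ) I (EuclideanSpace.single (⟨d - 1, by omega⟩ : Fin d) 1)) ∧
    IsUnit (Matrix.det (Matrix.of fun i j : Fin (n / 2 + 1) =>
      ∑ I : Fin n → Fin d,
        pP d n (i : ℕ) I (EuclideanSpace.single (⟨d - 1, by omega⟩ : Fin d) 1) *
          pP d n (j : ℕ) I (EuclideanSpace.single (⟨d - 1, by omega⟩ : Fin d) 1))) := by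
  classical
  have hd1 : d - 1 < d := by omega
  have hd0 : 0 < d := by omega
  let i0 : Fin d := ⟨0, hd0⟩
  let j0 : Fin d := ⟨d - 1, hd1⟩
  have hij : i0 ≠ j0 := by
    simp only [i0, j0, Ne, Fin.ext_iff]
    omega
  let v : Fin (n/2+1) → (Fin n → Fin d) → ℝ :=
    fun i I => pP d n (i : ℕ) I (EuclideanSpace.single j0 1)
  have hn2 : ∀ m : Fin (n/2+1), 2*(m:ℕ) ≤ n := fun m => by
    have := m.isLt; omega
  let Im : Fin (n/2+1) → (Fin n → Fin d) := fun m k => if (k:ℕ) < 2*(m:ℕ) then i0 else j0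
  let Mm : Matrix (Fin (n/2+1)) (Fin (n/2+1)) ℝ := fun m t => v t (Im m)
  have hMm : ∀ m t : Fin (n/2+1), Mm m t
      = (1 / (2 ^ (t:ℕ) * (Nat.factorial (t:ℕ))) : ℝ) *
        (if (m:ℕ) ≤ (t:ℕ) then ((Nat.choose (t:ℕ) (m:ℕ) * Nat.factorial (2*(m:ℕ))
          * Nat.descFactorial (n-2*(m:ℕ)) (2*((t:ℕ)-(m:ℕ))) : ℕ) : ℝ) else 0) :=
    fun m t => GramAux.pP_eval d n (m:ℕ) (t:ℕ) i0 j0 hij (hn2 m)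
  have htri : Mm.BlockTriangular id := by
    intro m t h
    have h' : (t:ℕ) < (m:ℕ) := h
    rw [hMm m t, if_neg (by omega), mul_zero]
  have hdiag : ∀ m : Fin (n/2+1), Mm m m ≠ 0 := by
    intro m
    rw [hMm m m, if_pos le_rfl]
    have h1 : (0:ℝ) < 1 / (2 ^ (m:ℕ) * (Nat.factorial (m:ℕ))) := by
      apply div_pos one_pos
      positivity
    have h2 : (0:ℝ) < ((Nat.choose (m:ℕ) (m:ℕ) * Nat.factorial (2*(m:ℕ))
        * Nat.descFactorial (n-2*(m:ℕ)) (2*((m:ℕ)-(m:ℕ))) : ℕ) : ℝ) := by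
      have : 0 < Nat.choose (m:ℕ) (m:ℕ) * Nat.factorial (2*(m:ℕ))
          * Nat.descFactorial (n-2*(m:ℕ)) (2*((m:ℕ)-(m:ℕ))) := by
        apply Nat.mul_pos
        apply Nat.mul_pos
        · simp [Nat.choose_self]
        · exact Nat.factorial_pos _
        · simp
      exact_mod_cast this
    exact ne_of_gt (mul_pos h1 h2)
  have hdet : Mm.det ≠ 0 := by
    rw [Matrix.det_of_upperTriangular htri]
    exact Finset.prod_ne_zero_iff.mpr fun m _ => hdiag m
  have hli : LinearIndependent ℝ v := by
    rw [Fintype.linearIndependent_iff]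
    intro g hg
    have hmv : Mm.mulVec g = 0 := by
      funext m'
      have h1 := congrFun hg (Im m')
      simp only [Finset.sum_apply, Pi.smul_apply, smul_eq_mul, Pi.zero_apply] at h1
      simp only [Matrix.mulVec, dotProduct, Mm, Pi.zero_apply]
      rw [← h1]
      exact Finset.sum_congr rfl fun t _ => by ring
    intro m
    by_contra hgm
    have hg0 : g ≠ 0 := fun h => hgm (by rw [h]; rfl)
    exact hdet (Matrix.exists_mulVec_eq_zero_iff.mp ⟨g, hg0, hmv⟩)
  have hliG : LinearIndependent ℝ (fun i : Fin (n / 2 + 1) => fun I : Fin n → Fin d =>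
      pP d n (i : ℕ) I (EuclideanSpace.single (⟨d - 1, by omega⟩ : Fin d) 1)) := hli
  refine ⟨hliG, ?_⟩
  rw [isUnit_iff_ne_zero]
  intro hdet0
  obtain ⟨c, hc0, hc⟩ := Matrix.exists_mulVec_eq_zero_iff.mpr hdet0
  have hc' : (Matrix.of fun i j : Fin (n / 2 + 1) =>
      ∑ I : Fin n → Fin d, v i I * v j I).mulVec c = 0 := hc
  have h0 : ∑ I : Fin n → Fin d, (∑ i, c i * v i I) * (∑ j, c j * v j I) = 0 := by
    have heq : ∑ I : Fin n → Fin d, (∑ i, c i * v i I) * (∑ j, c j * v j I)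
        = ∑ i, c i * ((Matrix.of fun i j : Fin (n / 2 + 1) =>
            ∑ I : Fin n → Fin d, v i I * v j I).mulVec c i) := by
      simp only [Matrix.mulVec, dotProduct, Matrix.of_apply, Finset.mul_sum,
        Finset.sum_mul]
      rw [Finset.sum_comm]
      refine Finset.sum_congr rfl fun i _ => ?_
      rw [Finset.sum_comm]
      refine Finset.sum_congr rfl fun j _ => Finset.sum_congr rfl fun I _ => by ring
    rw [heq, hc']
    simp
  have hw : ∀ I : Fin n → Fin d, (∑ i, c i * v i I) = 0 := by
    intro I
    have hnn : ∀ I ∈ (Finset.univ : Finset (Fin n → Fin d)),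
        (0:ℝ) ≤ (∑ i, c i * v i I) * (∑ j, c j * v j I) := fun I _ => mul_self_nonneg _
    have := (Finset.sum_eq_zero_iff_of_nonneg hnn).mp h0 I (Finset.mem_univ I)
    exact mul_self_eq_zero.mp this
  have hcz := Fintype.linearIndependent_iff.mp hli c (by
    funext I
    simpa only [Finset.sum_apply, Pi.smul_apply, smul_eq_mul, Pi.zero_apply] using hw I)
  exact hc0 (funext fun i => hcz i)
end
end

section
/- Let p ≥ 1, r > 0 and s > −1/p be real numbers. There exists a constant C > 0, depending only on p, r, s, such that for every continuously differentiable function f : [0,r] → ℂ: (∫₀^r x^{ps} |f(x)|^p dx)^{1/p} ≤ C ( |f(r)| + (∫₀^r x^{p(s+1)} |f'(x)|^p dx)^{1/p} ). -/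
open MeasureTheory Metric Set

noncomputable section

/-- Hardy-type inequality on `[0,r]`:
`‖(·)^s f‖_{L^p(0,r)} ≤ C (|f(r)| + ‖(·)^{s+1} f'‖_{L^p(0,r)})`. -/
theorem hardy_inequality_Icc (p r s : ℝ) (hp : 1 ≤ p) (hr : 0 < r) (hs : -(1 / p) < s) :
    ∃ C : ℝ, 0 < C ∧ ∀ f : ℝ → ℂ, ContDiffOn ℝ 1 f (Icc 0 r) →
      (∫ x in (0 : ℝ)..r, x ^ (p * s) * ‖f x‖ ^ p) ^ (1 / p) ≤
        C * (‖f r‖ +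
          (∫ x in (0 : ℝ)..r, x ^ (p * (s + 1)) * ‖derivWithin f (Icc 0 r) x‖ ^ p) ^ (1 / p)) := by
  have hp0 : (0:ℝ) < p := lt_of_lt_of_le one_pos hp
  have hq' : -1 < p * s := by
    have h1 : p * (-(1/p)) < p * s := (mul_lt_mul_iff_right₀ hp0).2 hs
    have h2 : p * (-(1/p)) = -1 := by field_simp
    linarith
  set q : ℝ := p * s with hqdef
  have hq : -1 < q := hq'
  have hq1 : (0:ℝ) < q + 1 := by linarith
  have hrq : (0:ℝ) < r ^ (q+1) := Real.rpow_pos_of_pos hr _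
  set C1 : ℝ := 2*p/(q+1) with hC1def
  set C2 : ℝ := (2 * r^(q+1) / (q+1)) ^ (1/p) with hC2def
  have hC1 : 0 < C1 := by rw [hC1def]; positivity
  have hC2 : 0 < C2 := by
    rw [hC2def]
    apply Real.rpow_pos_of_pos
    positivity
  set C : ℝ := max C1 C2 with hCdef
  have hC : 0 < C := lt_of_lt_of_le hC1 (le_max_left _ _)
  refine ⟨C, hC, ?_⟩
  intro f hf
  set f' := derivWithin f (Icc 0 r) with hf'def
  have hUD : UniqueDiffOn ℝ (Icc (0:ℝ) r) := uniqueDiffOn_Icc hr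
  have hfc : ContinuousOn f (Icc 0 r) := hf.continuousOn
  have hf'c : ContinuousOn f' (Icc 0 r) := hf.continuousOn_derivWithin hUD le_rfl
  have hgc : ContinuousOn (fun t => ‖f' t‖) (Icc 0 r) := hf'c.norm
  have hdAt : ∀ t ∈ Ioo (0:ℝ) r, HasDerivAt f (f' t) t := by
    intro t ht
    exact (((hf.differentiableOn one_ne_zero) t (Ioo_subset_Icc_self ht)).hasDerivWithinAt).hasDerivAt
      (Icc_mem_nhds ht.1 ht.2)
  have hg_ii : ∀ a ∈ Icc (0:ℝ) r, ∀ b ∈ Icc (0:ℝ) r,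
      IntervalIntegrable (fun t => ‖f' t‖) volume a b :=
    fun a ha b hb => (hgc.mono (uIcc_subset_Icc ha hb)).intervalIntegrable
  have huIcc : uIcc (0:ℝ) r = Icc 0 r := uIcc_of_le hr.le
  set Bint : ℝ := ∫ x in (0:ℝ)..r, x ^ (p * (s+1)) * ‖f' x‖ ^ p with hBintdef
  set Bv : ℝ := Bint ^ (1/p) with hBvdef
  have hBint0 : 0 ≤ Bint := by
    rw [hBintdef]
    apply intervalIntegral.integral_nonneg hr.le
    intro x hx
    exact mul_nonneg (Real.rpow_nonneg hx.1 _) (Real.rpow_nonneg (norm_nonneg _) _)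
  have hBv0 : 0 ≤ Bv := Real.rpow_nonneg hBint0 _
  -- continuity of the weight functions
  have hxq_c : ∀ x ∈ Ioc (0:ℝ) r, ContinuousWithinAt (fun y : ℝ => y ^ q) (Ioc 0 r) x :=
    fun x hx => (Real.continuousAt_rpow_const x q (Or.inl hx.1.ne')).continuousWithinAt
  have hxq1_c : ContinuousOn (fun y : ℝ => y ^ (q+1)) (Icc 0 r) :=
    fun x _ => (Real.continuousAt_rpow_const x (q+1) (Or.inr hq1.le)).continuousWithinAt
  have hxqp_c : ContinuousOn (fun y : ℝ => y ^ (p*(s+1))) (Icc 0 r) :=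
    fun x _ => (Real.continuousAt_rpow_const x (p*(s+1)) (Or.inr (by nlinarith))).continuousWithinAt
  have hxq_int : IntegrableOn (fun x : ℝ => x ^ q) (Ioc 0 r) :=
    (intervalIntegrable_iff_integrableOn_Ioc_of_le hr.le).1
      (intervalIntegral.intervalIntegrable_rpow' hq)
  -- integrability of the B-integrand
  have hkc : ContinuousOn (fun x : ℝ => x ^ (p*(s+1)) * ‖f' x‖ ^ p) (Icc 0 r) :=
    hxqp_c.mul (hgc.rpow_const fun x _ => Or.inr hp0.le)
  have hk_ii : IntervalIntegrable (fun x : ℝ => x ^ (p*(s+1)) * ‖f' x‖ ^ p) volume 0 r :=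
    ContinuousOn.intervalIntegrable (by rwa [huIcc])
  have hk_intOn : IntegrableOn (fun x : ℝ => x ^ (p*(s+1)) * ‖f' x‖ ^ p) (Ioc 0 r) :=
    (intervalIntegrable_iff_integrableOn_Ioc_of_le hr.le).1 hk_ii
  have key : ∀ ε : ℝ, 0 < ε →
      (∫ x in (0:ℝ)..r, x ^ q * ‖f x‖ ^ p) ^ (1/p) ≤ C * ((‖f r‖ + ε) + Bv) := by
    intro ε hε
    set F : ℝ → ℝ := fun x => ‖f r‖ + ε + ∫ t in x..r, ‖f' t‖ with hFdef
    have hFc : ContinuousOn F (Icc 0 r) := by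
      apply continuousOn_const.add
      have h1 : IntegrableOn (fun t => ‖f' t‖) (uIcc (0:ℝ) r) volume := by
        rw [huIcc]; exact hgc.integrableOn_Icc
      have := intervalIntegral.continuousOn_primitive_interval_left h1
      rwa [huIcc] at this
    have hFpos : ∀ x ∈ Icc (0:ℝ) r, 0 < F x := by
      intro x hx
      have h1 : 0 ≤ ∫ t in x..r, ‖f' t‖ :=
        intervalIntegral.integral_nonneg hx.2 (fun t _ => norm_nonneg _)
      have h2 : 0 ≤ ‖f r‖ := norm_nonneg _
      simp only [hFdef]
      linarith
    have hadj : ∀ x ∈ Icc (0:ℝ) r,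
        (∫ t in (0:ℝ)..x, ‖f' t‖) + ∫ t in x..r, ‖f' t‖ = ∫ t in (0:ℝ)..r, ‖f' t‖ :=
      fun x hx => intervalIntegral.integral_add_adjacent_intervals
        (hg_ii 0 ⟨le_rfl, hr.le⟩ x hx) (hg_ii x hx r ⟨hr.le, le_rfl⟩)
    have hM : ∀ x ∈ Icc (0:ℝ) r, F x ≤ F 0 := by
      intro x hx
      have h1 := hadj x hx
      have h2 : 0 ≤ ∫ t in (0:ℝ)..x, ‖f' t‖ :=
        intervalIntegral.integral_nonneg hx.1 (fun t _ => norm_nonneg _)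
      simp only [hFdef]
      linarith
    have hfF : ∀ x ∈ Icc (0:ℝ) r, ‖f x‖ ≤ F x := by
      intro x hx
      have hsub : ∫ t in x..r, f' t = f r - f x := by
        apply intervalIntegral.integral_eq_sub_of_hasDeriv_right_of_le hx.2
          (hfc.mono (Icc_subset_Icc hx.1 le_rfl))
        · intro t ht
          exact (hdAt t ⟨lt_of_le_of_lt hx.1 ht.1, ht.2⟩).hasDerivWithinAt
        · exact (hf'c.mono (uIcc_subset_Icc hx ⟨hr.le, le_rfl⟩)).intervalIntegrable
      have h2 : ‖f r - f x‖ ≤ ∫ t in x..r, ‖f' t‖ := by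
        rw [← hsub]
        exact intervalIntegral.norm_integral_le_integral_norm hx.2
      have h3 : ‖f x‖ - ‖f r‖ ≤ ‖f x - f r‖ := norm_sub_norm_le _ _
      rw [norm_sub_rev] at h3
      simp only [hFdef]
      linarith
    have hgm : AEStronglyMeasurable (fun t => ‖f' t‖) (volume.restrict (Ioo 0 r)) :=
      (hgc.mono Ioo_subset_Icc_self).aestronglyMeasurable measurableSet_Ioo
    have hFderiv : ∀ x ∈ Ioo (0:ℝ) r, HasDerivAt F (-‖f' x‖) x := by
      intro x hx
      have h1 : HasDerivAt (fun u => ∫ t in u..r, ‖f' t‖) (-‖f' x‖) x :=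
        intervalIntegral.integral_hasDerivAt_left
          (hg_ii x (Ioo_subset_Icc_self hx) r ⟨hr.le, le_rfl⟩)
          ⟨Ioo 0 r, Ioo_mem_nhds hx.1 hx.2, hgm⟩
          (hgc.continuousAt (Icc_mem_nhds hx.1 hx.2))
      exact HasDerivAt.const_add _ h1
    have hFpc : ContinuousOn (fun x => F x ^ p) (Icc 0 r) :=
      hFc.rpow_const (fun x hx => Or.inl (hFpos x hx).ne')
    have hFp1c : ContinuousOn (fun x => F x ^ (p-1)) (Icc 0 r) :=
      hFc.rpow_const (fun x hx => Or.inl (hFpos x hx).ne')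
    have hΦc : ContinuousOn (fun x => x ^ (q+1) * F x ^ (p-1) * ‖f' x‖) (Icc 0 r) :=
      (hxq1_c.mul hFp1c).mul hgc
    have hΦ_ii : IntervalIntegrable (fun x => x ^ (q+1) * F x ^ (p-1) * ‖f' x‖) volume 0 r :=
      ContinuousOn.intervalIntegrable (by rwa [huIcc])
    have hΦ0 : ∀ x ∈ Icc (0:ℝ) r, 0 ≤ x ^ (q+1) * F x ^ (p-1) * ‖f' x‖ := by
      intro x hx
      exact mul_nonneg (mul_nonneg (Real.rpow_nonneg hx.1 _)
        (Real.rpow_nonneg (hFpos x hx).le _)) (norm_nonneg _)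
    -- integrability of x^q * F^p on (0, r]
    have hdom : IntegrableOn (fun x : ℝ => F 0 ^ p * x ^ q) (Ioc 0 r) := hxq_int.const_mul _
    have hhc : ContinuousOn (fun x : ℝ => x ^ q * F x ^ p) (Ioc 0 r) :=
      fun x hx => (hxq_c x hx).mul ((hFpc.mono Ioc_subset_Icc_self) x hx)
    have hh_intOn : IntegrableOn (fun x : ℝ => x ^ q * F x ^ p) (Ioc 0 r) := by
      apply Integrable.mono' hdom (hhc.aestronglyMeasurable measurableSet_Ioc)
      rw [ae_restrict_iff' measurableSet_Ioc]
      refine Filter.Eventually.of_forall fun x hx => ?_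
      have hxr : x ∈ Icc (0:ℝ) r := ⟨hx.1.le, hx.2⟩
      have h1 : 0 ≤ x ^ q * F x ^ p :=
        mul_nonneg (Real.rpow_nonneg hx.1.le _) (Real.rpow_nonneg (hFpos x hxr).le _)
      rw [Real.norm_of_nonneg h1]
      have h2 : F x ^ p ≤ F 0 ^ p := Real.rpow_le_rpow (hFpos x hxr).le (hM x hxr) hp0.le
      calc x ^ q * F x ^ p ≤ x ^ q * F 0 ^ p :=
            mul_le_mul_of_nonneg_left h2 (Real.rpow_nonneg hx.1.le _)
        _ = F 0 ^ p * x ^ q := mul_comm _ _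
    have hh_ii : IntervalIntegrable (fun x : ℝ => x ^ q * F x ^ p) volume 0 r :=
      (intervalIntegrable_iff_integrableOn_Ioc_of_le hr.le).2 hh_intOn
    -- integrability of the LHS integrand
    have hlhs_ii : IntervalIntegrable (fun x : ℝ => x ^ q * ‖f x‖ ^ p) volume 0 r := by
      apply (intervalIntegrable_iff_integrableOn_Ioc_of_le hr.le).2
      apply Integrable.mono' hdom
      · apply ContinuousOn.aestronglyMeasurable ?_ measurableSet_Ioc
        exact fun x hx => (hxq_c x hx).mul
          (((hfc.norm.rpow_const (fun y _ => Or.inr hp0.le)).mono Ioc_subset_Icc_self) x hx)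
      · rw [ae_restrict_iff' measurableSet_Ioc]
        refine Filter.Eventually.of_forall fun x hx => ?_
        have hxr : x ∈ Icc (0:ℝ) r := ⟨hx.1.le, hx.2⟩
        have h1 : 0 ≤ x ^ q * ‖f x‖ ^ p :=
          mul_nonneg (Real.rpow_nonneg hx.1.le _) (Real.rpow_nonneg (norm_nonneg _) _)
        rw [Real.norm_of_nonneg h1]
        have h2 : ‖f x‖ ^ p ≤ F 0 ^ p :=
          Real.rpow_le_rpow (norm_nonneg _) ((hfF x hxr).trans (hM x hxr)) hp0.le
        calc x ^ q * ‖f x‖ ^ p ≤ x ^ q * F 0 ^ p :=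
              mul_le_mul_of_nonneg_left h2 (Real.rpow_nonneg hx.1.le _)
          _ = F 0 ^ p * x ^ q := mul_comm _ _
    -- FTC on [a, r]
    have hGderiv : ∀ x ∈ Ioo (0:ℝ) r, HasDerivAt (fun y : ℝ => y ^ (q+1) * F y ^ p)
        ((q+1) * (x ^ q * F x ^ p) - p * (x ^ (q+1) * F x ^ (p-1) * ‖f' x‖)) x := by
      intro x hx
      have h1 : HasDerivAt (fun y : ℝ => y ^ (q+1)) ((q+1) * x ^ q) x := by
        have := Real.hasDerivAt_rpow_const (x := x) (p := q+1) (Or.inl hx.1.ne')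
        simpa using this
      have h2 : HasDerivAt (fun y => F y ^ p) (-‖f' x‖ * p * F x ^ (p-1)) x :=
        (hFderiv x hx).rpow_const (Or.inl (hFpos x (Ioo_subset_Icc_self hx)).ne')
      have h3 : HasDerivAt (fun y : ℝ => y ^ (q+1) * F y ^ p)
          ((q+1) * x ^ q * F x ^ p + x ^ (q+1) * (-‖f' x‖ * p * F x ^ (p-1))) x := h1.mul h2
      convert h3 using 1
      ring
    have hGc : ContinuousOn (fun y : ℝ => y ^ (q+1) * F y ^ p) (Icc 0 r) := hxq1_c.mul hFpc
    have hftc : ∀ a ∈ Ioc (0:ℝ) r,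
        (∫ x in a..r, ((q+1) * (x ^ q * F x ^ p) - p * (x ^ (q+1) * F x ^ (p-1) * ‖f' x‖)))
          = r ^ (q+1) * F r ^ p - a ^ (q+1) * F a ^ p := by
      intro a ha
      have hsub1 : uIcc a r ⊆ uIcc (0:ℝ) r := by
        rw [uIcc_of_le ha.2, huIcc]; exact Icc_subset_Icc ha.1.le le_rfl
      apply intervalIntegral.integral_eq_sub_of_hasDeriv_right_of_le ha.2
        (hGc.mono (Icc_subset_Icc ha.1.le le_rfl))
      · intro x hx
        exact (hGderiv x ⟨lt_trans ha.1 hx.1, hx.2⟩).hasDerivWithinAt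
      · exact ((hh_ii.mono_set hsub1).const_mul (q+1)).sub
          ((hΦ_ii.mono_set hsub1).const_mul p)
    have hkey_a : ∀ a ∈ Ioc (0:ℝ) r, (q+1) * (∫ x in a..r, x ^ q * F x ^ p) ≤
        r ^ (q+1) * F r ^ p + p * ∫ x in (0:ℝ)..r, x ^ (q+1) * F x ^ (p-1) * ‖f' x‖ := by
      intro a ha
      have hsub1 : uIcc a r ⊆ uIcc (0:ℝ) r := by
        rw [uIcc_of_le ha.2, huIcc]; exact Icc_subset_Icc ha.1.le le_rfl
      have hsub2 : uIcc (0:ℝ) a ⊆ uIcc (0:ℝ) r := by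
        rw [uIcc_of_le ha.1.le, huIcc]; exact Icc_subset_Icc le_rfl ha.2
      have h_ii_ar := hh_ii.mono_set hsub1
      have hΦ_ii_ar := hΦ_ii.mono_set hsub1
      have h1 := hftc a ha
      rw [intervalIntegral.integral_sub (h_ii_ar.const_mul _) (hΦ_ii_ar.const_mul _),
        intervalIntegral.integral_const_mul, intervalIntegral.integral_const_mul] at h1
      have h2 : 0 ≤ a ^ (q+1) * F a ^ p :=
        mul_nonneg (Real.rpow_nonneg ha.1.le _)
          (Real.rpow_nonneg (hFpos a ⟨ha.1.le, ha.2⟩).le _)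
      have h3 := intervalIntegral.integral_add_adjacent_intervals
        (hΦ_ii.mono_set hsub2) hΦ_ii_ar
      have h4 : 0 ≤ ∫ x in (0:ℝ)..a, x ^ (q+1) * F x ^ (p-1) * ‖f' x‖ :=
        intervalIntegral.integral_nonneg ha.1.le
          (fun x hx => hΦ0 x ⟨hx.1, hx.2.trans ha.2⟩)
      have h5 : p * (∫ x in a..r, x ^ (q+1) * F x ^ (p-1) * ‖f' x‖) ≤
          p * ∫ x in (0:ℝ)..r, x ^ (q+1) * F x ^ (p-1) * ‖f' x‖ := by
        apply mul_le_mul_of_nonneg_left _ hp0.le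
        linarith
      linarith
    -- pass to the limit a → 0⁺
    have hA_le : (q+1) * (∫ x in (0:ℝ)..r, x ^ q * F x ^ p) ≤
        r ^ (q+1) * F r ^ p + p * ∫ x in (0:ℝ)..r, x ^ (q+1) * F x ^ (p-1) * ‖f' x‖ := by
      set sn : ℕ → Set ℝ := fun n => Ioc (r/((n:ℝ)+1)) r with hsndef
      have hsn : ∀ n : ℕ, r / ((n:ℝ)+1) ∈ Ioc (0:ℝ) r := by
        intro n
        have h01 : (0:ℝ) ≤ (n:ℝ) := Nat.cast_nonneg n
        constructor
        · positivity
        · apply div_le_self hr.le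
          linarith
      have hmono : Monotone sn := by
        intro m n hmn
        apply Ioc_subset_Ioc _ le_rfl
        gcongr
      have hUnion : ⋃ n : ℕ, sn n = Ioc (0:ℝ) r := by
        ext x
        simp only [hsndef, mem_iUnion, mem_Ioc]
        constructor
        · rintro ⟨n, h1, h2⟩
          have h01 : (0:ℝ) ≤ (n:ℝ) := Nat.cast_nonneg n
          exact ⟨lt_trans (by positivity) h1, h2⟩
        · rintro ⟨h1, h2⟩
          obtain ⟨n, hn⟩ := exists_nat_gt (r / x)
          refine ⟨n, ?_, h2⟩
          rw [div_lt_iff₀ (by positivity)]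
          calc r < ((n:ℝ)+1) * x := by
                apply (div_lt_iff₀ h1).1
                exact hn.trans (lt_add_one _)
            _ = x * ((n:ℝ)+1) := mul_comm _ _
      have htend := MeasureTheory.tendsto_setIntegral_of_monotone
        (fun n : ℕ => measurableSet_Ioc) hmono (by rw [hUnion]; exact hh_intOn)
      rw [hUnion] at htend
      have hlim : (∫ x in (0:ℝ)..r, x ^ q * F x ^ p) ≤
          (r ^ (q+1) * F r ^ p + p * ∫ x in (0:ℝ)..r, x ^ (q+1) * F x ^ (p-1) * ‖f' x‖) / (q+1) := by
        rw [intervalIntegral.integral_of_le hr.le]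
        apply le_of_tendsto htend
        refine Filter.Eventually.of_forall fun n => ?_
        have h1 : (∫ x in sn n, x ^ q * F x ^ p) = ∫ x in (r/((n:ℝ)+1))..r, x ^ q * F x ^ p := by
          rw [intervalIntegral.integral_of_le (hsn n).2]
        rw [h1, le_div_iff₀ hq1]
        have := hkey_a _ (hsn n)
        linarith
      rw [le_div_iff₀ hq1] at hlim
      linarith
    -- Hölder
    have hJB : (∫ x in (0:ℝ)..r, x ^ (q+1) * F x ^ (p-1) * ‖f' x‖) ≤
        (∫ x in (0:ℝ)..r, x ^ q * F x ^ p) ^ (1-1/p) * Bv := by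
      rcases eq_or_lt_of_le hp with hp1 | hp1
      · -- p = 1
        have hp1' : p = 1 := hp1.symm
        have he : ∀ x ∈ uIcc (0:ℝ) r,
            x ^ (q+1) * F x ^ (p-1) * ‖f' x‖ = x ^ (p*(s+1)) * ‖f' x‖ ^ p := by
          intro x hx
          rw [hqdef, hp1']
          norm_num
        rw [intervalIntegral.integral_congr he]
        have h0 : (1:ℝ) - 1/p = 0 := by rw [hp1']; norm_num
        have hBv1 : Bv = Bint := by rw [hBvdef, hp1']; norm_num
        rw [h0, Real.rpow_zero, one_mul, hBv1, hBintdef]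
      · -- 1 < p
        have hpq : (Real.conjExponent p).HolderConjugate p :=
          (Real.HolderConjugate.conjExponent hp1).symm
        set p' := Real.conjExponent p with hp'def
        have hp'pos : 0 < p' := hpq.pos
        have hinv : 1/p' + 1/p = 1 := by
          have := hpq.inv_add_inv_eq_one
          rwa [inv_eq_one_div, inv_eq_one_div] at this
        have hp'div : p / p' = p - 1 := hpq.symm.div_conj_eq_sub_one
        set μ := volume.restrict (Ioc (0:ℝ) r) with hμdef
        set u := fun x : ℝ => ‖x ^ q * F x ^ p‖ ^ (1/p') with hudef
        set v := fun x : ℝ => ‖x ^ (p*(s+1)) * ‖f' x‖ ^ p‖ ^ (1/p) with hvdef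
        have hu_mem : MemLp u (ENNReal.ofReal p') μ := by
          have h1 : MemLp (fun x : ℝ => x ^ q * F x ^ p) 1 μ :=
            memLp_one_iff_integrable.2 hh_intOn
          have h2 := h1.norm_rpow_div (ENNReal.ofReal (1/p'))
          rw [ENNReal.toReal_ofReal (by positivity)] at h2
          have h3 : (1:ENNReal) / ENNReal.ofReal (1/p') = ENNReal.ofReal p' := by
            rw [one_div, one_div, ENNReal.ofReal_inv_of_pos hp'pos, inv_inv]
          rwa [h3] at h2
        have hv_mem : MemLp v (ENNReal.ofReal p) μ := by
          have h1 : MemLp (fun x : ℝ => x ^ (p*(s+1)) * ‖f' x‖ ^ p) 1 μ :=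
            memLp_one_iff_integrable.2 hk_intOn
          have h2 := h1.norm_rpow_div (ENNReal.ofReal (1/p))
          rw [ENNReal.toReal_ofReal (by positivity)] at h2
          have h3 : (1:ENNReal) / ENNReal.ofReal (1/p) = ENNReal.ofReal p := by
            rw [one_div, one_div, ENNReal.ofReal_inv_of_pos hp0, inv_inv]
          rwa [h3] at h2
        have hH := MeasureTheory.integral_mul_le_Lp_mul_Lq_of_nonneg hpq
          (Filter.Eventually.of_forall fun x => Real.rpow_nonneg (norm_nonneg _) _)
          (Filter.Eventually.of_forall fun x => Real.rpow_nonneg (norm_nonneg _) _)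
          hu_mem hv_mem
        have e1 : ∫ x, u x * v x ∂μ = ∫ x in (0:ℝ)..r, x ^ (q+1) * F x ^ (p-1) * ‖f' x‖ := by
          rw [intervalIntegral.integral_of_le hr.le]
          apply setIntegral_congr_fun measurableSet_Ioc
          intro x hx
          have hx0 : (0:ℝ) < x := hx.1
          have hF0 : 0 ≤ F x := (hFpos x ⟨hx0.le, hx.2⟩).le
          have hg0 : (0:ℝ) ≤ ‖f' x‖ := norm_nonneg _
          have hxq0 : 0 ≤ x ^ q := Real.rpow_nonneg hx0.le q
          have hh0 : 0 ≤ x ^ q * F x ^ p := mul_nonneg hxq0 (Real.rpow_nonneg hF0 _)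
          have hk0 : 0 ≤ x ^ (p*(s+1)) * ‖f' x‖ ^ p :=
            mul_nonneg (Real.rpow_nonneg hx0.le _) (Real.rpow_nonneg hg0 _)
          simp only [hudef, hvdef]
          rw [Real.norm_of_nonneg hh0, Real.norm_of_nonneg hk0,
            Real.mul_rpow hxq0 (Real.rpow_nonneg hF0 _),
            Real.mul_rpow (Real.rpow_nonneg hx0.le _) (Real.rpow_nonneg hg0 _),
            ← Real.rpow_mul hx0.le, ← Real.rpow_mul hF0, ← Real.rpow_mul hx0.le,
            ← Real.rpow_mul hg0]
          have e2 : p * (1/p') = p - 1 := by rw [mul_one_div]; exact hp'div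
          have e3 : p * (1/p) = 1 := mul_one_div_cancel hp0.ne'
          have e4 : q * (1/p') + (p*(s+1)) * (1/p) = q + 1 := by
            have h5 : (1:ℝ)/p' = 1 - 1/p := by linarith
            rw [h5, hqdef]
            field_simp
            ring
          rw [e2, e3, Real.rpow_one]
          calc x ^ (q * (1/p')) * F x ^ (p-1) * (x ^ ((p*(s+1)) * (1/p)) * ‖f' x‖)
              = x ^ (q * (1/p')) * x ^ ((p*(s+1)) * (1/p)) * (F x ^ (p-1) * ‖f' x‖) := by ring
            _ = x ^ (q * (1/p') + (p*(s+1)) * (1/p)) * (F x ^ (p-1) * ‖f' x‖) := by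
                rw [Real.rpow_add hx0]
            _ = x ^ (q+1) * F x ^ (p-1) * ‖f' x‖ := by rw [e4]; ring
        have e5 : ∫ x, u x ^ p' ∂μ = ∫ x in (0:ℝ)..r, x ^ q * F x ^ p := by
          rw [intervalIntegral.integral_of_le hr.le]
          apply setIntegral_congr_fun measurableSet_Ioc
          intro x hx
          have hh0 : 0 ≤ x ^ q * F x ^ p :=
            mul_nonneg (Real.rpow_nonneg hx.1.le _)
              (Real.rpow_nonneg (hFpos x ⟨hx.1.le, hx.2⟩).le _)
          simp only [hudef]
          rw [← Real.rpow_mul (norm_nonneg _), one_div, inv_mul_cancel₀ hp'pos.ne',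
            Real.rpow_one, Real.norm_of_nonneg hh0]
        have e6 : ∫ x, v x ^ p ∂μ = Bint := by
          rw [hBintdef, intervalIntegral.integral_of_le hr.le]
          apply setIntegral_congr_fun measurableSet_Ioc
          intro x hx
          have hk0 : 0 ≤ x ^ (p*(s+1)) * ‖f' x‖ ^ p :=
            mul_nonneg (Real.rpow_nonneg hx.1.le _) (Real.rpow_nonneg (norm_nonneg _) _)
          simp only [hvdef]
          rw [← Real.rpow_mul (norm_nonneg _), one_div, inv_mul_cancel₀ hp0.ne',
            Real.rpow_one, Real.norm_of_nonneg hk0]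
        rw [e1, e5, e6] at hH
        have e7 : (1:ℝ)/p' = 1 - 1/p := by linarith
        rw [e7] at hH
        exact hH
    -- combine
    have hFr : F r = ‖f r‖ + ε := by simp [hFdef]
    set A := ∫ x in (0:ℝ)..r, x ^ q * F x ^ p with hAdef
    have hA0 : 0 ≤ A := by
      rw [hAdef]
      apply intervalIntegral.integral_nonneg hr.le
      intro x hx
      exact mul_nonneg (Real.rpow_nonneg hx.1 _) (Real.rpow_nonneg (hFpos x hx).le _)
    set T : ℝ := ‖f r‖ + ε with hTdef
    have hT0 : 0 < T := by
      have := norm_nonneg (f r)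
      rw [hTdef]; linarith
    have hmain : (q+1) * A ≤ r^(q+1) * T^p + p * (A^(1-1/p) * Bv) := by
      have h1 := hA_le
      rw [hFr] at h1
      have h2 : p * (∫ x in (0:ℝ)..r, x ^ (q+1) * F x ^ (p-1) * ‖f' x‖) ≤
          p * (A^(1-1/p) * Bv) := mul_le_mul_of_nonneg_left hJB hp0.le
      linarith
    have goal' : A ^ (1/p) ≤ C * (T + Bv) := by
      rcases le_total (r^(q+1) * T^p) (p * (A^(1-1/p) * Bv)) with hcase | hcase
      · rcases eq_or_lt_of_le hA0 with hA0' | hApos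
        · rw [← hA0', Real.zero_rpow (by positivity : (1:ℝ)/p ≠ 0)]
          positivity
        · have h1 : (q+1) * A ≤ 2 * (p * (A^(1-1/p) * Bv)) := by linarith
          have hrp : 0 < A ^ ((1:ℝ)/p - 1) := Real.rpow_pos_of_pos hApos _
          have h2 := mul_le_mul_of_nonneg_right h1 hrp.le
          have hAp : A ^ ((1:ℝ)/p) = A * A ^ ((1:ℝ)/p - 1) := by
            have h := Real.rpow_add hApos 1 (1/p - 1)
            rw [show (1:ℝ) + (1/p - 1) = 1/p by ring, Real.rpow_one] at h
            exact h
          have h3 : A^(1-1/p) * A ^ ((1:ℝ)/p - 1) = 1 := by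
            rw [← Real.rpow_add hApos, show (1-1/p) + ((1:ℝ)/p - 1) = 0 by ring,
              Real.rpow_zero]
          have e1 : (q+1) * A * A ^ ((1:ℝ)/p - 1) = (q+1) * A ^ ((1:ℝ)/p) := by
            rw [hAp]; ring
          have e2 : 2 * (p * (A^(1-1/p) * Bv)) * A ^ ((1:ℝ)/p - 1) = 2*p*Bv := by
            calc 2 * (p * (A^(1-1/p) * Bv)) * A ^ ((1:ℝ)/p - 1)
                = 2*p*Bv*(A^(1-1/p) * A ^ ((1:ℝ)/p - 1)) := by ring
              _ = 2*p*Bv := by rw [h3, mul_one]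
          rw [e1, e2] at h2
          have h4 : A^((1:ℝ)/p) ≤ C1 * Bv := by
            rw [hC1def, div_mul_eq_mul_div, le_div_iff₀ hq1]
            linarith
          apply h4.trans
          apply mul_le_mul (le_max_left _ _) _ hBv0 hC.le
          linarith
      · have h1 : (q+1)*A ≤ 2*(r^(q+1)*T^p) := by linarith
        have h2 : A ≤ 2*r^(q+1)/(q+1) * T^p := by
          rw [div_mul_eq_mul_div, le_div_iff₀ hq1]
          linarith
        have h3 : A^((1:ℝ)/p) ≤ (2*r^(q+1)/(q+1) * T^p)^((1:ℝ)/p) :=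
          Real.rpow_le_rpow hA0 h2 (by positivity)
        have h4 : (2*r^(q+1)/(q+1) * T^p)^((1:ℝ)/p) = C2 * T := by
          rw [Real.mul_rpow (by positivity) (Real.rpow_nonneg hT0.le _),
            ← Real.rpow_mul hT0.le, mul_one_div_cancel hp0.ne', Real.rpow_one, hC2def]
        rw [h4] at h3
        apply h3.trans
        apply mul_le_mul (le_max_right _ _) _ hT0.le hC.le
        linarith
    calc (∫ x in (0:ℝ)..r, x ^ q * ‖f x‖ ^ p) ^ (1/p) ≤ A ^ (1/p) := by
          apply Real.rpow_le_rpow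
            (intervalIntegral.integral_nonneg hr.le fun x hx =>
              mul_nonneg (Real.rpow_nonneg hx.1 _) (Real.rpow_nonneg (norm_nonneg _) _))
            ?_ (by positivity)
          rw [hAdef]
          apply intervalIntegral.integral_mono_on hr.le hlhs_ii hh_ii
          intro x hx
          exact mul_le_mul_of_nonneg_left
            (Real.rpow_le_rpow (norm_nonneg _) (hfF x hx) hp0.le)
            (Real.rpow_nonneg hx.1 _)
      _ ≤ C * (T + Bv) := goal'
      _ = C * ((‖f r‖ + ε) + Bv) := by rw [hTdef]
  -- let ε → 0⁺
  have htendlim : Filter.Tendsto (fun ε : ℝ => C * ((‖f r‖ + ε) + Bv))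
      (nhdsWithin 0 (Ioi 0)) (nhds (C * ((‖f r‖ + 0) + Bv))) := by
    apply Filter.Tendsto.mono_left _ nhdsWithin_le_nhds
    exact Continuous.tendsto (continuous_const.mul
      ((continuous_const.add continuous_id).add continuous_const)) 0
  have hfin := ge_of_tendsto htendlim (by
    filter_upwards [self_mem_nhdsWithin] with ε hε
    exact key ε hε)
  simpa using hfin
end
end

section
/- Let p ≥ 1 and s > −1/p be real numbers. There exists a constant C > 0, depending only on p and s, such that for every continuously differentiable compactly supported function f : [0,∞) → ℂ: (∫₀^∞ x^{ps} |f(x)|^p dx)^{1/p} ≤ C (∫₀^∞ x^{p(s+1)} |f'(x)|^p dx)^{1/p}. -/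
open MeasureTheory Metric Set

noncomputable section

section HardyAux
open scoped ENNReal

lemma lint_rpow_Ioo {b t : ℝ} (hb : -1 < b) (ht : 0 < t) :
    ∫⁻ x in Ioo (0:ℝ) t, ENNReal.ofReal (x ^ b) = ENNReal.ofReal (t ^ (b+1) / (b+1)) := by
  have hint : IntegrableOn (fun x : ℝ => x ^ b) (Ioo 0 t) := by
    have := (intervalIntegral.intervalIntegrable_rpow' (a := 0) (b := t) hb)
    exact ((intervalIntegrable_iff_integrableOn_Ioc_of_le ht.le).mp this).mono_set
      Ioo_subset_Ioc_self
  rw [← ofReal_integral_eq_lintegral_ofReal hint ?nn]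
  case nn =>
    filter_upwards [ae_restrict_mem measurableSet_Ioo] with x hx
    exact Real.rpow_nonneg hx.1.le b
  congr 1
  rw [← integral_Ioc_eq_integral_Ioo, ← intervalIntegral.integral_of_le ht.le,
    integral_rpow (Or.inl hb)]
  rw [Real.zero_rpow (by linarith)]
  ring

lemma lint_rpow_Ioi {c x : ℝ} (hc : c < -1) (hx : 0 < x) :
    ∫⁻ t in Ioi x, ENNReal.ofReal (t ^ c) = ENNReal.ofReal (-x ^ (c+1) / (c+1)) := by
  rw [← ofReal_integral_eq_lintegral_ofReal (integrableOn_Ioi_rpow_of_lt hc hx) ?nn]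
  case nn =>
    filter_upwards [ae_restrict_mem measurableSet_Ioi] with t ht
    exact Real.rpow_nonneg (hx.trans ht).le c
  rw [integral_Ioi_rpow_of_lt hc hx]

lemma fubini_step (ψ : ℝ → ℝ≥0∞) (hψ : Measurable ψ) (b R : ℝ) (hR : 0 < R) :
    ∫⁻ x in Ioi (0:ℝ), ENNReal.ofReal (x ^ b) * ∫⁻ t in Ioc x R, ψ t
      = ∫⁻ t in Ioc (0:ℝ) R, ψ t * ∫⁻ x in Ioo (0:ℝ) t, ENNReal.ofReal (x ^ b) := by
  have hmx : Measurable fun x : ℝ => ENNReal.ofReal (x ^ b) := by fun_prop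
  have h1 : ∀ x ∈ Ioi (0:ℝ), ENNReal.ofReal (x ^ b) * ∫⁻ t in Ioc x R, ψ t
      = ∫⁻ t in Ioi (0:ℝ), ENNReal.ofReal (x ^ b) * (Ioc x R).indicator ψ t := by
    intro x hx
    rw [lintegral_const_mul _ (hψ.indicator measurableSet_Ioc)]
    congr 1
    have he : Ioc x R ∩ Ioi 0 = Ioc x R :=
      inter_eq_left.mpr (fun t (ht : t ∈ Ioc x R) => lt_trans hx ht.1)
    rw [lintegral_indicator measurableSet_Ioc, Measure.restrict_restrict measurableSet_Ioc, he]
  rw [setLIntegral_congr_fun measurableSet_Ioi h1]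
  have hmeas : Measurable (Function.uncurry fun x t : ℝ =>
      ENNReal.ofReal (x ^ b) * (Ioc x R).indicator ψ t) := by
    have heq : (Function.uncurry fun x t : ℝ => ENNReal.ofReal (x ^ b) * (Ioc x R).indicator ψ t)
        = fun p : ℝ × ℝ => ENNReal.ofReal (p.1 ^ b) *
            ({q : ℝ × ℝ | q.1 < q.2 ∧ q.2 ≤ R}.indicator (fun q => ψ q.2) p) := by
      ext p
      simp only [Function.uncurry, Set.indicator, mem_Ioc, mem_setOf_eq]
    rw [heq]
    have hS : MeasurableSet {q : ℝ × ℝ | q.1 < q.2 ∧ q.2 ≤ R} :=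
      (measurableSet_lt measurable_fst measurable_snd).inter (measurable_snd measurableSet_Iic)
    exact (hmx.comp measurable_fst).mul ((hψ.comp measurable_snd).indicator hS)
  rw [lintegral_lintegral_swap hmeas.aemeasurable]
  have hsplit : ∀ G : ℝ → ℝ≥0∞, (∀ t ∈ Ioi R, G t = 0) →
      ∫⁻ t in Ioi (0:ℝ), G t = ∫⁻ t in Ioc (0:ℝ) R, G t := by
    intro G hG
    rw [show Ioi (0:ℝ) = Ioc 0 R ∪ Ioi R from (Ioc_union_Ioi_eq_Ioi hR.le).symm,
      lintegral_union measurableSet_Ioi (Ioc_disjoint_Ioi le_rfl),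
      setLIntegral_congr_fun measurableSet_Ioi hG]
    simp
  have h2 : ∀ t ∈ Ioi R, (∫⁻ x in Ioi (0:ℝ),
      ENNReal.ofReal (x ^ b) * (Ioc x R).indicator ψ t) = 0 := by
    intro t ht
    have : ∀ x ∈ Ioi (0:ℝ), ENNReal.ofReal (x ^ b) * (Ioc x R).indicator ψ t = 0 := by
      intro x hx
      rw [indicator_of_notMem (fun h => absurd h.2 (not_le.mpr ht)), mul_zero]
    rw [setLIntegral_congr_fun measurableSet_Ioi this]
    simp
  rw [hsplit (fun t => ∫⁻ x in Ioi (0:ℝ),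
      ENNReal.ofReal (x ^ b) * (Ioc x R).indicator ψ t) h2]
  refine setLIntegral_congr_fun measurableSet_Ioc (fun t ht => ?_)
  have h3 : ∀ x ∈ Ioi (0:ℝ), ENNReal.ofReal (x ^ b) * (Ioc x R).indicator ψ t
      = (Iio t).indicator (fun x => ENNReal.ofReal (x ^ b) * ψ t) x := by
    intro x hx
    rcases lt_or_ge x t with h | h
    · rw [indicator_of_mem (mem_Iio.mpr h), indicator_of_mem (mem_Ioc.mpr ⟨h, ht.2⟩)]
    · rw [indicator_of_notMem (fun hc : t ∈ Ioc x R => absurd hc.1 (not_lt.mpr h)), mul_zero,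
        indicator_of_notMem (fun hc : x ∈ Iio t => absurd hc (not_lt.mpr h))]
  rw [setLIntegral_congr_fun measurableSet_Ioi h3,
    lintegral_indicator measurableSet_Iio, Measure.restrict_restrict measurableSet_Iio,
    show Iio t ∩ Ioi (0:ℝ) = Ioo 0 t by rw [inter_comm, Ioi_inter_Iio],
    lintegral_mul_const _ hmx, mul_comm]

lemma hardy_deriv_contOn (f : ℝ → ℂ) (hf : ContDiffOn ℝ 1 f (Ici 0)) :
    ContinuousOn (deriv f) (Ioi 0) := by
  have h0 : ContinuousOn (derivWithin f (Ici 0)) (Ici 0) :=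
    hf.continuousOn_derivWithin (uniqueDiffOn_Ici 0) le_rfl
  exact (h0.mono Ioi_subset_Ici_self).congr fun x hx =>
    (derivWithin_of_mem_nhds (Ici_mem_nhds hx)).symm

lemma hardy_hasDerivAt (f : ℝ → ℂ) (hf : ContDiffOn ℝ 1 f (Ici 0)) {t : ℝ} (ht : 0 < t) :
    HasDerivAt f (deriv f t) t := by
  have h1 : DifferentiableWithinAt ℝ f (Ici 0) t :=
    (hf.differentiableOn one_ne_zero) t ht.le
  exact (h1.differentiableAt (Ici_mem_nhds ht)).hasDerivAt

lemma hardy_ftc_bound (f : ℝ → ℂ) (hf : ContDiffOn ℝ 1 f (Ici 0)) (R : ℝ)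
    (hfR : ∀ x, R ≤ x → f x = 0) {x : ℝ} (hx : 0 < x) :
    ENNReal.ofReal ‖f x‖ ≤ ∫⁻ t in Ioc x R, ENNReal.ofReal ‖deriv f t‖ := by
  rcases le_or_gt R x with hxR | hxR
  · rw [hfR x hxR]; simp
  · have hab : x ≤ R := hxR.le
    have hsub : uIcc x R ⊆ Ioi 0 := by
      rw [uIcc_of_le hab]
      exact fun t ht => lt_of_lt_of_le hx ht.1
    have hint : IntervalIntegrable (deriv f) volume x R :=
      ((hardy_deriv_contOn f hf).mono hsub).intervalIntegrable
    have key : ∫ t in x..R, deriv f t = f R - f x :=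
      intervalIntegral.integral_eq_sub_of_hasDerivAt
        (fun t ht => hardy_hasDerivAt f hf (hsub ht)) hint
    have hfx : ‖f x‖ = ‖∫ t in x..R, deriv f t‖ := by
      rw [key, hfR R le_rfl, zero_sub, norm_neg]
    have hbd : ‖f x‖ ≤ ∫ t in Ioc x R, ‖deriv f t‖ := by
      rw [hfx, ← intervalIntegral.integral_of_le hab]
      exact intervalIntegral.norm_integral_le_integral_norm hab
    calc ENNReal.ofReal ‖f x‖ ≤ ENNReal.ofReal (∫ t in Ioc x R, ‖deriv f t‖) :=
          ENNReal.ofReal_le_ofReal hbd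
      _ = ∫⁻ t in Ioc x R, ENNReal.ofReal ‖deriv f t‖ := by
          refine ofReal_integral_eq_lintegral_ofReal ?_ ?_
          · exact (intervalIntegrable_iff_integrableOn_Ioc_of_le hab).mp hint.norm
          · exact ae_of_all _ fun t => norm_nonneg _

lemma hardy_key (p s : ℝ) (hp : 1 ≤ p) (hs : -(1/p) < s) :
    ∃ K : ℝ, 0 < K ∧ ∀ f : ℝ → ℂ, ContDiffOn ℝ 1 f (Ici 0) →
      ∀ R : ℝ, 0 < R → (∀ x : ℝ, R ≤ x → f x = 0) →
      ∫⁻ x in Ioi (0:ℝ), ENNReal.ofReal (x ^ (p*s) * ‖f x‖ ^ p)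
        ≤ ENNReal.ofReal K * ∫⁻ x in Ioi (0:ℝ),
            ENNReal.ofReal (x ^ (p*(s+1)) * ‖deriv f x‖ ^ p) := by
  rcases eq_or_lt_of_le hp with hp1 | hp1
  · -- p = 1
    subst hp1
    have hs' : -1 < s := by simpa using hs
    have hs1 : (0:ℝ) < s + 1 := by linarith
    refine ⟨1/(s+1), by positivity, ?_⟩
    intro f hf R hR hfR
    have hΦ : Measurable fun t => ENNReal.ofReal ‖deriv f t‖ :=
      (measurable_deriv f).norm.ennreal_ofReal
    simp only [one_mul, Real.rpow_one]
    calc ∫⁻ x in Ioi (0:ℝ), ENNReal.ofReal (x ^ s * ‖f x‖)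
        ≤ ∫⁻ x in Ioi (0:ℝ), ENNReal.ofReal (x ^ s) *
            ∫⁻ t in Ioc x R, ENNReal.ofReal ‖deriv f t‖ := by
          refine setLIntegral_mono' measurableSet_Ioi fun x hx => ?_
          rw [ENNReal.ofReal_mul (Real.rpow_nonneg (le_of_lt hx) s)]
          exact mul_le_mul_right (hardy_ftc_bound f hf R hfR hx) _
      _ = ∫⁻ t in Ioc (0:ℝ) R, ENNReal.ofReal ‖deriv f t‖ *
            ∫⁻ x in Ioo (0:ℝ) t, ENNReal.ofReal (x ^ s) := fubini_step _ hΦ s R hR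
      _ = ∫⁻ t in Ioc (0:ℝ) R, ENNReal.ofReal (1/(s+1)) *
            ENNReal.ofReal (t ^ (s+1) * ‖deriv f t‖) := by
          refine setLIntegral_congr_fun measurableSet_Ioc (fun t ht => ?_)
          rw [lint_rpow_Ioo hs' ht.1, ← ENNReal.ofReal_mul (norm_nonneg _),
            show ‖deriv f t‖ * (t^(s+1)/(s+1)) = (1/(s+1)) * (t^(s+1) * ‖deriv f t‖) by ring,
            ENNReal.ofReal_mul (by positivity : (0:ℝ) ≤ 1/(s+1))]
      _ = ENNReal.ofReal (1/(s+1)) *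
            ∫⁻ t in Ioc (0:ℝ) R, ENNReal.ofReal (t ^ (s+1) * ‖deriv f t‖) :=
          lintegral_const_mul' _ _ ENNReal.ofReal_ne_top
      _ ≤ ENNReal.ofReal (1/(s+1)) *
            ∫⁻ t in Ioi (0:ℝ), ENNReal.ofReal (t ^ (s+1) * ‖deriv f t‖) :=
          mul_le_mul_right (lintegral_mono_set Ioc_subset_Ioi_self) _
  · -- 1 < p
    have hp0 : 0 < p := lt_trans one_pos hp1
    set q : ℝ := Real.conjExponent p with hqdef
    have hpq : p.HolderConjugate q := Real.HolderConjugate.conjExponent hp1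
    have hq0 : 0 < q := hpq.symm.pos
    have hpq2 : p / q = p - 1 := hpq.div_conj_eq_sub_one
    have hqp : q * (p - 1) = p := by rw [mul_comm]; exact hpq.sub_one_mul_conj
    have h1q : 1/q = 1 - 1/p := by
      have := hpq.inv_add_inv_eq_one
      simp only [one_div]; linarith
    set a : ℝ := (1 - 1/p + (s+1))/2 with hadef
    have ha1 : 1/q < a := by rw [h1q, hadef]; linarith
    have ha2 : a < s + 1 := by rw [hadef]; linarith
    have haq : 1 < a * q := by
      have h := (div_lt_iff₀ hq0).mp ha1
      linarith
    set c : ℝ := -(a*q) with hcdef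
    have hc : c < -1 := by rw [hcdef]; linarith
    have hc1 : c + 1 < 0 := by linarith
    set b : ℝ := p*s + (c+1)*(p/q) with hbdef
    have hb1 : b + 1 = p*(s+1-a) := by
      rw [hbdef, hcdef, hpq2,
        show (-(a*q)+1)*(p-1) = (p-1) - a*(q*(p-1)) by ring, hqp]
      ring
    have hb1pos : 0 < b + 1 := by rw [hb1]; exact mul_pos hp0 (by linarith)
    have hb : -1 < b := by linarith
    set m : ℝ := -1/(c+1) with hmdef
    have hm : 0 < m := by rw [hmdef]; exact div_pos_of_neg_of_neg (by norm_num) hc1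
    have hK1p : 0 < m ^ (p/q) := Real.rpow_pos_of_pos hm _
    refine ⟨m ^ (p/q) * (1/(b+1)), by positivity, ?_⟩
    intro f hf R hR hfR
    set Φ : ℝ → ℝ≥0∞ := fun t => ENNReal.ofReal ‖deriv f t‖ with hΦdef
    have hΦ : Measurable Φ := (measurable_deriv f).norm.ennreal_ofReal
    set ψ : ℝ → ℝ≥0∞ := fun t => Φ t ^ p * ENNReal.ofReal (t ^ (a*p)) with hψdef
    have hψ : Measurable ψ := by
      rw [hψdef]; fun_prop
    have hexp : a*p + (b+1) = p*(s+1) := by rw [hb1]; ring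
    have holder : ∀ x : ℝ, 0 < x →
        (∫⁻ t in Ioc x R, Φ t) ≤ (∫⁻ t in Ioc x R, ψ t) ^ (1/p) *
          (ENNReal.ofReal (x^(c+1) * m)) ^ (1/q) := by
      intro x hx
      have e1 : ∀ t ∈ Ioc x R, Φ t
          = ((fun t => Φ t * ENNReal.ofReal (t ^ a)) * fun t => ENNReal.ofReal (t ^ (-a))) t := by
        intro t ht
        have ht0 : 0 < t := lt_trans hx ht.1
        simp only [Pi.mul_apply]
        rw [mul_assoc, ← ENNReal.ofReal_mul (Real.rpow_nonneg ht0.le a),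
          ← Real.rpow_add ht0, add_neg_cancel, Real.rpow_zero, ENNReal.ofReal_one, mul_one]
      rw [setLIntegral_congr_fun measurableSet_Ioc e1]
      have hH := ENNReal.lintegral_mul_le_Lp_mul_Lq (volume.restrict (Ioc x R)) hpq
        (f := fun t => Φ t * ENNReal.ofReal (t ^ a)) (g := fun t => ENNReal.ofReal (t ^ (-a)))
        (by fun_prop) (by fun_prop)
      refine le_trans hH (mul_le_mul' (le_of_eq ?_) ?_)
      · refine congrArg (· ^ (1/p)) ?_
        refine setLIntegral_congr_fun measurableSet_Ioc (fun t ht => ?_)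
        have ht0 : 0 < t := lt_trans hx ht.1
        rw [ENNReal.mul_rpow_of_nonneg _ _ hp0.le,
          ENNReal.ofReal_rpow_of_pos (Real.rpow_pos_of_pos ht0 a), ← Real.rpow_mul ht0.le]
      · refine ENNReal.rpow_le_rpow ?_ (by positivity)
        calc ∫⁻ t in Ioc x R, ENNReal.ofReal (t ^ (-a)) ^ q
            = ∫⁻ t in Ioc x R, ENNReal.ofReal (t ^ c) := by
              refine setLIntegral_congr_fun measurableSet_Ioc (fun t ht => ?_)
              have ht0 : 0 < t := lt_trans hx ht.1
              rw [ENNReal.ofReal_rpow_of_pos (Real.rpow_pos_of_pos ht0 _), ← Real.rpow_mul ht0.le,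
                show -a*q = c by rw [hcdef]; ring]
          _ ≤ ∫⁻ t in Ioi x, ENNReal.ofReal (t ^ c) := lintegral_mono_set Ioc_subset_Ioi_self
          _ = ENNReal.ofReal (-x^(c+1)/(c+1)) := lint_rpow_Ioi hc hx
          _ = ENNReal.ofReal (x^(c+1) * m) := by rw [hmdef]; congr 1; ring
    have main : ∀ x ∈ Ioi (0:ℝ), ENNReal.ofReal (x ^ (p*s) * ‖f x‖ ^ p)
        ≤ ENNReal.ofReal (m ^ (p/q)) *
            (ENNReal.ofReal (x ^ b) * ∫⁻ t in Ioc x R, ψ t) := by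
      intro x hx
      have hx0 : (0:ℝ) < x := hx
      have step1 : ENNReal.ofReal ‖f x‖ ≤ (∫⁻ t in Ioc x R, ψ t) ^ (1/p) *
          (ENNReal.ofReal (x^(c+1) * m)) ^ (1/q) :=
        le_trans (hardy_ftc_bound f hf R hfR hx0) (holder x hx0)
      have harith1 : 1/p * p = 1 := by field_simp
      have harith2 : 1/q * p = p/q := by ring
      have step2 : ENNReal.ofReal (‖f x‖ ^ p) ≤
          (∫⁻ t in Ioc x R, ψ t) * (ENNReal.ofReal (x^(c+1) * m)) ^ (p/q) := by
        rw [← ENNReal.ofReal_rpow_of_nonneg (norm_nonneg _) hp0.le]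
        calc (ENNReal.ofReal ‖f x‖) ^ p
            ≤ ((∫⁻ t in Ioc x R, ψ t) ^ (1/p) * (ENNReal.ofReal (x^(c+1) * m)) ^ (1/q)) ^ p :=
              ENNReal.rpow_le_rpow step1 hp0.le
          _ = (∫⁻ t in Ioc x R, ψ t) * (ENNReal.ofReal (x^(c+1) * m)) ^ (p/q) := by
              rw [ENNReal.mul_rpow_of_nonneg _ _ hp0.le, ← ENNReal.rpow_mul, ← ENNReal.rpow_mul,
                harith1, harith2, ENNReal.rpow_one]
      calc ENNReal.ofReal (x ^ (p*s) * ‖f x‖ ^ p)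
          = ENNReal.ofReal (x ^ (p*s)) * ENNReal.ofReal (‖f x‖ ^ p) :=
            ENNReal.ofReal_mul (Real.rpow_nonneg hx0.le _)
        _ ≤ ENNReal.ofReal (x ^ (p*s)) *
              ((∫⁻ t in Ioc x R, ψ t) * (ENNReal.ofReal (x^(c+1) * m)) ^ (p/q)) :=
            mul_le_mul_right step2 _
        _ = ENNReal.ofReal (m ^ (p/q)) *
              (ENNReal.ofReal (x ^ b) * ∫⁻ t in Ioc x R, ψ t) := by
            rw [ENNReal.ofReal_rpow_of_pos (mul_pos (Real.rpow_pos_of_pos hx0 _) hm),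
              Real.mul_rpow (Real.rpow_nonneg hx0.le _) hm.le, ← Real.rpow_mul hx0.le,
              ENNReal.ofReal_mul (Real.rpow_nonneg hx0.le _),
              show b = p*s + (c+1)*(p/q) from hbdef, Real.rpow_add hx0,
              ENNReal.ofReal_mul (Real.rpow_nonneg hx0.le _)]
            ring
    calc ∫⁻ x in Ioi (0:ℝ), ENNReal.ofReal (x ^ (p*s) * ‖f x‖ ^ p)
        ≤ ∫⁻ x in Ioi (0:ℝ), ENNReal.ofReal (m ^ (p/q)) *
            (ENNReal.ofReal (x ^ b) * ∫⁻ t in Ioc x R, ψ t) :=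
          setLIntegral_mono' measurableSet_Ioi main
      _ = ENNReal.ofReal (m ^ (p/q)) *
            ∫⁻ x in Ioi (0:ℝ), ENNReal.ofReal (x ^ b) * ∫⁻ t in Ioc x R, ψ t :=
          lintegral_const_mul' _ _ ENNReal.ofReal_ne_top
      _ = ENNReal.ofReal (m ^ (p/q)) *
            ∫⁻ t in Ioc (0:ℝ) R, ψ t * ∫⁻ x in Ioo (0:ℝ) t, ENNReal.ofReal (x^b) := by
          rw [fubini_step ψ hψ b R hR]
      _ = ENNReal.ofReal (m ^ (p/q)) * ∫⁻ t in Ioc (0:ℝ) R, ENNReal.ofReal (1/(b+1)) *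
            ENNReal.ofReal (t ^ (p*(s+1)) * ‖deriv f t‖ ^ p) := by
          congr 1
          refine setLIntegral_congr_fun measurableSet_Ioc (fun t ht => ?_)
          have ht0 : 0 < t := ht.1
          have hre : t^(a*p) * t^(b+1) = t^(p*(s+1)) := by rw [← Real.rpow_add ht0, hexp]
          rw [lint_rpow_Ioo hb ht0, hψdef]
          simp only []
          rw [ENNReal.ofReal_rpow_of_nonneg (norm_nonneg _) hp0.le,
            ← ENNReal.ofReal_mul (Real.rpow_nonneg (norm_nonneg _) _),
            ← ENNReal.ofReal_mul (by positivity),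
            ← ENNReal.ofReal_mul (by positivity : (0:ℝ) ≤ 1/(b+1))]
          congr 1
          rw [show ‖deriv f t‖ ^ p * t^(a*p) * (t^(b+1)/(b+1))
              = (1/(b+1)) * ((t^(a*p) * t^(b+1)) * ‖deriv f t‖ ^ p) by ring, hre]
      _ = (ENNReal.ofReal (m ^ (p/q)) * ENNReal.ofReal (1/(b+1))) *
            ∫⁻ t in Ioc (0:ℝ) R, ENNReal.ofReal (t ^ (p*(s+1)) * ‖deriv f t‖ ^ p) := by
          rw [lintegral_const_mul' _ _ ENNReal.ofReal_ne_top, mul_assoc]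
      _ ≤ ENNReal.ofReal (m ^ (p/q) * (1/(b+1))) *
            ∫⁻ x in Ioi (0:ℝ), ENNReal.ofReal (x ^ (p*(s+1)) * ‖deriv f x‖ ^ p) := by
          rw [ENNReal.ofReal_mul hK1p.le]
          exact mul_le_mul_right (lintegral_mono_set Ioc_subset_Ioi_self) _

end HardyAux

/-- Hardy-type inequality on `[0,∞)`:
`‖(·)^s f‖_{L^p(0,∞)} ≤ C ‖(·)^{s+1} f'‖_{L^p(0,∞)}` for `f ∈ C¹_c([0,∞))`. -/
theorem hardy_inequality_Ici (p s : ℝ) (hp : 1 ≤ p) (hs : -(1 / p) < s) :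
    ∃ C : ℝ, 0 < C ∧ ∀ f : ℝ → ℂ, ContDiffOn ℝ 1 f (Ici 0) →
      (∃ R : ℝ, ∀ x : ℝ, R ≤ x → f x = 0) →
      (∫ x in Ioi (0 : ℝ), x ^ (p * s) * ‖f x‖ ^ p) ^ (1 / p) ≤
        C * (∫ x in Ioi (0 : ℝ), x ^ (p * (s + 1)) * ‖derivWithin f (Ici 0) x‖ ^ p) ^ (1 / p) := by
  have hp0 : (0:ℝ) < p := lt_of_lt_of_le one_pos hp
  have he1 : 0 ≤ p*(s+1) := by
    have h1p : 1/p ≤ 1 := by rw [div_le_one hp0]; exact hp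
    nlinarith
  obtain ⟨K, hK, hkey⟩ := hardy_key p s hp hs
  refine ⟨K ^ (1/p), Real.rpow_pos_of_pos hK _, ?_⟩
  intro f hf ⟨R₀, hR₀⟩
  set R : ℝ := max R₀ 1 with hRdef
  have hR : (0:ℝ) < R := lt_of_lt_of_le one_pos (le_max_right _ _)
  have hfR : ∀ x : ℝ, R ≤ x → f x = 0 := fun x hx => hR₀ x (le_trans (le_max_left _ _) hx)
  have heq : ∀ x ∈ Ioi (0:ℝ), derivWithin f (Ici 0) x = deriv f x := fun x hx =>
    derivWithin_of_mem_nhds (Ici_mem_nhds hx)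
  have hgc : ContinuousOn (derivWithin f (Ici 0)) (Ici 0) :=
    hf.continuousOn_derivWithin (uniqueDiffOn_Ici 0) le_rfl
  -- continuity of integrands
  have hcontL : ContinuousOn (fun x : ℝ => x ^ (p*s) * ‖f x‖ ^ p) (Ioi 0) := by
    refine ContinuousOn.mul (continuousOn_id.rpow_const fun x hx => Or.inl (ne_of_gt hx)) ?_
    exact ((hf.continuousOn.mono Ioi_subset_Ici_self).norm).rpow_const
      fun x _ => Or.inr hp0.le
  have hcontR : ContinuousOn (fun x : ℝ => x ^ (p*(s+1)) * ‖derivWithin f (Ici 0) x‖ ^ p)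
      (Ioi 0) := by
    refine ContinuousOn.mul (continuousOn_id.rpow_const fun x hx => Or.inl (ne_of_gt hx)) ?_
    exact ((hgc.mono Ioi_subset_Ici_self).norm).rpow_const fun x _ => Or.inr hp0.le
  -- left side as lintegral
  have hLnn : 0 ≤ᵐ[volume.restrict (Ioi (0:ℝ))] fun x : ℝ => x ^ (p*s) * ‖f x‖ ^ p := by
    filter_upwards [ae_restrict_mem measurableSet_Ioi] with x hx
    exact mul_nonneg (Real.rpow_nonneg (le_of_lt hx) _) (Real.rpow_nonneg (norm_nonneg _) _)
  have hL : (∫ x in Ioi (0:ℝ), x ^ (p*s) * ‖f x‖ ^ p)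
      = (∫⁻ x in Ioi (0:ℝ), ENNReal.ofReal (x ^ (p*s) * ‖f x‖ ^ p)).toReal :=
    integral_eq_lintegral_of_nonneg_ae hLnn (hcontL.aestronglyMeasurable measurableSet_Ioi)
  -- right side integrable
  have hGnn : ∀ x : ℝ, 0 ≤ x → 0 ≤ x ^ (p*(s+1)) * ‖derivWithin f (Ici 0) x‖ ^ p := fun x hx =>
    mul_nonneg (Real.rpow_nonneg hx _) (Real.rpow_nonneg (norm_nonneg _) _)
  have hGzero : ∀ x ∈ Ioi R, x ^ (p*(s+1)) * ‖derivWithin f (Ici 0) x‖ ^ p = 0 := by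
    intro x hx
    have hx0 : (0:ℝ) < x := lt_trans hR hx
    have hev : f =ᶠ[nhds x] fun _ => (0:ℂ) := by
      filter_upwards [isOpen_Ioi.mem_nhds hx] with y hy
      exact hfR y (le_of_lt hy)
    have : derivWithin f (Ici 0) x = 0 := by
      rw [heq x hx0, hev.deriv_eq, deriv_const]
    rw [this]
    simp [Real.zero_rpow hp0.ne']
  have hG : IntegrableOn (fun x : ℝ => x ^ (p*(s+1)) * ‖derivWithin f (Ici 0) x‖ ^ p)
      (Ioi 0) := by
    have hsplit : Ioc (0:ℝ) R ∪ Ioi R = Ioi 0 := Ioc_union_Ioi_eq_Ioi hR.le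
    rw [← hsplit]
    refine IntegrableOn.union ?_ ?_
    · -- bounded on Ioc 0 R
      obtain ⟨M, hM⟩ := isCompact_Icc.exists_bound_of_continuousOn
        (hgc.mono (Icc_subset_Ici_self : Icc (0:ℝ) R ⊆ Ici 0))
      have hM0 : 0 ≤ M := le_trans (norm_nonneg _) (hM 0 ⟨le_rfl, hR.le⟩)
      refine ⟨(hcontR.mono Ioc_subset_Ioi_self).aestronglyMeasurable measurableSet_Ioc,
        HasFiniteIntegral.restrict_of_bounded (C := R ^ (p*(s+1)) * M ^ p)
          measure_Ioc_lt_top ?_⟩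
      filter_upwards [ae_restrict_mem measurableSet_Ioc] with x hx
      have hx0 : (0:ℝ) < x := hx.1
      rw [Real.norm_of_nonneg (hGnn x hx0.le)]
      refine mul_le_mul (Real.rpow_le_rpow hx0.le hx.2 he1) ?_
        (Real.rpow_nonneg (norm_nonneg _) _) (Real.rpow_nonneg hR.le _)
      exact Real.rpow_le_rpow (norm_nonneg _) (hM x ⟨hx0.le, hx.2⟩) hp0.le
    · exact (integrableOn_congr_fun hGzero measurableSet_Ioi).mpr integrableOn_zero
  have hRnn : 0 ≤ᵐ[volume.restrict (Ioi (0:ℝ))]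
      fun x : ℝ => x ^ (p*(s+1)) * ‖derivWithin f (Ici 0) x‖ ^ p := by
    filter_upwards [ae_restrict_mem measurableSet_Ioi] with x hx
    exact hGnn x (le_of_lt hx)
  have hRint : ENNReal.ofReal (∫ x in Ioi (0:ℝ), x ^ (p*(s+1)) * ‖derivWithin f (Ici 0) x‖ ^ p)
      = ∫⁻ x in Ioi (0:ℝ), ENNReal.ofReal (x ^ (p*(s+1)) * ‖derivWithin f (Ici 0) x‖ ^ p) :=
    ofReal_integral_eq_lintegral_ofReal hG hRnn
  have hcongr : ∫⁻ x in Ioi (0:ℝ), ENNReal.ofReal (x ^ (p*(s+1)) * ‖deriv f x‖ ^ p)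
      = ∫⁻ x in Ioi (0:ℝ), ENNReal.ofReal (x ^ (p*(s+1)) * ‖derivWithin f (Ici 0) x‖ ^ p) :=
    setLIntegral_congr_fun measurableSet_Ioi (fun x hx => by rw [heq x hx])
  have hmain := hkey f hf R hR hfR
  rw [hcongr, ← hRint] at hmain
  set Rint : ℝ := ∫ x in Ioi (0:ℝ), x ^ (p*(s+1)) * ‖derivWithin f (Ici 0) x‖ ^ p with hRi
  have hRintnn : 0 ≤ Rint := integral_nonneg_of_ae hRnn
  have hLle : (∫ x in Ioi (0:ℝ), x ^ (p*s) * ‖f x‖ ^ p) ≤ K * Rint := by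
    rw [hL]
    calc (∫⁻ x in Ioi (0:ℝ), ENNReal.ofReal (x ^ (p*s) * ‖f x‖ ^ p)).toReal
        ≤ (ENNReal.ofReal K * ENNReal.ofReal Rint).toReal :=
          ENNReal.toReal_mono (ENNReal.mul_ne_top ENNReal.ofReal_ne_top ENNReal.ofReal_ne_top)
            hmain
      _ = K * Rint := by
          rw [ENNReal.toReal_mul, ENNReal.toReal_ofReal hK.le, ENNReal.toReal_ofReal hRintnn]
  have hLnn' : 0 ≤ ∫ x in Ioi (0:ℝ), x ^ (p*s) * ‖f x‖ ^ p := integral_nonneg_of_ae hLnn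
  calc (∫ x in Ioi (0:ℝ), x ^ (p*s) * ‖f x‖ ^ p) ^ (1/p)
      ≤ (K * Rint) ^ (1/p) := Real.rpow_le_rpow hLnn' hLle (by positivity)
    _ = K ^ (1/p) * Rint ^ (1/p) := Real.mul_rpow hK.le hRintnn
end
end

section
/- Let p ≥ 1, r > 0 and s > −1/p be real numbers. There exists a constant C > 0, depending only on p, r, s, such that for every continuously differentiable function f : [0,r] → ℂ: |f(r)| ≤ C ( (∫₀^r x^{ps} |f(x)|^p dx)^{1/p} + (∫₀^r x^{p(s+1)} |f'(x)|^p dx)^{1/p} ). -/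
open MeasureTheory Metric Set

noncomputable section

private lemma weight_lb {a r w : ℝ} (ha : 0 < a) {x : ℝ} (hx : x ∈ Icc a r) :
    min (a ^ w) (r ^ w) ≤ x ^ w := by
  rcases le_or_gt 0 w with hw | hw
  · exact le_trans (min_le_left _ _) (Real.rpow_le_rpow ha.le hx.1 hw)
  · exact le_trans (min_le_right _ _)
      (Real.rpow_le_rpow_of_nonpos (ha.trans_le hx.1) hx.2 hw.le)

private lemma weight_step {p w a r : ℝ} (hp : 0 < p) (ha : 0 < a) (har : a < r) (hw : -1 < w)
    {h : ℝ → ℝ} (hh : ContinuousOn h (Icc 0 r)) (hhn : ∀ x, 0 ≤ h x) :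
    ∫ x in a..r, h x ^ p ≤ (min (a ^ w) (r ^ w))⁻¹ * ∫ x in (0:ℝ)..r, x ^ w * h x ^ p := by
  have hc : 0 < min (a ^ w) (r ^ w) :=
    lt_min (Real.rpow_pos_of_pos ha w) (Real.rpow_pos_of_pos (ha.trans har) w)
  have har' : a ≤ r := har.le
  have hsub : Icc a r ⊆ Icc 0 r := Icc_subset_Icc ha.le le_rfl
  have hhp : ContinuousOn (fun x => h x ^ p) (Icc 0 r) :=
    hh.rpow_const fun x _ => Or.inr hp.le
  have hwc : ContinuousOn (fun x : ℝ => x ^ w) (Icc a r) :=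
    continuousOn_id.rpow_const fun x hx => Or.inl (ne_of_gt (ha.trans_le hx.1))
  have hint1 : IntervalIntegrable (fun x => min (a ^ w) (r ^ w) * h x ^ p) volume a r := by
    apply ContinuousOn.intervalIntegrable
    rw [Set.uIcc_of_le har']
    exact continuousOn_const.mul (hhp.mono hsub)
  have hint2 : IntervalIntegrable (fun x => x ^ w * h x ^ p) volume a r := by
    apply ContinuousOn.intervalIntegrable
    rw [Set.uIcc_of_le har']
    exact hwc.mul (hhp.mono hsub)
  have hint3 : IntervalIntegrable (fun x => x ^ w * h x ^ p) volume 0 r := by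
    apply (intervalIntegral.intervalIntegrable_rpow' hw).mul_continuousOn
    rw [Set.uIcc_of_le (ha.trans har).le]
    exact hhp
  have step1 : min (a ^ w) (r ^ w) * ∫ x in a..r, h x ^ p ≤ ∫ x in a..r, x ^ w * h x ^ p := by
    rw [← intervalIntegral.integral_const_mul]
    refine intervalIntegral.integral_mono_on har' hint1 hint2 fun x hx => ?_
    exact mul_le_mul_of_nonneg_right (weight_lb ha hx) (Real.rpow_nonneg (hhn x) p)
  have step2 : ∫ x in a..r, x ^ w * h x ^ p ≤ ∫ x in (0:ℝ)..r, x ^ w * h x ^ p := by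
    refine intervalIntegral.integral_mono_interval ha.le har' le_rfl ?_ hint3
    refine (MeasureTheory.ae_restrict_mem measurableSet_Ioc).mono fun x hx => ?_
    exact mul_nonneg (Real.rpow_nonneg hx.1.le w) (Real.rpow_nonneg (hhn x) p)
  have h2 := step1.trans step2
  rw [← le_div_iff₀' hc] at h2
  rwa [div_eq_inv_mul] at h2

private lemma holder_step {p a r : ℝ} (hp : 1 ≤ p) (ha : 0 < a) (har : a < r)
    {h : ℝ → ℝ} (hh : ContinuousOn h (Icc a r)) (hhn : ∀ x, 0 ≤ h x) :
    ∫ x in a..r, h x ≤ (r - a) ^ (1 - 1/p) * (∫ x in a..r, h x ^ p) ^ (1/p) := by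
  rcases eq_or_lt_of_le hp with hp1 | hp1
  · subst hp1
    simp [Real.rpow_one]
  · set q := Real.conjExponent p with hq
    have hpq : Real.HolderConjugate p q := Real.HolderConjugate.conjExponent hp1
    set μ := volume.restrict (Ioc a r) with hμ
    haveI : IsFiniteMeasure μ := ⟨by
      rw [hμ, Measure.restrict_apply_univ]
      exact measure_Ioc_lt_top⟩
    have hms : AEStronglyMeasurable h μ :=
      (hh.mono Ioc_subset_Icc_self).aestronglyMeasurable measurableSet_Ioc
    obtain ⟨z, hz, hzmax⟩ := isCompact_Icc.exists_isMaxOn ⟨a, left_mem_Icc.2 har.le⟩ hh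
    have hmem : MeasureTheory.MemLp h (ENNReal.ofReal p) μ := by
      refine MeasureTheory.MemLp.of_bound hms (h z) ?_
      refine (MeasureTheory.ae_restrict_mem measurableSet_Ioc).mono fun x hx => ?_
      rw [Real.norm_of_nonneg (hhn x)]
      exact hzmax (Ioc_subset_Icc_self hx)
    have honemem : MeasureTheory.MemLp (fun _ : ℝ => (1:ℝ)) (ENNReal.ofReal q) μ :=
      MeasureTheory.memLp_const 1
    have key := MeasureTheory.integral_mul_le_Lp_mul_Lq_of_nonneg hpq
      (Filter.Eventually.of_forall hhn) (Filter.Eventually.of_forall fun _ => zero_le_one)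
      hmem honemem
    simp only [mul_one, Real.one_rpow] at key
    have hone : ∫ _ : ℝ, (1:ℝ) ∂μ = r - a := by
      rw [MeasureTheory.integral_const, smul_eq_mul, mul_one, hμ, measureReal_def,
        Measure.restrict_apply_univ, Real.volume_Ioc, ENNReal.toReal_ofReal (by linarith)]
    rw [hone] at key
    have h1q : 1 - 1/p = 1/q := by
      rw [one_div, one_div, hpq.one_sub_inv]
    rw [h1q, intervalIntegral.integral_of_le har.le, intervalIntegral.integral_of_le har.le,
      mul_comm]
    exact key

/-- control of the boundary term:
`|f(r)| ≤ C (‖(·)^s f‖_{L^p(0,r)} + ‖(·)^{s+1} f'‖_{L^p(0,r)})`. -/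
theorem hardy_boundary_term (p r s : ℝ) (hp : 1 ≤ p) (hr : 0 < r) (hs : -(1 / p) < s) :
    ∃ C : ℝ, 0 < C ∧ ∀ f : ℝ → ℂ, ContDiffOn ℝ 1 f (Icc 0 r) →
      ‖f r‖ ≤ C * ((∫ x in (0 : ℝ)..r, x ^ (p * s) * ‖f x‖ ^ p) ^ (1 / p) +
        (∫ x in (0 : ℝ)..r, x ^ (p * (s + 1)) * ‖derivWithin f (Icc 0 r) x‖ ^ p) ^ (1 / p)) := by
  have hp0 : 0 < p := lt_of_lt_of_le zero_lt_one hp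
  set a := r / 2 with ha_def
  have ha : 0 < a := by positivity
  have har : a < r := by rw [ha_def]; linarith
  have hps : -1 < p * s := by
    have h1 : p * (-(1/p)) < p * s := mul_lt_mul_of_pos_left hs hp0
    have h2 : p * (-(1/p)) = -1 := by field_simp
    linarith
  have hps1 : -1 < p * (s + 1) := by nlinarith
  set c1 := min (a ^ (p*s)) (r ^ (p*s)) with hc1_def
  set c2 := min (a ^ (p*(s+1))) (r ^ (p*(s+1))) with hc2_def
  have hc1 : 0 < c1 := lt_min (Real.rpow_pos_of_pos ha _) (Real.rpow_pos_of_pos hr _)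
  have hc2 : 0 < c2 := lt_min (Real.rpow_pos_of_pos ha _) (Real.rpow_pos_of_pos hr _)
  set K1 := (a⁻¹ * c1⁻¹) ^ (1/p) with hK1_def
  set K2 := (r - a) ^ (1 - 1/p) * (c2⁻¹) ^ (1/p) with hK2_def
  have hK1 : 0 < K1 := Real.rpow_pos_of_pos (by positivity) _
  have hK2 : 0 < K2 :=
    mul_pos (Real.rpow_pos_of_pos (by linarith) _) (Real.rpow_pos_of_pos (by positivity) _)
  refine ⟨K1 + K2, by positivity, fun f hf => ?_⟩
  set g := derivWithin f (Icc 0 r) with hg_def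
  have hfc : ContinuousOn f (Icc 0 r) := hf.continuousOn
  have hgc : ContinuousOn g (Icc 0 r) :=
    hf.continuousOn_derivWithin (uniqueDiffOn_Icc hr) le_rfl
  have hfn : ContinuousOn (fun x => ‖f x‖) (Icc 0 r) := hfc.norm
  have hgn : ContinuousOn (fun x => ‖g x‖) (Icc 0 r) := hgc.norm
  obtain ⟨x₀, hx₀, hmin⟩ := isCompact_Icc.exists_isMinOn (s := Icc a r)
    ⟨a, left_mem_Icc.2 har.le⟩ (hfn.mono (Icc_subset_Icc ha.le le_rfl))
  have hsub : Icc x₀ r ⊆ Icc 0 r := Icc_subset_Icc (by linarith [hx₀.1]) le_rfl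
  have hftc : ∫ t in x₀..r, g t = f r - f x₀ := by
    apply intervalIntegral.integral_eq_sub_of_hasDeriv_right_of_le hx₀.2
    · exact hfc.mono hsub
    · intro t ht
      have htmem : Icc 0 r ∈ nhds t := Icc_mem_nhds (by linarith [hx₀.1, ht.1]) ht.2
      have hd : HasDerivWithinAt f (g t) (Icc 0 r) t :=
        (hf.differentiableOn one_ne_zero t ⟨by linarith [hx₀.1, ht.1], ht.2.le⟩).hasDerivWithinAt
      exact (hd.hasDerivAt htmem).hasDerivWithinAt
    · apply ContinuousOn.intervalIntegrable
      rw [Set.uIcc_of_le hx₀.2]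
      exact hgc.mono hsub
  have hIg : IntervalIntegrable (fun t => ‖g t‖) volume a r := by
    apply ContinuousOn.intervalIntegrable
    rw [Set.uIcc_of_le har.le]
    exact hgn.mono (Icc_subset_Icc ha.le le_rfl)
  have step0 : ‖f r‖ ≤ ‖f x₀‖ + ∫ t in a..r, ‖g t‖ := by
    have h1 : f r = f x₀ + ∫ t in x₀..r, g t := by rw [hftc]; ring
    calc ‖f r‖ = ‖f x₀ + ∫ t in x₀..r, g t‖ := by rw [← h1]
      _ ≤ ‖f x₀‖ + ‖∫ t in x₀..r, g t‖ := norm_add_le _ _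
      _ ≤ ‖f x₀‖ + ∫ t in x₀..r, ‖g t‖ := by
          gcongr
          exact intervalIntegral.norm_integral_le_integral_norm hx₀.2
      _ ≤ ‖f x₀‖ + ∫ t in a..r, ‖g t‖ := by
          gcongr
          refine intervalIntegral.integral_mono_interval hx₀.1 hx₀.2 le_rfl ?_ hIg
          exact (MeasureTheory.ae_restrict_mem measurableSet_Ioc).mono fun x _ => norm_nonneg _
  have hIfp : IntervalIntegrable (fun x => ‖f x‖ ^ p) volume a r := by
    apply ContinuousOn.intervalIntegrable
    rw [Set.uIcc_of_le har.le]
    exact (hfn.mono (Icc_subset_Icc ha.le le_rfl)).rpow_const fun x _ => Or.inr hp0.le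
  have hJf : 0 ≤ ∫ x in a..r, ‖f x‖ ^ p :=
    intervalIntegral.integral_nonneg har.le fun x _ => Real.rpow_nonneg (norm_nonneg _) p
  have hJg : 0 ≤ ∫ x in a..r, ‖g x‖ ^ p :=
    intervalIntegral.integral_nonneg har.le fun x _ => Real.rpow_nonneg (norm_nonneg _) p
  have step1 : ‖f x₀‖ ≤ (a⁻¹ * ∫ x in a..r, ‖f x‖ ^ p) ^ (1/p) := by
    have hmono : ∫ _x in a..r, ‖f x₀‖ ^ p ≤ ∫ x in a..r, ‖f x‖ ^ p := by
      refine intervalIntegral.integral_mono_on har.le intervalIntegrable_const hIfp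
        fun x hx => ?_
      exact Real.rpow_le_rpow (norm_nonneg _) (hmin hx) hp0.le
    rw [intervalIntegral.integral_const, smul_eq_mul] at hmono
    have hra : r - a = a := by rw [ha_def]; ring
    rw [hra] at hmono
    have h2 : ‖f x₀‖ ^ p ≤ a⁻¹ * ∫ x in a..r, ‖f x‖ ^ p := by
      rw [← le_div_iff₀' ha] at hmono
      rwa [div_eq_inv_mul] at hmono
    calc ‖f x₀‖ = (‖f x₀‖ ^ p) ^ (1/p) := by
          rw [one_div, Real.rpow_rpow_inv (norm_nonneg _) hp0.ne']
      _ ≤ _ := Real.rpow_le_rpow (Real.rpow_nonneg (norm_nonneg _) p) h2 (by positivity)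
  have step2 : ∫ t in a..r, ‖g t‖ ≤ (r-a)^(1-1/p) * (∫ x in a..r, ‖g x‖ ^ p) ^ (1/p) :=
    holder_step hp ha har (hgn.mono (Icc_subset_Icc ha.le le_rfl)) fun x => norm_nonneg _
  have w1 := weight_step hp0 ha har hps hfn (fun x => norm_nonneg (f x))
  have w2 := weight_step hp0 ha har hps1 hgn (fun x => norm_nonneg (g x))
  set I1 := ∫ x in (0:ℝ)..r, x ^ (p*s) * ‖f x‖ ^ p with hI1_def
  set I2 := ∫ x in (0:ℝ)..r, x ^ (p*(s+1)) * ‖g x‖ ^ p with hI2_def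
  have hI1 : 0 ≤ I1 := intervalIntegral.integral_nonneg hr.le fun x hx =>
    mul_nonneg (Real.rpow_nonneg hx.1 _) (Real.rpow_nonneg (norm_nonneg _) _)
  have hI2 : 0 ≤ I2 := intervalIntegral.integral_nonneg hr.le fun x hx =>
    mul_nonneg (Real.rpow_nonneg hx.1 _) (Real.rpow_nonneg (norm_nonneg _) _)
  have t1 : ‖f x₀‖ ≤ K1 * I1 ^ (1/p) := by
    calc ‖f x₀‖ ≤ (a⁻¹ * ∫ x in a..r, ‖f x‖ ^ p) ^ (1/p) := step1
      _ ≤ (a⁻¹ * (c1⁻¹ * I1)) ^ (1/p) :=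
          Real.rpow_le_rpow (mul_nonneg (inv_nonneg.2 ha.le) hJf)
            (mul_le_mul_of_nonneg_left w1 (inv_nonneg.2 ha.le)) (by positivity)
      _ = K1 * I1 ^ (1/p) := by
          rw [← mul_assoc, hK1_def, ← Real.mul_rpow (by positivity) hI1]
  have t2 : ∫ t in a..r, ‖g t‖ ≤ K2 * I2 ^ (1/p) := by
    calc ∫ t in a..r, ‖g t‖ ≤ (r-a)^(1-1/p) * (∫ x in a..r, ‖g x‖ ^ p) ^ (1/p) := step2
      _ ≤ (r-a)^(1-1/p) * (c2⁻¹ * I2) ^ (1/p) :=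
          mul_le_mul_of_nonneg_left (Real.rpow_le_rpow hJg w2 (by positivity))
            (Real.rpow_nonneg (by linarith) _)
      _ = K2 * I2 ^ (1/p) := by
          rw [Real.mul_rpow (by positivity) hI2, hK2_def, mul_assoc]
  have hA : 0 ≤ I1 ^ (1/p) := Real.rpow_nonneg hI1 _
  have hB : 0 ≤ I2 ^ (1/p) := Real.rpow_nonneg hI2 _
  calc ‖f r‖ ≤ ‖f x₀‖ + ∫ t in a..r, ‖g t‖ := step0
    _ ≤ K1 * I1^(1/p) + K2 * I2^(1/p) := add_le_add t1 t2
    _ ≤ (K1+K2) * (I1^(1/p) + I2^(1/p)) := by nlinarith [hK1.le, hK2.le, hA, hB]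
end
end

section
/- Let p ≥ 1 and s > −1/p be real numbers and let f : [0,r] → ℂ be continuously differentiable. Then for every x ∈ (0,r] at which f(x) ≠ 0, the pointwise differential inequality x^{ps} |f(x)|^p ≤ d/dx ( (p/(ps+1)) x^{ps+1} |f(x)|^p ) + (p/(ps+1))^p x^{p(s+1)} |f'(x)|^p holds. -/
open MeasureTheory Metric Set

noncomputable section

/-- the pointwise differential inequality
`x^{ps} |f(x)|^p ≤ d/dx ((p/(ps+1)) x^{ps+1} |f(x)|^p) + (p/(ps+1))^p x^{p(s+1)} |f'(x)|^p`
at every `x ∈ (0,r]` where `f(x) ≠ 0`. -/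
theorem hardy_pointwise_differential_inequality (p r s : ℝ) (hp : 1 ≤ p) (hr : 0 < r)
    (hs : -(1 / p) < s) (f : ℝ → ℂ) (hf : ContDiffOn ℝ 1 f (Icc 0 r))
    (x : ℝ) (hx : x ∈ Ioc (0 : ℝ) r) (hfx : f x ≠ 0) :
    x ^ (p * s) * ‖f x‖ ^ p ≤
      derivWithin (fun y => (p / (p * s + 1)) * y ^ (p * s + 1) * ‖f y‖ ^ p) (Icc 0 r) x +
        (p / (p * s + 1)) ^ p * x ^ (p * (s + 1)) * ‖derivWithin f (Icc 0 r) x‖ ^ p := by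
  obtain ⟨hx0, hxr⟩ := hx
  have hxIcc : x ∈ Icc (0:ℝ) r := ⟨hx0.le, hxr⟩
  have hp0 : (0:ℝ) < p := lt_of_lt_of_le one_pos hp
  have hq : 0 < p * s + 1 := by
    have h1 : p * (-(1/p)) < p * s := (mul_lt_mul_iff_right₀ hp0).mpr hs
    have h2 : p * (-(1/p)) = -1 := by field_simp
    linarith
  set q := p * s + 1 with hqdef
  set c := p / q with hcdef
  have hc : 0 < c := div_pos hp0 hq
  have hcq : c * q = p := div_mul_cancel₀ p (ne_of_gt hq)
  set N := ‖f x‖ with hNdef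
  have hN0 : 0 < N := norm_pos_iff.mpr hfx
  have hfd : DifferentiableWithinAt ℝ f (Icc 0 r) x :=
    (hf.differentiableOn one_ne_zero) x hxIcc
  set f' := derivWithin f (Icc 0 r) x with hf'def
  have hfD : HasDerivWithinAt f f' (Icc 0 r) x := hfd.hasDerivWithinAt
  have hnormd : DifferentiableAt ℝ (fun z : ℂ => ‖z‖) (f x) :=
    ((contDiffAt_norm (𝕜 := ℂ) (n := 1) hfx).differentiableAt one_ne_zero)
  set L := fderiv ℝ (fun z : ℂ => ‖z‖) (f x) with hLdef
  have hNd : HasDerivWithinAt (fun y => ‖f y‖) (L f') (Icc 0 r) x := by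
    have := hnormd.hasFDerivAt.comp_hasDerivWithinAt x hfD
    simpa [Function.comp_def] using this
  set n' := L f' with hn'def
  have hn'le : |n'| ≤ ‖f'‖ := by
    have h1 : ‖L‖ ≤ 1 := by
      simpa using norm_fderiv_le_of_lipschitz ℝ (lipschitzWith_one_norm (E := ℂ))
    calc |n'| = ‖L f'‖ := (Real.norm_eq_abs _).symm
      _ ≤ ‖L‖ * ‖f'‖ := L.le_opNorm f'
      _ ≤ 1 * ‖f'‖ := mul_le_mul_of_nonneg_right h1 (norm_nonneg _)
      _ = ‖f'‖ := one_mul _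
  have hNp : HasDerivWithinAt (fun y => ‖f y‖ ^ p) (p * N ^ (p - 1) * n') (Icc 0 r) x := by
    have := (Real.hasDerivAt_rpow_const (x := N) (p := p)
      (Or.inl (ne_of_gt hN0))).comp_hasDerivWithinAt x hNd
    simpa [Function.comp_def, mul_assoc] using this
  have hxp : HasDerivWithinAt (fun y : ℝ => c * y ^ q) (c * (q * x ^ (q - 1))) (Icc 0 r) x :=
    ((Real.hasDerivAt_rpow_const (x := x) (p := q)
      (Or.inl (ne_of_gt hx0))).const_mul c).hasDerivWithinAt
  clear_value q c N f' L n'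
  have hF : HasDerivWithinAt (fun y => c * y ^ q * ‖f y‖ ^ p)
      (c * (q * x ^ (q - 1)) * N ^ p + c * x ^ q * (p * N ^ (p - 1) * n')) (Icc 0 r) x := by
    have := hxp.mul hNp
    rwa [← hNdef] at this
  rw [hF.derivWithin ((uniqueDiffOn_Icc hr) x hxIcc)]
  have hq1 : q - 1 = p * s := by rw [hqdef]; ring
  have hps1 : p * (s + 1) = q - 1 + p := by rw [hqdef]; ring
  rw [hq1, hps1, hq1]
  -- now the goal uses x ^ (p*s), x ^ q, x ^ (p*s + p)
  have ha : (0:ℝ) ≤ x ^ (p*s) * N ^ p := by positivity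
  have hb : (0:ℝ) ≤ c ^ p * x ^ (p*s + p) * ‖f'‖ ^ p := by positivity
  have hw1 : (0:ℝ) ≤ (p-1)/p := div_nonneg (by linarith) hp0.le
  have hw2 : (0:ℝ) ≤ 1/p := by positivity
  have hsum : (p-1)/p + 1/p = 1 := by field_simp; ring
  have amgm := Real.geom_mean_le_arith_mean2_weighted hw1 hw2 ha hb hsum
  have hgm : (x ^ (p*s) * N ^ p) ^ ((p-1)/p) * (c ^ p * x ^ (p*s + p) * ‖f'‖ ^ p) ^ (1/p)
      = c * x ^ q * (N ^ (p-1) * ‖f'‖) := by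
    rw [Real.mul_rpow (by positivity) (by positivity),
        Real.mul_rpow (by positivity) (by positivity),
        Real.mul_rpow (by positivity) (by positivity),
        ← Real.rpow_mul hx0.le, ← Real.rpow_mul hN0.le, ← Real.rpow_mul hc.le,
        ← Real.rpow_mul hx0.le, ← Real.rpow_mul (norm_nonneg f')]
    rw [show p * ((p-1)/p) = p - 1 by field_simp,
        show p * (1/p) = 1 by field_simp, Real.rpow_one, Real.rpow_one]
    rw [show p * s * ((p-1)/p) = q - (q-1+p) * (1/p) by rw [hqdef]; field_simp; ring]
    rw [Real.rpow_sub hx0, hq1]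
    have hxn : x ^ ((p*s+p)*(1/p)) ≠ 0 := (Real.rpow_pos_of_pos hx0 _).ne'
    field_simp
  have hkey : c * p * x ^ q * N ^ (p-1) * ‖f'‖ ≤
      (p-1) * (x ^ (p*s) * N ^ p) + c ^ p * x ^ (p*s + p) * ‖f'‖ ^ p := by
    have h := mul_le_mul_of_nonneg_left amgm hp0.le
    rw [hgm] at h
    have he : p * ((p-1)/p * (x ^ (p*s) * N ^ p) + 1/p * (c ^ p * x ^ (p*s + p) * ‖f'‖ ^ p))
        = (p-1) * (x ^ (p*s) * N ^ p) + c ^ p * x ^ (p*s + p) * ‖f'‖ ^ p := by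
      field_simp
    linarith [he ▸ h]
  have e1 : c * (q * x ^ (p*s)) * N ^ p = p * (x ^ (p*s) * N ^ p) := by
    rw [← hcq]; ring
  have e2 : -(c * p * x ^ q * N ^ (p-1) * ‖f'‖) ≤ c * x ^ q * (p * N ^ (p-1) * n') := by
    have hcoeff : (0:ℝ) ≤ c * x ^ q * (p * N ^ (p-1)) := by positivity
    have hn : -‖f'‖ ≤ n' := neg_le_of_abs_le hn'le
    nlinarith [hcoeff]
  have e3 : p * (x ^ (p*s) * N ^ p) = (p-1) * (x ^ (p*s) * N ^ p) + x ^ (p*s) * N ^ p := by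
    ring
  linarith [hkey, e1, e2, e3]
end
end
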